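/- arXiv:0907.5322 — 7 statements merged into one kernel-verified Lean document; each statement's English description precedes it below -/
import Mathlib

section
/- Let E, F, G be real separable Hilbert spaces. Let (λ_n)_{n∈ℕ} and λ be Borel probability measures on E that are uniformly discretized with exponential weights. Let A and A_k (k ∈ ℕ) be bounded linear operators from E to F with sup_k ‖A_k‖ < ∞ and ‖A_k u − A u‖_F → 0 for every u ∈ E, and let m_k → m in F. Let B : F × F → ℝ be a continuous bilinear form, and define Ξ_k(u) = exp(−½‖A_k u‖²_F + B(A_k u, m_k)) and Ξ(u) = exp(−½‖A u‖²_F + B(A u, m)). Let g : E → G be continuous with ‖g(u)‖_G ≤ C exp(C‖u‖_E) for all u ∈ E and some constant C > 0. Then, as k and n tend to infinity jointly (i.e. along the product filter atTop × atTop), the ratio of Bochner integrals (∫_E g(u) Ξ_k(u) dλ_n(u)) / (∫_E Ξ_k(u) dλ_n(u)) converges in G to (∫_E g(u) Ξ(u) dλ(u)) / (∫_E Ξ(u) dλ(u)). -/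
open MeasureTheory Filter Real
open scoped ENNReal Topology

lemma aux_tsum_geom (d : ℝ≥0∞) : (∑' j : ℕ, d * 2⁻¹ ^ (j + 1)) = d := by
  rw [ENNReal.tsum_mul_left]
  have : (∑' j : ℕ, (2⁻¹ : ℝ≥0∞) ^ (j + 1)) = 2⁻¹ * ∑' j : ℕ, (2⁻¹ : ℝ≥0∞) ^ j := by
    simp_rw [pow_succ, mul_comm]
    rw [ENNReal.tsum_mul_left]
  rw [this, ENNReal.tsum_geometric]
  have h2 : (1 : ℝ≥0∞) - 2⁻¹ = 2⁻¹ := by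
    rw [ENNReal.sub_eq_of_eq_add (by simp)]
    rw [ENNReal.inv_two_add_inv_two]
  rw [h2, inv_inv, ENNReal.inv_mul_cancel (by norm_num) (by norm_num), mul_one]

lemma aux_tight {E : Type*} [NormedAddCommGroup E] [CompleteSpace E]
    [SecondCountableTopology E] [MeasurableSpace E] [BorelSpace E]
    (μs : ℕ → Measure E) (μ : Measure E)
    [∀ n, IsProbabilityMeasure (μs n)] [IsProbabilityMeasure μ]
    (hweak : ∀ h : E → ℝ, Continuous h → (∃ M : ℝ, ∀ u : E, |h u| ≤ M) →
      Tendsto (fun n => ∫ u, h u ∂(μs n)) atTop (nhds (∫ u, h u ∂μ)))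
    {δ : ℝ≥0∞} (hδ : 0 < δ) :
    ∃ K : Set E, IsCompact K ∧ (∀ n, μs n Kᶜ ≤ δ) ∧ μ Kᶜ ≤ δ := by
  have hP : Tendsto (fun n => (⟨μs n, inferInstance⟩ : ProbabilityMeasure E)) atTop
      (@nhds (ProbabilityMeasure E) MeasureTheory.ProbabilityMeasure.instTopologicalSpace
        (⟨μ, inferInstance⟩ : ProbabilityMeasure E)) := by
    refine (MeasureTheory.ProbabilityMeasure.tendsto_iff_forall_integral_tendsto).2 ?_
    intro f
    exact hweak f f.continuous ⟨‖f‖, fun u => by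
      rw [← Real.norm_eq_abs]; exact f.norm_coe_le_norm u⟩
  -- replace δ by min δ 1
  set δ' : ℝ≥0∞ := min δ 1 with hδ'def
  have hδ'pos : 0 < δ' := lt_min hδ one_pos
  have hδ'le : δ' ≤ δ := min_le_left _ _
  have hδ'le1 : δ' ≤ 1 := min_le_right _ _
  obtain ⟨x, hx⟩ := TopologicalSpace.exists_dense_seq E
  set ε : ℕ → ℝ≥0∞ := fun j => δ' * 2⁻¹ ^ (j + 1) with hεdef
  have hεpos : ∀ j, 0 < ε j := by
    intro j
    exact ENNReal.mul_pos hδ'pos.ne' (pow_ne_zero _ (by simp))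
  have hεle1 : ∀ j, ε j ≤ 1 := by
    intro j
    calc ε j ≤ 1 * 2⁻¹ ^ (j + 1) := by
          exact mul_le_mul_left hδ'le1 _
      _ ≤ 1 * 1 := by
          apply mul_le_mul_right
          exact pow_le_one' (by simp [ENNReal.inv_le_one]) _
      _ = 1 := by simp
  set r : ℕ → ℝ := fun j => 1 / (j + 1) with hrdef
  have hrpos : ∀ j, 0 < r j := by intro j; positivity
  set V : ℕ → ℕ → Set E := fun j N => ⋃ i ∈ Finset.range N, Metric.ball (x i) (r j) with hVdef
  have hVopen : ∀ j N, IsOpen (V j N) := fun j N =>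
    isOpen_biUnion fun i _ => Metric.isOpen_ball
  have hVmono : ∀ j, Monotone (V j) := by
    intro j N M hNM
    apply Set.biUnion_subset_biUnion_left
    intro i hi
    exact Finset.mem_range.2 (lt_of_lt_of_le (Finset.mem_range.1 hi) hNM)
  have hVunion : ∀ j, (⋃ N, V j N) = Set.univ := by
    intro j
    apply Set.eq_univ_of_forall
    intro u
    obtain ⟨i, hi⟩ := (Metric.denseRange_iff.1 hx) u (r j) (hrpos j)
    exact Set.mem_iUnion.2 ⟨i + 1, Set.mem_biUnion (Finset.mem_range.2 (Nat.lt_succ_self i))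
      (by simpa [dist_comm] using hi)⟩
  -- for each j find N such that all measures of complement are small
  have key : ∀ j : ℕ, ∃ N : ℕ, (∀ n, μs n (V j N)ᶜ ≤ ε j) ∧ μ (V j N)ᶜ ≤ ε j := by
    intro j
    have hhalfpos : 0 < ε j / 2 := ENNReal.div_pos (hεpos j).ne' (by norm_num)
    have hhalflt1 : (1 : ℝ≥0∞) - ε j / 2 < 1 :=
      ENNReal.sub_lt_self ENNReal.one_ne_top one_ne_zero hhalfpos.ne'
    -- complement bound from measure lower bound
    have compl_bound : ∀ (ν : Measure E) [IsProbabilityMeasure ν] (S : Set E),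
        MeasurableSet S → 1 - ε j / 2 < ν S → ν Sᶜ ≤ ε j := by
      intro ν _ S hS hlt
      rw [prob_compl_eq_one_sub hS]
      calc (1 : ℝ≥0∞) - ν S ≤ 1 - (1 - ε j / 2) := tsub_le_tsub_left hlt.le 1
        _ = ε j / 2 := ENNReal.sub_sub_cancel ENNReal.one_ne_top
            (le_trans (ENNReal.half_le_self) (hεle1 j))
        _ ≤ ε j := ENNReal.half_le_self
    -- μ (V j N) → 1
    have hμtend : ∀ (ν : Measure E) [IsProbabilityMeasure ν],
        ∃ N₀, 1 - ε j / 2 < ν (V j N₀) := by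
      intro ν _
      have := MeasureTheory.tendsto_measure_iUnion_atTop (μ := ν) (hVmono j)
      rw [hVunion j] at this
      simp only [measure_univ] at this
      have := this.eventually_const_lt hhalflt1
      exact this.exists
    obtain ⟨N₀, hN₀⟩ := hμtend μ
    -- portmanteau: liminf over n of μs n (V j N₀) ≥ μ (V j N₀)
    have hport : (μ (V j N₀) : ℝ≥0∞) ≤ liminf (fun n => μs n (V j N₀)) atTop := by
      have := MeasureTheory.ProbabilityMeasure.le_liminf_measure_open_of_tendsto hP
        (G := V j N₀) (hVopen j N₀)
      exact this
    have hev : ∀ᶠ n in atTop, 1 - ε j / 2 < μs n (V j N₀) :=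
      eventually_lt_of_lt_liminf (lt_of_lt_of_le hN₀ hport)
    obtain ⟨M, hM⟩ := hev.exists_forall_of_atTop
    -- finitely many small n
    have hsmall : ∀ n : ℕ, ∃ Nn : ℕ, 1 - ε j / 2 < μs n (V j Nn) := fun n => hμtend (μs n)
    choose Nf hNf using hsmall
    refine ⟨max N₀ ((Finset.range M).sup Nf), ?_, ?_⟩
    · intro n
      rcases le_or_gt M n with hn | hn
      · exact compl_bound (μs n) _ (hVopen j _).measurableSet
          (lt_of_lt_of_le (hM n hn) (measure_mono (hVmono j (le_max_left _ _))))
      · refine compl_bound (μs n) _ (hVopen j _).measurableSet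
          (lt_of_lt_of_le (hNf n) (measure_mono (hVmono j ?_)))
        exact le_trans (Finset.le_sup (Finset.mem_range.2 hn)) (le_max_right _ _)
    · exact compl_bound μ _ (hVopen j _).measurableSet
        (lt_of_lt_of_le hN₀ (measure_mono (hVmono j (le_max_left _ _))))
  choose N hN1 hN2 using key
  refine ⟨⋂ j, closure (V j (N j)), ?_, ?_, ?_⟩
  · apply TotallyBounded.isCompact_of_isClosed
    · rw [Metric.totallyBounded_iff]
      intro t ht
      obtain ⟨j, hj⟩ := exists_nat_gt (1 / t)
      have hrj : r j < t := by
        rw [hrdef]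
        rw [div_lt_iff₀ (by positivity)]
        rw [div_lt_iff₀ ht] at hj
        nlinarith [hj, ht]
      refine ⟨x '' (Finset.range (N j) : Set ℕ), (Set.toFinite _).image x, ?_⟩
      intro u hu
      have hu' : u ∈ closure (V j (N j)) := Set.mem_iInter.1 hu j
      have hsub : closure (V j (N j)) ⊆ ⋃ i ∈ Finset.range (N j), Metric.closedBall (x i) (r j) := by
        apply closure_minimal
        · exact Set.iUnion₂_mono fun i _ => Metric.ball_subset_closedBall
        · exact (Finset.range (N j)).finite_toSet.isClosed_biUnion
            fun i _ => Metric.isClosed_closedBall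
      obtain ⟨i, hi, hui⟩ := Set.mem_iUnion₂.1 (hsub hu')
      refine Set.mem_biUnion (Set.mem_image_of_mem x hi) ?_
      exact lt_of_le_of_lt (Metric.mem_closedBall.1 hui) hrj
    · exact isClosed_iInter fun j => isClosed_closure
  · intro n
    calc μs n (⋂ j, closure (V j (N j)))ᶜ = μs n (⋃ j, (closure (V j (N j)))ᶜ) := by
          rw [Set.compl_iInter]
      _ ≤ ∑' j, μs n (closure (V j (N j)))ᶜ := measure_iUnion_le _
      _ ≤ ∑' j, ε j := ENNReal.tsum_le_tsum fun j =>
          le_trans (measure_mono (Set.compl_subset_compl.2 subset_closure)) (hN1 j n)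
      _ = δ' := aux_tsum_geom δ'
      _ ≤ δ := hδ'le
  · calc μ (⋂ j, closure (V j (N j)))ᶜ = μ (⋃ j, (closure (V j (N j)))ᶜ) := by
          rw [Set.compl_iInter]
      _ ≤ ∑' j, μ (closure (V j (N j)))ᶜ := measure_iUnion_le _
      _ ≤ ∑' j, ε j := ENNReal.tsum_le_tsum fun j =>
          le_trans (measure_mono (Set.compl_subset_compl.2 subset_closure)) (hN2 j)
      _ = δ' := aux_tsum_geom δ'
      _ ≤ δ := hδ'le

lemma aux_exp_lip {a b L : ℝ} (ha : a ≤ L) (hb : b ≤ L) :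
    |Real.exp a - Real.exp b| ≤ Real.exp L * |a - b| := by
  have key : ∀ x y : ℝ, x ≤ L → y ≤ L → y ≤ x →
      Real.exp x - Real.exp y ≤ Real.exp L * (x - y) := by
    intro x y hx hy hyx
    have h1 := Real.add_one_le_exp (y - x)
    have h2 : Real.exp x ≤ Real.exp L := Real.exp_le_exp.2 hx
    have h3 : Real.exp y = Real.exp x * Real.exp (y - x) := by
      rw [← Real.exp_add]; ring_nf
    nlinarith [Real.exp_pos x]
  rcases le_total b a with hba | hab
  · rw [abs_of_nonneg (sub_nonneg.2 (Real.exp_le_exp.2 hba)), abs_of_nonneg (sub_nonneg.2 hba)]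
    exact key a b ha hb hba
  · rw [abs_sub_comm, abs_sub_comm a b,
      abs_of_nonneg (sub_nonneg.2 (Real.exp_le_exp.2 hab)), abs_of_nonneg (sub_nonneg.2 hab)]
    exact key b a hb ha hab

section
variable {E : Type*} [NormedAddCommGroup E] [MeasurableSpace E] [BorelSpace E]
    {G : Type*} [NormedAddCommGroup G]

lemma aux_integrable (ν : Measure E) [IsProbabilityMeasure ν] {b c CB : ℝ}
    (hc : 0 ≤ c)
    (hmom : ∫⁻ u, ENNReal.ofReal (Real.exp (b * ‖u‖)) ∂ν ≤ ENNReal.ofReal CB)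
    {f : E → G} (hf : AEStronglyMeasurable f ν)
    (hfb : ∀ u, ‖f u‖ ≤ c * Real.exp (b * ‖u‖)) : Integrable f ν := by
  refine ⟨hf, ?_⟩
  rw [hasFiniteIntegral_iff_norm]
  calc ∫⁻ u, ENNReal.ofReal ‖f u‖ ∂ν
      ≤ ∫⁻ u, ENNReal.ofReal c * ENNReal.ofReal (Real.exp (b * ‖u‖)) ∂ν := by
        apply lintegral_mono
        intro u
        show ENNReal.ofReal ‖f u‖ ≤ ENNReal.ofReal c * ENNReal.ofReal (Real.exp (b * ‖u‖))
        rw [← ENNReal.ofReal_mul hc]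
        exact ENNReal.ofReal_le_ofReal (hfb u)
    _ = ENNReal.ofReal c * ∫⁻ u, ENNReal.ofReal (Real.exp (b * ‖u‖)) ∂ν :=
        lintegral_const_mul' _ _ ENNReal.ofReal_ne_top
    _ ≤ ENNReal.ofReal c * ENNReal.ofReal CB := mul_le_mul_right hmom _
    _ < ⊤ := ENNReal.mul_lt_top ENNReal.ofReal_lt_top ENNReal.ofReal_lt_top

lemma aux_int_exp_le (ν : Measure E) [IsProbabilityMeasure ν] {b CB : ℝ} (hCB : 0 ≤ CB)
    (hmom : ∫⁻ u, ENNReal.ofReal (Real.exp (b * ‖u‖)) ∂ν ≤ ENNReal.ofReal CB) :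
    ∫ u, Real.exp (b * ‖u‖) ∂ν ≤ CB := by
  rw [integral_eq_lintegral_of_nonneg_ae (f := fun u => Real.exp (b * ‖u‖)) (ae_of_all _ fun u => (Real.exp_pos _).le)
    (Real.continuous_exp.comp (continuous_const.mul continuous_norm)).aestronglyMeasurable]
  exact ENNReal.toReal_le_of_le_ofReal hCB hmom

end

section
variable {E : Type*} [NormedAddCommGroup E] [NormedSpace ℝ E]
    {F : Type*} [NormedAddCommGroup F] [NormedSpace ℝ F]

lemma aux_unif (A : E →L[ℝ] F) (Ak : ℕ → E →L[ℝ] F) {CA : ℝ} (hCA : 0 ≤ CA)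
    (hAbd : ∀ k, ‖Ak k‖ ≤ CA)
    (hAconv : ∀ u : E, Tendsto (fun k => ‖Ak k u - A u‖) atTop (nhds 0))
    {K : Set E} (hK : IsCompact K) {ε : ℝ} (hε : 0 < ε) :
    ∀ᶠ k in atTop, ∀ u ∈ K, ‖Ak k u - A u‖ ≤ ε := by
  set ρ : ℝ := ε / (3 * (CA + ‖A‖ + 1)) with hρdef
  have hρpos : 0 < ρ := by
    apply div_pos hε
    positivity
  obtain ⟨s, hsK, hsfin, hscov⟩ := hK.elim_finite_subcover_image
    (fun x (_ : x ∈ K) => Metric.isOpen_ball (x := x) (ε := ρ))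
    (fun u hu => Set.mem_biUnion hu (Metric.mem_ball_self hρpos))
  have hev : ∀ᶠ k in atTop, ∀ x ∈ s, ‖Ak k x - A x‖ ≤ ε / 3 := by
    rw [eventually_all_finite hsfin]
    intro x _
    exact (hAconv x).eventually_le_const (by positivity : (0:ℝ) < ε/3)
  filter_upwards [hev] with k hk u hu
  obtain ⟨x, hxs, hxu⟩ := Set.mem_iUnion₂.1 (hscov hu)
  have hd : ‖u - x‖ < ρ := by
    rw [← dist_eq_norm]
    exact Metric.mem_ball.1 hxu
  have e1 : ‖Ak k u - Ak k x‖ ≤ CA * ρ := by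
    rw [← map_sub]
    calc ‖Ak k (u - x)‖ ≤ ‖Ak k‖ * ‖u - x‖ := (Ak k).le_opNorm _
      _ ≤ CA * ρ := mul_le_mul (hAbd k) hd.le (norm_nonneg _) hCA
  have e2 : ‖A x - A u‖ ≤ ‖A‖ * ρ := by
    rw [← map_sub]
    calc ‖A (x - u)‖ ≤ ‖A‖ * ‖x - u‖ := A.le_opNorm _
      _ ≤ ‖A‖ * ρ := by
          rw [norm_sub_rev]
          exact mul_le_mul_of_nonneg_left hd.le (norm_nonneg _)
  calc ‖Ak k u - A u‖ ≤ ‖Ak k u - Ak k x‖ + ‖Ak k x - A x‖ + ‖A x - A u‖ := by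
        have := norm_add₃_le (a := Ak k u - Ak k x) (b := Ak k x - A x) (c := A x - A u)
        simpa using this
    _ ≤ CA * ρ + ε / 3 + ‖A‖ * ρ := add_le_add (add_le_add e1 (hk x hxs)) e2
    _ ≤ ε := by
        have h3 : (CA + ‖A‖ + 1) * ρ = ε / 3 := by
          rw [hρdef]
          field_simp
        nlinarith [norm_nonneg A, hρpos]
end

section
variable {E : Type*} [NormedAddCommGroup E] [CompleteSpace E]
    [SecondCountableTopology E] [MeasurableSpace E] [BorelSpace E]
    {G : Type*} [NormedAddCommGroup G] [NormedSpace ℝ G] [CompleteSpace G]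

lemma aux_weakvec (μs : ℕ → Measure E) (μ : Measure E)
    [∀ n, IsProbabilityMeasure (μs n)] [IsProbabilityMeasure μ]
    (hweak : ∀ h : E → ℝ, Continuous h → (∃ M : ℝ, ∀ u : E, |h u| ≤ M) →
      Tendsto (fun n => ∫ u, h u ∂(μs n)) atTop (nhds (∫ u, h u ∂μ)))
    (htight : ∀ δ : ℝ≥0∞, 0 < δ → ∃ K : Set E, IsCompact K ∧ (∀ n, μs n Kᶜ ≤ δ) ∧ μ Kᶜ ≤ δ)
    (h : E → G) (hh : Continuous h) (M : ℝ) (hM : ∀ u, ‖h u‖ ≤ M) :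
    Tendsto (fun n => ∫ u, h u ∂(μs n)) atTop (nhds (∫ u, h u ∂μ)) := by
  have hM0 : 0 ≤ M := le_trans (norm_nonneg _) (hM 0)
  rw [Metric.tendsto_atTop]
  intro ε hε
  set ε' : ℝ := ε / 8 with hε'def
  have hε'pos : 0 < ε' := by positivity
  set δr : ℝ := ε / (8 * (M + 1)) with hδrdef
  have hδrpos : 0 < δr := by positivity
  obtain ⟨K, hKcomp, hKn, hKμ⟩ := htight (ENNReal.ofReal δr) (ENNReal.ofReal_pos.2 hδrpos)
  -- choose radii of continuity
  have hcont : ∀ x : E, ∃ ρ : ℝ, 0 < ρ ∧ ∀ u : E, dist u x < 2 * ρ → ‖h u - h x‖ ≤ ε' := by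
    intro x
    obtain ⟨ρ, hρ, hρ2⟩ := Metric.continuous_iff.1 hh x ε' hε'pos
    refine ⟨ρ / 2, by positivity, fun u hu => ?_⟩
    have := hρ2 u (by linarith)
    rw [dist_eq_norm] at this
    exact this.le
  choose r hr hr2 using hcont
  -- finite subcover
  obtain ⟨s, hsK, hsfin, hscov⟩ := hKcomp.elim_finite_subcover_image
    (fun x _ => Metric.isOpen_ball (x := x) (ε := r x))
    (fun u hu => Set.mem_biUnion hu (Metric.mem_ball_self (hr u)))
  set t : Finset E := hsfin.toFinset with htdef
  have htmem : ∀ x, x ∈ t ↔ x ∈ s := fun x => hsfin.mem_toFinset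
  -- bump functions
  set φ : E → E → ℝ := fun x u => max 0 (min 1 (2 - dist u x / r x)) with hφdef
  have hφcont : ∀ x, Continuous (φ x) := by
    intro x
    apply Continuous.max continuous_const
    apply Continuous.min continuous_const
    exact continuous_const.sub ((continuous_id.dist continuous_const).div_const (r x))
  have hφ01 : ∀ x u, 0 ≤ φ x u ∧ φ x u ≤ 1 := by
    intro x u
    constructor
    · exact le_max_left _ _
    · exact max_le (by norm_num) (min_le_left _ _)
  have hφ1 : ∀ x u, dist u x < r x → φ x u = 1 := by
    intro x u hu
    have h1 : (1 : ℝ) ≤ 2 - dist u x / r x := by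
      have : dist u x / r x < 1 := (div_lt_one (hr x)).2 hu
      linarith
    show max 0 (min 1 (2 - dist u x / r x)) = 1
    rw [min_eq_left h1, max_eq_right (by norm_num : (0:ℝ) ≤ 1)]
  have hφ0 : ∀ x u, φ x u ≠ 0 → dist u x < 2 * r x := by
    intro x u hne
    by_contra hcon
    push_neg at hcon
    have : 2 - dist u x / r x ≤ 0 := by
      rw [sub_nonpos, le_div_iff₀ (hr x)]
      linarith
    apply hne
    rw [hφdef]
    simp only []
    rw [max_eq_left]
    exact le_trans (min_le_right _ _) this
  set S : E → ℝ := fun u => ∑ x ∈ t, φ x u with hSdef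
  have hScont : Continuous S := continuous_finset_sum _ fun x _ => hφcont x
  have hS0 : ∀ u, 0 ≤ S u := fun u => Finset.sum_nonneg fun x _ => (hφ01 x u).1
  set den : E → ℝ := fun u => max 1 (S u) with hdendef
  have hden1 : ∀ u, 1 ≤ den u := fun u => le_max_left _ _
  have hdenpos : ∀ u, 0 < den u := fun u => lt_of_lt_of_le one_pos (hden1 u)
  have hdencont : Continuous den := continuous_const.max hScont
  set ψ : E → E → ℝ := fun x u => φ x u / den u with hψdef
  have hψcont : ∀ x, Continuous (ψ x) := fun x => (hφcont x).div hdencont fun u => (hdenpos u).ne'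
  have hψ0 : ∀ x u, 0 ≤ ψ x u := fun x u => div_nonneg (hφ01 x u).1 (hdenpos u).le
  have hψle : ∀ x u, ψ x u ≤ 1 := by
    intro x u
    rw [hψdef, div_le_one (hdenpos u)]
    exact le_trans (hφ01 x u).2 (hden1 u)
  set Sψ : E → ℝ := fun u => ∑ x ∈ t, ψ x u with hSψdef
  have hSψeq : ∀ u, Sψ u = S u / den u := fun u => (Finset.sum_div _ _ _).symm
  have hSψle1 : ∀ u, Sψ u ≤ 1 := by
    intro u
    rw [hSψeq, div_le_one (hdenpos u)]
    exact le_max_right _ _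
  have hSψ0 : ∀ u, 0 ≤ Sψ u := fun u => Finset.sum_nonneg fun x _ => hψ0 x u
  have hSψK : ∀ u ∈ K, Sψ u = 1 := by
    intro u hu
    obtain ⟨x, hxs, hxu⟩ := Set.mem_iUnion₂.1 (hscov hu)
    have hφx : φ x u = 1 := hφ1 x u (Metric.mem_ball.1 hxu)
    have hS1 : 1 ≤ S u := by
      rw [hSdef]
      calc (1:ℝ) = φ x u := hφx.symm
        _ ≤ ∑ y ∈ t, φ y u := Finset.single_le_sum (fun y _ => (hφ01 y u).1)
            ((htmem x).2 hxs)
    rw [hSψeq, hdendef]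
    simp only [max_eq_right hS1]
    exact div_self (by linarith)
  -- approximation
  set happ : E → G := fun u => ∑ x ∈ t, ψ x u • h x with happdef
  have hkey : ∀ u, ‖h u - happ u‖ ≤ ε' + (1 - Sψ u) * M := by
    intro u
    have decomp : h u - happ u = (∑ x ∈ t, ψ x u • (h u - h x)) + (1 - Sψ u) • h u := by
      rw [happdef, hSψdef]
      simp only [smul_sub, Finset.sum_sub_distrib, sub_smul, one_smul, ← Finset.sum_smul]
      abel
    rw [decomp]
    calc ‖(∑ x ∈ t, ψ x u • (h u - h x)) + (1 - Sψ u) • h u‖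
        ≤ ‖∑ x ∈ t, ψ x u • (h u - h x)‖ + ‖(1 - Sψ u) • h u‖ := norm_add_le _ _
      _ ≤ (∑ x ∈ t, ε' * ψ x u) + (1 - Sψ u) * M := by
          apply add_le_add
          · refine le_trans (norm_sum_le _ _) (Finset.sum_le_sum fun x _ => ?_)
            by_cases hψx : ψ x u = 0
            · simp [hψx]
            · have hφx : φ x u ≠ 0 := by
                intro hc; apply hψx; rw [hψdef]; simp [hc]
              have hdist := hφ0 x u hφx
              rw [norm_smul, Real.norm_eq_abs, abs_of_nonneg (hψ0 x u)]
              rw [mul_comm ε' (ψ x u)]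
              exact mul_le_mul_of_nonneg_left (by
                have := hr2 x u (by rwa [dist_eq_norm] at hdist ⊢ <;> exact hdist)
                exact this) (hψ0 x u)
          · rw [norm_smul, Real.norm_eq_abs, abs_of_nonneg (by linarith [hSψle1 u])]
            exact mul_le_mul_of_nonneg_left (hM u) (by linarith [hSψle1 u])
      _ ≤ ε' + (1 - Sψ u) * M := by
          apply add_le_add_left
          rw [← Finset.mul_sum]
          calc ε' * Sψ u ≤ ε' * 1 := mul_le_mul_of_nonneg_left (hSψle1 u) hε'pos.le
            _ = ε' := mul_one _
  -- integrability and integral bounds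
  have hKc : MeasurableSet Kᶜ := hKcomp.isClosed.measurableSet.compl
  have main_est : ∀ (ν : Measure E) [IsProbabilityMeasure ν], ν Kᶜ ≤ ENNReal.ofReal δr →
      ‖∫ u, h u ∂ν - ∫ u, happ u ∂ν‖ ≤ ε' + M * δr := by
    intro ν _ hνK
    have hint_h : Integrable h ν :=
      ⟨hh.aestronglyMeasurable, HasFiniteIntegral.of_bounded (ae_of_all _ hM)⟩
    have hint_ψ : ∀ x, Integrable (ψ x) ν := fun x =>
      ⟨(hψcont x).aestronglyMeasurable, HasFiniteIntegral.of_bounded (ae_of_all _ fun u => by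
        rw [Real.norm_eq_abs, abs_of_nonneg (hψ0 x u)]; exact hψle x u)⟩
    have hint_happ : Integrable happ ν :=
      integrable_finset_sum _ fun x _ => (hint_ψ x).smul_const (h x)
    have hint_Sψ : Integrable Sψ ν := integrable_finset_sum _ fun x _ => hint_ψ x
    have hi1 : Integrable (fun u => 1 - Sψ u) ν := (integrable_const 1).sub hint_Sψ
    have hi2 : Integrable (fun u => (1 - Sψ u) * M) ν := hi1.mul_const M
    have hi3 : Integrable (fun u => ε' + (1 - Sψ u) * M) ν := (integrable_const ε').add hi2
    -- ∫ (1 - Sψ) ≤ δr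
    have hq : ∫ u, (1 - Sψ u) ∂ν ≤ δr := by
      have hle : ∀ u, 1 - Sψ u ≤ Set.indicator Kᶜ (fun _ => (1:ℝ)) u := by
        intro u
        by_cases hu : u ∈ K
        · rw [hSψK u hu, Set.indicator_of_notMem (by simp [hu])]
          simp
        · rw [Set.indicator_of_mem (by simpa using hu)]
          linarith [hSψ0 u]
      calc ∫ u, (1 - Sψ u) ∂ν ≤ ∫ u, Set.indicator Kᶜ (fun _ => (1:ℝ)) u ∂ν := by
            exact integral_mono hi1 ((integrable_const 1).indicator hKc) hle
        _ = (ν Kᶜ).toReal • (1:ℝ) := integral_indicator_const (1:ℝ) hKc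
        _ ≤ δr := by
            rw [smul_eq_mul, mul_one]
            exact ENNReal.toReal_le_of_le_ofReal hδrpos.le hνK
    calc ‖∫ u, h u ∂ν - ∫ u, happ u ∂ν‖ = ‖∫ u, (h u - happ u) ∂ν‖ := by
          rw [integral_sub hint_h hint_happ]
      _ ≤ ∫ u, ‖h u - happ u‖ ∂ν := norm_integral_le_integral_norm _
      _ ≤ ∫ u, (ε' + (1 - Sψ u) * M) ∂ν := by
          exact integral_mono (hint_h.sub hint_happ).norm hi3 hkey
      _ = ε' + (∫ u, (1 - Sψ u) ∂ν) * M := by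
          rw [integral_add (integrable_const ε') hi2, integral_const, integral_mul_const]
          simp [measure_univ]
      _ ≤ ε' + M * δr := by
          rw [add_le_add_iff_left, mul_comm]
          exact mul_le_mul_of_nonneg_left hq hM0
  -- convergence of the approximations
  have happ_int : ∀ (ν : Measure E) [IsProbabilityMeasure ν],
      ∫ u, happ u ∂ν = ∑ x ∈ t, (∫ u, ψ x u ∂ν) • h x := by
    intro ν _
    have hint_ψ : ∀ x, Integrable (ψ x) ν := fun x =>
      ⟨(hψcont x).aestronglyMeasurable, HasFiniteIntegral.of_bounded (ae_of_all _ fun u => by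
        rw [Real.norm_eq_abs, abs_of_nonneg (hψ0 x u)]; exact hψle x u)⟩
    rw [integral_finset_sum _ fun x _ => (hint_ψ x).smul_const (h x)]
    exact Finset.sum_congr rfl fun x _ => integral_smul_const (ψ x) (h x)
  have happ_conv : Tendsto (fun n => ∫ u, happ u ∂(μs n)) atTop (nhds (∫ u, happ u ∂μ)) := by
    have : Tendsto (fun n => ∑ x ∈ t, (∫ u, ψ x u ∂(μs n)) • h x) atTop
        (nhds (∑ x ∈ t, (∫ u, ψ x u ∂μ) • h x)) := by
      apply tendsto_finset_sum
      intro x _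
      exact (hweak (ψ x) (hψcont x) ⟨1, fun u => by
        rw [abs_of_nonneg (hψ0 x u)]; exact hψle x u⟩).smul_const (h x)
    simpa only [happ_int] using this
  obtain ⟨N, hN⟩ := (Metric.tendsto_atTop.1 happ_conv) ε' hε'pos
  refine ⟨N, fun n hn => ?_⟩
  have h1 := main_est (μs n) (hKn n)
  have h2 := main_est μ hKμ
  have h3 := hN n hn
  have Mδ : M * δr ≤ ε / 8 := by
    have hM1 : M + 1 ≠ 0 := by linarith
    have heq : (M + 1) * δr = ε / 8 := by
      rw [hδrdef]; field_simp
    nlinarith [hδrpos]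
  calc dist (∫ u, h u ∂μs n) (∫ u, h u ∂μ)
      ≤ dist (∫ u, h u ∂μs n) (∫ u, happ u ∂μs n)
        + dist (∫ u, happ u ∂μs n) (∫ u, happ u ∂μ)
        + dist (∫ u, happ u ∂μ) (∫ u, h u ∂μ) := dist_triangle4 _ _ _ _
    _ < (ε' + M * δr) + ε' + (ε' + M * δr) := by
        apply add_lt_add_of_lt_of_le
        apply add_lt_add_of_le_of_lt
        · rw [dist_eq_norm]; exact h1
        · exact h3
        · rw [dist_eq_norm, norm_sub_rev]; exact h2
    _ ≤ ε / 8 + ε / 8 + ε / 8 + ε / 8 + ε / 8 := by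
        rw [hε'def] at *
        linarith
    _ < ε := by linarith
end

section
variable {E : Type*} [NormedAddCommGroup E] [NormedSpace ℝ E] [CompleteSpace E]
    [SecondCountableTopology E] [MeasurableSpace E] [BorelSpace E]
    {F : Type*} [NormedAddCommGroup F] [NormedSpace ℝ F]
    {G : Type*} [NormedAddCommGroup G] [NormedSpace ℝ G] [CompleteSpace G]

set_option maxHeartbeats 1600000 in
lemma aux_main
    (μs : ℕ → Measure E) (μ : Measure E)
    [∀ n, IsProbabilityMeasure (μs n)] [IsProbabilityMeasure μ]
    (hweak : ∀ h : E → ℝ, Continuous h → (∃ M : ℝ, ∀ u : E, |h u| ≤ M) →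
      Tendsto (fun n => ∫ u, h u ∂(μs n)) atTop (nhds (∫ u, h u ∂μ)))
    (htight : ∀ δ : ℝ≥0∞, 0 < δ → ∃ K : Set E, IsCompact K ∧ (∀ n, μs n Kᶜ ≤ δ) ∧ μ Kᶜ ≤ δ)
    (hwv : ∀ (h : E → G), Continuous h → ∀ M : ℝ, (∀ u, ‖h u‖ ≤ M) →
      Tendsto (fun n => ∫ u, h u ∂(μs n)) atTop (nhds (∫ u, h u ∂μ)))
    (hintexp : ∀ (ν : Measure E) [IsProbabilityMeasure ν], ∀ {b c CB : ℝ}, 0 ≤ c →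
      (∫⁻ u, ENNReal.ofReal (Real.exp (b * ‖u‖)) ∂ν ≤ ENNReal.ofReal CB) →
      ∀ {f : E → G}, AEStronglyMeasurable f ν → (∀ u, ‖f u‖ ≤ c * Real.exp (b * ‖u‖)) →
        Integrable f ν)
    (hintexpR : ∀ (ν : Measure E) [IsProbabilityMeasure ν], ∀ {b c CB : ℝ}, 0 ≤ c →
      (∫⁻ u, ENNReal.ofReal (Real.exp (b * ‖u‖)) ∂ν ≤ ENNReal.ofReal CB) →
      ∀ {f : E → ℝ}, AEStronglyMeasurable f ν → (∀ u, ‖f u‖ ≤ c * Real.exp (b * ‖u‖)) →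
        Integrable f ν)
    (hexple : ∀ (ν : Measure E) [IsProbabilityMeasure ν], ∀ {b CB : ℝ}, 0 ≤ CB →
      (∫⁻ u, ENNReal.ofReal (Real.exp (b * ‖u‖)) ∂ν ≤ ENNReal.ofReal CB) →
      ∫ u, Real.exp (b * ‖u‖) ∂ν ≤ CB)
    (hunif : ∀ (A : E →L[ℝ] F) (Ak : ℕ → E →L[ℝ] F) {CA : ℝ}, 0 ≤ CA → (∀ k, ‖Ak k‖ ≤ CA) →
      (∀ u : E, Tendsto (fun k => ‖Ak k u - A u‖) atTop (nhds 0)) →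
      ∀ {K : Set E}, IsCompact K → ∀ {ε : ℝ}, 0 < ε →
      ∀ᶠ k in atTop, ∀ u ∈ K, ‖Ak k u - A u‖ ≤ ε)
    (C : ℝ → ℝ) (hC : ∀ b > 0, 0 < C b)
    (hmom : ∀ b > 0, ∀ n : ℕ,
      ∫⁻ u, ENNReal.ofReal (Real.exp (b * ‖u‖)) ∂(μs n) ≤ ENNReal.ofReal (C b))
    (hmom' : ∀ b > 0,
      ∫⁻ u, ENNReal.ofReal (Real.exp (b * ‖u‖)) ∂μ ≤ ENNReal.ofReal (C b))
    (A : E →L[ℝ] F) (Ak : ℕ → E →L[ℝ] F)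
    (hAbd : ∃ CA : ℝ, ∀ k, ‖Ak k‖ ≤ CA)
    (hAconv : ∀ u : E, Tendsto (fun k => ‖Ak k u - A u‖) atTop (nhds 0))
    (m : F) (mk : ℕ → F) (hm : Tendsto mk atTop (nhds m))
    (B : F →L[ℝ] F →L[ℝ] ℝ)
    (f : E → G) (hf : Continuous f) (Cf : ℝ) (hCf : 0 < Cf)
    (hfb : ∀ u : E, ‖f u‖ ≤ Cf * Real.exp (Cf * ‖u‖)) :
    Tendsto
      (fun p : ℕ × ℕ =>
        ∫ u, Real.exp (-(1/2) * ‖Ak p.1 u‖ ^ 2 + B (Ak p.1 u) (mk p.1)) • f u ∂(μs p.2))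
      (atTop ×ˢ atTop)
      (nhds (∫ u, Real.exp (-(1/2) * ‖A u‖ ^ 2 + B (A u) m) • f u ∂μ)) := by
  obtain ⟨CA₀, hCA₀⟩ := hAbd
  set CA : ℝ := max CA₀ ‖A‖ with hCAdef
  have hCA : 0 ≤ CA := le_trans (norm_nonneg A) (le_max_right _ _)
  have hAk : ∀ k, ‖Ak k‖ ≤ CA := fun k => le_trans (hCA₀ k) (le_max_left _ _)
  have hAA : ‖A‖ ≤ CA := le_max_right _ _
  obtain ⟨Cm₀, hCm₀⟩ := hm.norm.bddAbove_range
  set Cm : ℝ := max Cm₀ ‖m‖ with hCmdef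
  have hCm0 : 0 ≤ Cm := le_trans (norm_nonneg m) (le_max_right _ _)
  have hmk : ∀ k, ‖mk k‖ ≤ Cm :=
    fun k => le_trans (hCm₀ (Set.mem_range_self k)) (le_max_left _ _)
  have hmm : ‖m‖ ≤ Cm := le_max_right _ _
  set c : ℝ := ‖B‖ * Cm with hcdef
  have hc0 : 0 ≤ c := mul_nonneg B.opNorm_nonneg hCm0
  set L : ℝ := c ^ 2 / 2 with hLdef
  have hL0 : 0 ≤ L := by positivity
  set D : ℝ := Real.exp L with hDdef
  have hD1 : 1 ≤ D := Real.one_le_exp hL0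
  have hD0 : 0 < D := lt_of_lt_of_le one_pos hD1
  set ψk : ℕ → E → ℝ := fun k u => -(1/2) * ‖Ak k u‖ ^ 2 + B (Ak k u) (mk k) with hψkdef
  set ψ' : E → ℝ := fun u => -(1/2) * ‖A u‖ ^ 2 + B (A u) m with hψ'def
  set Ξk : ℕ → E → ℝ := fun k u => Real.exp (ψk k u) with hΞkdef
  set Ξ : E → ℝ := fun u => Real.exp (ψ' u) with hΞdef
  have hBabs : ∀ v w : F, |B v w| ≤ ‖B‖ * ‖v‖ * ‖w‖ := by
    intro v w
    calc |B v w| = ‖B v w‖ := (Real.norm_eq_abs _).symm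
      _ ≤ ‖B v‖ * ‖w‖ := (B v).le_opNorm w
      _ ≤ ‖B‖ * ‖v‖ * ‖w‖ := mul_le_mul_of_nonneg_right (B.le_opNorm v) (norm_nonneg w)
  have hψkL : ∀ k u, ψk k u ≤ L := by
    intro k u
    have ht : (0:ℝ) ≤ ‖Ak k u‖ := norm_nonneg _
    have hB' : B (Ak k u) (mk k) ≤ c * ‖Ak k u‖ := by
      calc B (Ak k u) (mk k) ≤ |B (Ak k u) (mk k)| := le_abs_self _
        _ ≤ ‖B‖ * ‖Ak k u‖ * ‖mk k‖ := hBabs _ _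
        _ ≤ ‖B‖ * ‖Ak k u‖ * Cm := mul_le_mul_of_nonneg_left (hmk k)
            (mul_nonneg B.opNorm_nonneg ht)
        _ = c * ‖Ak k u‖ := by rw [hcdef]; ring
    have hsq : (0:ℝ) ≤ (‖Ak k u‖ - c) ^ 2 := sq_nonneg _
    rw [hψkdef]
    simp only []
    rw [hLdef]
    nlinarith
  have hψ'L : ∀ u, ψ' u ≤ L := by
    intro u
    have ht : (0:ℝ) ≤ ‖A u‖ := norm_nonneg _
    have hB' : B (A u) m ≤ c * ‖A u‖ := by
      calc B (A u) m ≤ |B (A u) m| := le_abs_self _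
        _ ≤ ‖B‖ * ‖A u‖ * ‖m‖ := hBabs _ _
        _ ≤ ‖B‖ * ‖A u‖ * Cm := mul_le_mul_of_nonneg_left hmm
            (mul_nonneg B.opNorm_nonneg ht)
        _ = c * ‖A u‖ := by rw [hcdef]; ring
    have hsq : (0:ℝ) ≤ (‖A u‖ - c) ^ 2 := sq_nonneg _
    rw [hψ'def]
    simp only []
    rw [hLdef]
    nlinarith
  have hΞkbd : ∀ k u, Ξk k u ≤ D := fun k u => Real.exp_le_exp.2 (hψkL k u)
  have hΞbd : ∀ u, Ξ u ≤ D := fun u => Real.exp_le_exp.2 (hψ'L u)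
  have hΞkpos : ∀ k u, 0 < Ξk k u := fun k u => Real.exp_pos _
  have hΞpos : ∀ u, 0 < Ξ u := fun u => Real.exp_pos _
  have hψkcont : ∀ k, Continuous (ψk k) := by
    intro k
    have h2 : Continuous fun u => B (Ak k u) (mk k) :=
      ((B.flip (mk k)).comp (Ak k)).continuous
    exact (continuous_const.mul ((Ak k).continuous.norm.pow 2)).add h2
  have hψ'cont : Continuous ψ' := by
    have h2 : Continuous fun u => B (A u) m := ((B.flip m).comp A).continuous
    exact (continuous_const.mul (A.continuous.norm.pow 2)).add h2
  have hΞkcont : ∀ k, Continuous (Ξk k) := fun k => Real.continuous_exp.comp (hψkcont k)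
  have hΞcont : Continuous Ξ := Real.continuous_exp.comp hψ'cont
  -- the difference bound on exponentials
  have hΞdiff : ∀ k u, |Ξk k u - Ξ u| ≤ D * |ψk k u - ψ' u| := fun k u =>
    aux_exp_lip (hψkL k u) (hψ'L u)
  rw [Metric.tendsto_nhds]
  intro ε hε
  have hb1 : (0:ℝ) < Cf + 1 := by linarith
  have hCb1 := hC (Cf + 1) hb1
  have hCCf := hC Cf hCf
  -- choose R
  obtain ⟨R, hR0, hRtail⟩ : ∃ R : ℝ, 0 ≤ R ∧ D * Cf * Real.exp (-R) * C (Cf + 1) ≤ ε / 16 := by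
    have h0 : Tendsto (fun R : ℝ => D * Cf * Real.exp (-R) * C (Cf + 1)) atTop (nhds 0) := by
      have h1 : Tendsto (fun R : ℝ => Real.exp (-R)) atTop (nhds 0) :=
        Real.tendsto_exp_neg_atTop_nhds_zero
      have h2 := (h1.const_mul (D * Cf)).mul_const (C (Cf + 1))
      simpa using h2
    obtain ⟨R, h1, h2⟩ := ((h0.eventually_le_const (show (0:ℝ) < ε/16 by positivity)).and
      (eventually_ge_atTop (0:ℝ))).exists
    exact ⟨R, h2, h1⟩
  set Mf : ℝ := Cf * Real.exp (Cf * (R + 1)) with hMfdef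
  have hMf0 : 0 < Mf := by positivity
  set η : ℝ := (ε / 16) / (Mf + 1) with hηdef
  have hη0 : 0 < η := by positivity
  set δr : ℝ := (ε / 32) / (D * Mf + 1) with hδrdef
  have hδr0 : 0 < δr := by positivity
  obtain ⟨K, hKcomp, hKn, hKμ⟩ := htight (ENNReal.ofReal δr) (ENNReal.ofReal_pos.2 hδr0)
  have hKc : MeasurableSet Kᶜ := hKcomp.isClosed.measurableSet.compl
  obtain ⟨RK₀, hRK₀⟩ := hKcomp.isBounded.subset_closedBall (0 : E)
  set RK : ℝ := max RK₀ 0 with hRKdef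
  have hRK0 : 0 ≤ RK := le_max_right _ _
  have hKnorm : ∀ u ∈ K, ‖u‖ ≤ RK := by
    intro u hu
    have := hRK₀ hu
    rw [Metric.mem_closedBall, dist_zero_right] at this
    exact le_trans this (le_max_left _ _)
  -- cutoff function
  set χ : E → ℝ := fun u => max 0 (min 1 (R + 1 - ‖u‖)) with hχdef
  have hχcont : Continuous χ :=
    Continuous.max continuous_const
      (Continuous.min continuous_const (continuous_const.sub continuous_norm))
  have hχ01 : ∀ u, 0 ≤ χ u ∧ χ u ≤ 1 := fun u =>
    ⟨le_max_left _ _, max_le zero_le_one (min_le_left _ _)⟩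
  have hχ1 : ∀ u : E, ‖u‖ ≤ R → χ u = 1 := by
    intro u hu
    have h1 : (1:ℝ) ≤ R + 1 - ‖u‖ := by linarith
    show max 0 (min 1 (R + 1 - ‖u‖)) = 1
    rw [min_eq_left h1, max_eq_right zero_le_one]
  have hχsupp : ∀ u : E, χ u ≠ 0 → ‖u‖ ≤ R + 1 := by
    intro u h
    by_contra hcon
    push_neg at hcon
    apply h
    show max 0 (min 1 (R + 1 - ‖u‖)) = 0
    rw [max_eq_left]
    exact le_trans (min_le_right _ _) (by linarith)
  have htail : ∀ u : E, (1 - χ u) * Real.exp (Cf * ‖u‖)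
      ≤ Real.exp (-R) * Real.exp ((Cf + 1) * ‖u‖) := by
    intro u
    rcases le_or_gt ‖u‖ R with h | h
    · rw [hχ1 u h]
      simp only [sub_self, zero_mul]
      positivity
    · have h1 : 1 - χ u ≤ 1 := by linarith [(hχ01 u).1]
      have h2 : (0:ℝ) ≤ 1 - χ u := by linarith [(hχ01 u).2]
      have h3 : Real.exp (Cf * ‖u‖) ≤ Real.exp (-R) * Real.exp ((Cf + 1) * ‖u‖) := by
        rw [← Real.exp_add]
        apply Real.exp_le_exp.2
        have hexpand : (Cf + 1) * ‖u‖ = Cf * ‖u‖ + ‖u‖ := by ring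
        rw [hexpand]
        linarith only [h]
      calc (1 - χ u) * Real.exp (Cf * ‖u‖) ≤ 1 * Real.exp (Cf * ‖u‖) :=
            mul_le_mul_of_nonneg_right h1 (Real.exp_pos _).le
        _ = Real.exp (Cf * ‖u‖) := one_mul _
        _ ≤ _ := h3
  -- norm of f bound on the cutoff support
  have hfMf : ∀ u : E, ‖u‖ ≤ R + 1 → ‖f u‖ ≤ Mf := by
    intro u hu
    calc ‖f u‖ ≤ Cf * Real.exp (Cf * ‖u‖) := hfb u
      _ ≤ Cf * Real.exp (Cf * (R + 1)) := by
          apply mul_le_mul_of_nonneg_left _ hCf.le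
          exact Real.exp_le_exp.2 (mul_le_mul_of_nonneg_left hu hCf.le)
      _ = Mf := rfl
  -- uniform convergence of Ξk to Ξ on K
  set X : ℝ := D * (‖B‖ * (CA * RK)) with hXdef
  have hX0 : 0 ≤ X := mul_nonneg hD0.le
    (mul_nonneg B.opNorm_nonneg (mul_nonneg hCA hRK0))
  set Y : ℝ := D * (CA * RK + ‖B‖ * Cm) with hYdef
  have hY0 : 0 ≤ Y := mul_nonneg hD0.le
    (add_nonneg (mul_nonneg hCA hRK0) (mul_nonneg B.opNorm_nonneg hCm0))
  set eA : ℝ := (η / 2) / (Y + 1) with heAdef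
  have heA0 : 0 < eA := by positivity
  set em : ℝ := (η / 2) / (X + 1) with hemdef
  have hem0 : 0 < em := by positivity
  have hkA : ∀ᶠ k in atTop, ∀ u ∈ K, ‖Ak k u - A u‖ ≤ eA :=
    hunif A Ak (CA := CA) hCA hAk hAconv (K := K) hKcomp (ε := eA) heA0
  have hkm : ∀ᶠ k in atTop, ‖mk k - m‖ ≤ em := by
    have h1 : Tendsto (fun k => ‖mk k - m‖) atTop (nhds 0) := by
      have := (hm.sub (tendsto_const_nhds (x := m))).norm
      simpa using this
    exact h1.eventually_le_const hem0
  have KeyK : ∀ᶠ k in atTop, ∀ u ∈ K, |Ξk k u - Ξ u| ≤ η := by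
    filter_upwards [hkA, hkm] with k h1 h2 u hu
    have htk : ‖Ak k u‖ ≤ CA * RK :=
      le_trans ((Ak k).le_opNorm u)
        (mul_le_mul (hAk k) (hKnorm u hu) (norm_nonneg _) hCA)
    have hts : ‖A u‖ ≤ CA * RK :=
      le_trans (A.le_opNorm u)
        (mul_le_mul hAA (hKnorm u hu) (norm_nonneg _) hCA)
    have hdA : ‖Ak k u - A u‖ ≤ eA := h1 u hu
    have habs : |‖Ak k u‖ - ‖A u‖| ≤ ‖Ak k u - A u‖ := abs_norm_sub_norm_le _ _
    obtain ⟨hl, hr⟩ := abs_le.1 habs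
    have tnn : (0:ℝ) ≤ ‖Ak k u‖ := norm_nonneg _
    have snn : (0:ℝ) ≤ ‖A u‖ := norm_nonneg _
    have hsq : |(-(1/2)) * ‖Ak k u‖ ^ 2 - (-(1/2)) * ‖A u‖ ^ 2|
        ≤ CA * RK * ‖Ak k u - A u‖ := by
      have hfact : (-(1/2)) * ‖Ak k u‖ ^ 2 - (-(1/2)) * ‖A u‖ ^ 2
          = -(1/2) * ((‖Ak k u‖ - ‖A u‖) * (‖Ak k u‖ + ‖A u‖)) := by ring
      have habs2 : |(-(1/2)) * ‖Ak k u‖ ^ 2 - (-(1/2)) * ‖A u‖ ^ 2|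
          = 1/2 * (|‖Ak k u‖ - ‖A u‖| * (‖Ak k u‖ + ‖A u‖)) := by
        rw [hfact, abs_mul, abs_mul, abs_of_nonneg (add_nonneg tnn snn)]
        norm_num
      rw [habs2]
      have hmul : |‖Ak k u‖ - ‖A u‖| * (‖Ak k u‖ + ‖A u‖)
          ≤ ‖Ak k u - A u‖ * (CA * RK + CA * RK) :=
        mul_le_mul habs (add_le_add htk hts) (add_nonneg tnn snn) (norm_nonneg _)
      calc 1/2 * (|‖Ak k u‖ - ‖A u‖| * (‖Ak k u‖ + ‖A u‖))
          ≤ 1/2 * (‖Ak k u - A u‖ * (CA * RK + CA * RK)) := by linarith only [hmul]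
        _ = CA * RK * ‖Ak k u - A u‖ := by ring
    have hBsplit : B (Ak k u) (mk k) - B (A u) m
        = B (Ak k u - A u) (mk k) + B (A u) (mk k - m) := by
      rw [map_sub B, ContinuousLinearMap.sub_apply, map_sub (B (A u))]
      ring
    have hB1 : |B (Ak k u - A u) (mk k)| ≤ ‖B‖ * Cm * eA := by
      calc |B (Ak k u - A u) (mk k)| ≤ ‖B‖ * ‖Ak k u - A u‖ * ‖mk k‖ := hBabs _ _
        _ ≤ ‖B‖ * ‖Ak k u - A u‖ * Cm := mul_le_mul_of_nonneg_left (hmk k)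
            (mul_nonneg B.opNorm_nonneg (norm_nonneg _))
        _ ≤ ‖B‖ * eA * Cm := by
            apply mul_le_mul_of_nonneg_right _ hCm0
            exact mul_le_mul_of_nonneg_left hdA B.opNorm_nonneg
        _ = ‖B‖ * Cm * eA := by ring
    have hB2 : |B (A u) (mk k - m)| ≤ ‖B‖ * (CA * RK) * em := by
      calc |B (A u) (mk k - m)| ≤ ‖B‖ * ‖A u‖ * ‖mk k - m‖ := hBabs _ _
        _ ≤ ‖B‖ * (CA * RK) * em := by
            apply mul_le_mul (mul_le_mul_of_nonneg_left hts B.opNorm_nonneg) h2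
              (norm_nonneg _)
            exact mul_nonneg B.opNorm_nonneg (mul_nonneg hCA hRK0)
    have hψdiff : |ψk k u - ψ' u|
        ≤ (CA * RK + ‖B‖ * Cm) * eA + ‖B‖ * (CA * RK) * em := by
      have hdec : ψk k u - ψ' u = ((-(1/2)) * ‖Ak k u‖ ^ 2 - (-(1/2)) * ‖A u‖ ^ 2)
          + (B (Ak k u) (mk k) - B (A u) m) := by
        show (-(1/2) * ‖Ak k u‖ ^ 2 + B (Ak k u) (mk k))
          - (-(1/2) * ‖A u‖ ^ 2 + B (A u) m) = _
        ring
      rw [hdec]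
      calc |_ + _| ≤ |(-(1/2)) * ‖Ak k u‖ ^ 2 - (-(1/2)) * ‖A u‖ ^ 2|
            + |B (Ak k u) (mk k) - B (A u) m| := abs_add_le _ _
        _ ≤ CA * RK * ‖Ak k u - A u‖ + (‖B‖ * Cm * eA + ‖B‖ * (CA * RK) * em) := by
            apply add_le_add hsq
            rw [hBsplit]
            exact le_trans (abs_add_le _ _) (add_le_add hB1 hB2)
        _ ≤ CA * RK * eA + (‖B‖ * Cm * eA + ‖B‖ * (CA * RK) * em) := by
            apply add_le_add_left
            exact mul_le_mul_of_nonneg_left hdA (mul_nonneg hCA hRK0)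
        _ = (CA * RK + ‖B‖ * Cm) * eA + ‖B‖ * (CA * RK) * em := by ring
    have hYe : Y * eA ≤ η / 2 := by
      have h3 : (Y + 1) * eA = η / 2 := by
        rw [heAdef]
        field_simp
      linarith only [h3, heA0.le]
    have hXe : X * em ≤ η / 2 := by
      have h3 : (X + 1) * em = η / 2 := by
        rw [hemdef]
        field_simp
      linarith only [h3, hem0.le]
    calc |Ξk k u - Ξ u| ≤ D * |ψk k u - ψ' u| := hΞdiff k u
      _ ≤ D * ((CA * RK + ‖B‖ * Cm) * eA + ‖B‖ * (CA * RK) * em) :=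
          mul_le_mul_of_nonneg_left hψdiff hD0.le
      _ = Y * eA + X * em := by rw [hYdef, hXdef]; ring
      _ ≤ η / 2 + η / 2 := add_le_add hYe hXe
      _ = η := by ring
  -- pointwise norm bounds for integrands
  have hnorm_smul : ∀ (a : ℝ) (v : G), 0 ≤ a → ‖a • v‖ = a * ‖v‖ := by
    intro a v ha
    rw [norm_smul, Real.norm_eq_abs, abs_of_nonneg ha]
  have hΞkfb : ∀ k u, ‖Ξk k u • f u‖ ≤ D * Cf * Real.exp (Cf * ‖u‖) := by
    intro k u
    rw [hnorm_smul _ _ (hΞkpos k u).le]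
    calc Ξk k u * ‖f u‖ ≤ D * (Cf * Real.exp (Cf * ‖u‖)) :=
        mul_le_mul (hΞkbd k u) (hfb u) (norm_nonneg _) hD0.le
      _ = D * Cf * Real.exp (Cf * ‖u‖) := by ring
  have hΞfb : ∀ u, ‖Ξ u • f u‖ ≤ D * Cf * Real.exp (Cf * ‖u‖) := by
    intro u
    rw [hnorm_smul _ _ (hΞpos u).le]
    calc Ξ u * ‖f u‖ ≤ D * (Cf * Real.exp (Cf * ‖u‖)) :=
        mul_le_mul (hΞbd u) (hfb u) (norm_nonneg _) hD0.le
      _ = D * Cf * Real.exp (Cf * ‖u‖) := by ring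
  have hDCf : (0:ℝ) ≤ D * Cf := mul_nonneg hD0.le hCf.le
  have hintfk : ∀ k n, Integrable (fun u => Ξk k u • f u) (μs n) := by
    intro k n
    exact hintexp (μs n) hDCf (hmom Cf hCf n)
      (((hΞkcont k).smul hf).aestronglyMeasurable) (hΞkfb k)
  have hintf : ∀ n, Integrable (fun u => Ξ u • f u) (μs n) := by
    intro n
    exact hintexp (μs n) hDCf (hmom Cf hCf n) ((hΞcont.smul hf).aestronglyMeasurable) hΞfb
  have hintfμ : Integrable (fun u => Ξ u • f u) μ :=
    hintexp μ hDCf (hmom' Cf hCf) ((hΞcont.smul hf).aestronglyMeasurable) hΞfb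
  -- PART A
  have partA : ∀ᶠ k in atTop, ∀ n,
      ‖(∫ u, Ξk k u • f u ∂(μs n)) - ∫ u, Ξ u • f u ∂(μs n)‖ ≤ ε / 2 := by
    filter_upwards [KeyK] with k hkK n
    set bfun : E → ℝ := fun u => 2 * D * Cf * Real.exp (-R) * Real.exp ((Cf + 1) * ‖u‖)
      + (Mf * η + 2 * D * Mf * Set.indicator Kᶜ (fun _ => (1:ℝ)) u) with hbfundef
    have hptwise : ∀ u, ‖Ξk k u • f u - Ξ u • f u‖ ≤ bfun u := by
      intro u
      have heq : ‖Ξk k u • f u - Ξ u • f u‖ = |Ξk k u - Ξ u| * ‖f u‖ := by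
        rw [← sub_smul, norm_smul, Real.norm_eq_abs]
      rw [heq]
      have hsplit : |Ξk k u - Ξ u| * ‖f u‖
          = χ u * (|Ξk k u - Ξ u| * ‖f u‖) + (1 - χ u) * (|Ξk k u - Ξ u| * ‖f u‖) := by
        ring
      have hbase : (0:ℝ) ≤ |Ξk k u - Ξ u| * ‖f u‖ :=
        mul_nonneg (abs_nonneg _) (norm_nonneg _)
      have hd2D : |Ξk k u - Ξ u| ≤ 2 * D := by
        calc |Ξk k u - Ξ u| ≤ |Ξk k u| + |Ξ u| := abs_sub _ _
          _ ≤ D + D := add_le_add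
              (by rw [abs_of_pos (hΞkpos k u)]; exact hΞkbd k u)
              (by rw [abs_of_pos (hΞpos u)]; exact hΞbd u)
          _ = 2 * D := by ring
      have hterm2 : (1 - χ u) * (|Ξk k u - Ξ u| * ‖f u‖)
          ≤ 2 * D * Cf * Real.exp (-R) * Real.exp ((Cf + 1) * ‖u‖) := by
        have h0 : (0:ℝ) ≤ 1 - χ u := by linarith [(hχ01 u).2]
        calc (1 - χ u) * (|Ξk k u - Ξ u| * ‖f u‖)
            ≤ (1 - χ u) * (2 * D * (Cf * Real.exp (Cf * ‖u‖))) := by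
              apply mul_le_mul_of_nonneg_left _ h0
              exact mul_le_mul hd2D (hfb u) (norm_nonneg _) (by linarith)
          _ = 2 * D * Cf * ((1 - χ u) * Real.exp (Cf * ‖u‖)) := by ring
          _ ≤ 2 * D * Cf * (Real.exp (-R) * Real.exp ((Cf + 1) * ‖u‖)) := by
              apply mul_le_mul_of_nonneg_left (htail u) (by positivity)
          _ = 2 * D * Cf * Real.exp (-R) * Real.exp ((Cf + 1) * ‖u‖) := by ring
      have hterm1 : χ u * (|Ξk k u - Ξ u| * ‖f u‖)
          ≤ Mf * η + 2 * D * Mf * Set.indicator Kᶜ (fun _ => (1:ℝ)) u := by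
        by_cases hχz : χ u = 0
        · rw [hχz, zero_mul]
          apply add_nonneg (mul_nonneg hMf0.le hη0.le)
          apply mul_nonneg (by positivity)
          exact Set.indicator_nonneg (fun _ _ => zero_le_one) u
        · have hun : ‖u‖ ≤ R + 1 := hχsupp u hχz
          have hfu : ‖f u‖ ≤ Mf := hfMf u hun
          by_cases huK : u ∈ K
          · have hη' : |Ξk k u - Ξ u| ≤ η := hkK u huK
            have : χ u * (|Ξk k u - Ξ u| * ‖f u‖) ≤ 1 * (η * Mf) := by
              apply mul_le_mul (hχ01 u).2 _ hbase zero_le_one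
              exact mul_le_mul hη' hfu (norm_nonneg _) hη0.le
            calc χ u * (|Ξk k u - Ξ u| * ‖f u‖) ≤ 1 * (η * Mf) := this
              _ = Mf * η := by ring
              _ ≤ Mf * η + 2 * D * Mf * Set.indicator Kᶜ (fun _ => (1:ℝ)) u := by
                  have : (0:ℝ) ≤ 2 * D * Mf * Set.indicator Kᶜ (fun _ => (1:ℝ)) u :=
                    mul_nonneg (by positivity) (Set.indicator_nonneg (fun _ _ => zero_le_one) u)
                  linarith
          · have hind : Set.indicator Kᶜ (fun _ => (1:ℝ)) u = 1 :=
              Set.indicator_of_mem (by simpa using huK) _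
            have : χ u * (|Ξk k u - Ξ u| * ‖f u‖) ≤ 1 * (2 * D * Mf) := by
              apply mul_le_mul (hχ01 u).2 _ hbase zero_le_one
              calc |Ξk k u - Ξ u| * ‖f u‖ ≤ (2 * D) * Mf :=
                  mul_le_mul hd2D hfu (norm_nonneg _) (by positivity)
                _ = 2 * D * Mf := by ring
            rw [hind]
            calc χ u * (|Ξk k u - Ξ u| * ‖f u‖) ≤ 1 * (2 * D * Mf) := this
              _ = 2 * D * Mf * 1 := by ring
              _ ≤ Mf * η + 2 * D * Mf * 1 := by
                  have : (0:ℝ) ≤ Mf * η := mul_nonneg hMf0.le hη0.le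
                  linarith
      calc |Ξk k u - Ξ u| * ‖f u‖
          = χ u * (|Ξk k u - Ξ u| * ‖f u‖) + (1 - χ u) * (|Ξk k u - Ξ u| * ‖f u‖) := hsplit
        _ ≤ (Mf * η + 2 * D * Mf * Set.indicator Kᶜ (fun _ => (1:ℝ)) u)
            + 2 * D * Cf * Real.exp (-R) * Real.exp ((Cf + 1) * ‖u‖) := add_le_add hterm1 hterm2
        _ = bfun u := by rw [hbfundef]; ring
    -- integrability of pieces
    have hint1 : Integrable (fun u => 2 * D * Cf * Real.exp (-R)
        * Real.exp ((Cf + 1) * ‖u‖)) (μs n) := by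
      apply hintexpR (μs n) (c := 2 * D * Cf * Real.exp (-R)) (by positivity)
        (hmom (Cf + 1) hb1 n)
      · exact (continuous_const.mul (Real.continuous_exp.comp
          (continuous_const.mul continuous_norm))).aestronglyMeasurable
      · intro u
        rw [Real.norm_eq_abs, abs_of_nonneg (by positivity)]
    have hint2 : Integrable (fun u => Mf * η
        + 2 * D * Mf * Set.indicator Kᶜ (fun _ => (1:ℝ)) u) (μs n) := by
      apply (integrable_const (Mf * η)).add
      exact (((integrable_const (1:ℝ)).indicator hKc).const_mul _)
    have hintb : Integrable bfun (μs n) := hint1.add hint2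
    have hintdiff : Integrable (fun u => Ξk k u • f u - Ξ u • f u) (μs n) :=
      (hintfk k n).sub (hintf n)
    calc ‖(∫ u, Ξk k u • f u ∂(μs n)) - ∫ u, Ξ u • f u ∂(μs n)‖
        = ‖∫ u, (Ξk k u • f u - Ξ u • f u) ∂(μs n)‖ := by
          rw [integral_sub (hintfk k n) (hintf n)]
      _ ≤ ∫ u, ‖Ξk k u • f u - Ξ u • f u‖ ∂(μs n) := norm_integral_le_integral_norm _
      _ ≤ ∫ u, bfun u ∂(μs n) := integral_mono hintdiff.norm hintb hptwise
      _ = (∫ u, 2 * D * Cf * Real.exp (-R) * Real.exp ((Cf + 1) * ‖u‖) ∂(μs n))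
          + ∫ u, (Mf * η + 2 * D * Mf * Set.indicator Kᶜ (fun _ => (1:ℝ)) u) ∂(μs n) := by
          rw [hbfundef]
          exact integral_add hint1 hint2
      _ ≤ 2 * D * Cf * Real.exp (-R) * C (Cf + 1)
          + (Mf * η + 2 * D * Mf * δr) := by
          apply add_le_add
          · calc ∫ u, 2 * D * Cf * Real.exp (-R) * Real.exp ((Cf + 1) * ‖u‖) ∂(μs n)
                = 2 * D * Cf * Real.exp (-R) * ∫ u, Real.exp ((Cf + 1) * ‖u‖) ∂(μs n) :=
                  integral_const_mul _ _
              _ ≤ 2 * D * Cf * Real.exp (-R) * C (Cf + 1) := by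
                  apply mul_le_mul_of_nonneg_left _ (by positivity)
                  exact hexple (μs n) hCb1.le (hmom (Cf + 1) hb1 n)
          · rw [integral_add (integrable_const _)
              (((integrable_const (1:ℝ)).indicator hKc).const_mul _)]
            simp only [integral_const, measure_univ, ENNReal.toReal_one, probReal_univ, smul_eq_mul, one_mul]
            apply add_le_add_right
            calc ∫ u, 2 * D * Mf * Set.indicator Kᶜ (fun _ => (1:ℝ)) u ∂(μs n)
                = 2 * D * Mf * ∫ u, Set.indicator Kᶜ (fun _ => (1:ℝ)) u ∂(μs n) :=
                  integral_const_mul _ _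
              _ ≤ 2 * D * Mf * δr := by
                  apply mul_le_mul_of_nonneg_left _ (by positivity)
                  rw [integral_indicator_const (1:ℝ) hKc, smul_eq_mul, mul_one]
                  exact ENNReal.toReal_le_of_le_ofReal hδr0.le (hKn n)
      _ ≤ ε / 2 := by
          have e1 : 2 * D * Cf * Real.exp (-R) * C (Cf + 1) ≤ 2 * (ε / 16) := by
            linarith only [hRtail]
          have e2 : Mf * η ≤ ε / 16 := by
            have h3 : (Mf + 1) * η = ε / 16 := by
              rw [hηdef]; field_simp
            linarith only [h3, hη0.le]
          have e3 : 2 * D * Mf * δr ≤ 2 * (ε / 32) := by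
            have h3 : (D * Mf + 1) * δr = ε / 32 := by
              rw [hδrdef]; field_simp
            linarith only [h3, hδr0.le]
          linarith only [e1, e2, e3, hε.le]
  -- PART B
  set hcut : E → G := fun u => (χ u * Ξ u) • f u with hcutdef
  have hcutcont : Continuous hcut := (hχcont.mul hΞcont).smul hf
  have hcutbd : ∀ u, ‖hcut u‖ ≤ D * Mf := by
    intro u
    by_cases hχz : χ u = 0
    · rw [hcutdef]
      simp only [hχz, zero_mul, zero_smul, norm_zero]
      positivity
    · have hun : ‖u‖ ≤ R + 1 := hχsupp u hχz
      rw [hcutdef]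
      rw [hnorm_smul _ _ (mul_nonneg (hχ01 u).1 (hΞpos u).le)]
      have hstep : χ u * Ξ u ≤ 1 * D :=
        mul_le_mul (hχ01 u).2 (hΞbd u) (hΞpos u).le zero_le_one
      have : χ u * Ξ u * ‖f u‖ ≤ 1 * D * Mf :=
        mul_le_mul hstep (hfMf u hun) (norm_nonneg _) (by positivity)
      linarith
  have hBtend : Tendsto (fun n => ∫ u, hcut u ∂(μs n)) atTop (nhds (∫ u, hcut u ∂μ)) :=
    hwv hcut hcutcont (D * Mf) hcutbd
  have hdiffcut : ∀ (ν : Measure E) [IsProbabilityMeasure ν],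
      (∫⁻ u, ENNReal.ofReal (Real.exp ((Cf + 1) * ‖u‖)) ∂ν ≤ ENNReal.ofReal (C (Cf + 1))) →
      Integrable (fun u => Ξ u • f u) ν →
      ‖(∫ u, Ξ u • f u ∂ν) - ∫ u, hcut u ∂ν‖ ≤ D * Cf * Real.exp (-R) * C (Cf + 1) := by
    intro ν _ hν hintν
    have hintcut : Integrable hcut ν :=
      ⟨hcutcont.aestronglyMeasurable, HasFiniteIntegral.of_bounded (ae_of_all _ hcutbd)⟩
    have hbd : ∀ u, ‖Ξ u • f u - hcut u‖
        ≤ D * Cf * Real.exp (-R) * Real.exp ((Cf + 1) * ‖u‖) := by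
      intro u
      have heq : Ξ u • f u - hcut u = ((1 - χ u) * Ξ u) • f u := by
        rw [hcutdef, ← sub_smul]
        congr 1
        ring
      rw [heq, hnorm_smul _ _ (mul_nonneg (by linarith [(hχ01 u).2]) (hΞpos u).le)]
      calc (1 - χ u) * Ξ u * ‖f u‖ ≤ (1 - χ u) * (D * (Cf * Real.exp (Cf * ‖u‖))) := by
            rw [mul_assoc]
            apply mul_le_mul_of_nonneg_left _ (by linarith [(hχ01 u).2])
            exact mul_le_mul (hΞbd u) (hfb u) (norm_nonneg _) hD0.le
        _ = D * Cf * ((1 - χ u) * Real.exp (Cf * ‖u‖)) := by ring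
        _ ≤ D * Cf * (Real.exp (-R) * Real.exp ((Cf + 1) * ‖u‖)) :=
            mul_le_mul_of_nonneg_left (htail u) hDCf
        _ = D * Cf * Real.exp (-R) * Real.exp ((Cf + 1) * ‖u‖) := by ring
    have hintbd : Integrable (fun u => D * Cf * Real.exp (-R)
        * Real.exp ((Cf + 1) * ‖u‖)) ν := by
      apply hintexpR ν (c := D * Cf * Real.exp (-R)) (by positivity) hν
      · exact (continuous_const.mul (Real.continuous_exp.comp
          (continuous_const.mul continuous_norm))).aestronglyMeasurable
      · intro u
        rw [Real.norm_eq_abs, abs_of_nonneg (by positivity)]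
    calc ‖(∫ u, Ξ u • f u ∂ν) - ∫ u, hcut u ∂ν‖
        = ‖∫ u, (Ξ u • f u - hcut u) ∂ν‖ := by rw [integral_sub hintν hintcut]
      _ ≤ ∫ u, ‖Ξ u • f u - hcut u‖ ∂ν := norm_integral_le_integral_norm _
      _ ≤ ∫ u, D * Cf * Real.exp (-R) * Real.exp ((Cf + 1) * ‖u‖) ∂ν :=
          integral_mono (hintν.sub hintcut).norm hintbd hbd
      _ = D * Cf * Real.exp (-R) * ∫ u, Real.exp ((Cf + 1) * ‖u‖) ∂ν :=
          integral_const_mul _ _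
      _ ≤ D * Cf * Real.exp (-R) * C (Cf + 1) := by
          apply mul_le_mul_of_nonneg_left _ (by positivity)
          exact hexple ν hCb1.le hν
  have partB : ∀ᶠ n in atTop,
      dist (∫ u, Ξ u • f u ∂(μs n)) (∫ u, Ξ u • f u ∂μ) < ε / 2 := by
    filter_upwards [Metric.tendsto_nhds.1 hBtend (ε / 8) (by positivity)] with n hn
    have h1 := hdiffcut (μs n) (hmom (Cf + 1) hb1 n) (hintf n)
    have h2 := hdiffcut μ (hmom' (Cf + 1) hb1) hintfμ
    calc dist (∫ u, Ξ u • f u ∂(μs n)) (∫ u, Ξ u • f u ∂μ)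
        ≤ dist (∫ u, Ξ u • f u ∂(μs n)) (∫ u, hcut u ∂(μs n))
          + dist (∫ u, hcut u ∂(μs n)) (∫ u, hcut u ∂μ)
          + dist (∫ u, hcut u ∂μ) (∫ u, Ξ u • f u ∂μ) := dist_triangle4 _ _ _ _
      _ < (D * Cf * Real.exp (-R) * C (Cf + 1)) + ε / 8
          + (D * Cf * Real.exp (-R) * C (Cf + 1)) := by
          apply add_lt_add_of_lt_of_le
          apply add_lt_add_of_le_of_lt
          · rw [dist_eq_norm]; exact h1
          · exact hn
          · rw [dist_eq_norm, norm_sub_rev]; exact h2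
      _ ≤ ε / 16 + ε / 8 + ε / 16 := by
          linarith only [hRtail]
      _ < ε / 2 := by linarith only [hε]
  -- final assembly
  filter_upwards [partA.prod_inl atTop, partB.prod_inr atTop] with p h1 h2
  show dist (∫ u, Ξk p.1 u • f u ∂(μs p.2)) (∫ u, Ξ u • f u ∂μ) < ε
  calc dist (∫ u, Ξk p.1 u • f u ∂(μs p.2)) (∫ u, Ξ u • f u ∂μ)
      ≤ dist (∫ u, Ξk p.1 u • f u ∂(μs p.2)) (∫ u, Ξ u • f u ∂(μs p.2))
        + dist (∫ u, Ξ u • f u ∂(μs p.2)) (∫ u, Ξ u • f u ∂μ) := dist_triangle _ _ _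
    _ < ε / 2 + ε / 2 := by
        apply add_lt_add_of_le_of_lt
        · rw [dist_eq_norm]; exact h1 p.2
        · exact h2
    _ = ε := by ring

end

set_option maxHeartbeats 1600000 in

/-- Convergence of reconstructors: let `E, F, G` be real separable
Hilbert spaces, `(μs n)` and `μ` Borel probability measures on `E` uniformly
discretized with exponential weights, `Ak k → A` strongly with uniformly bounded
norms, `mk k → m` in `F`, `B` a continuous bilinear form on `F`, and
`g : E → G` continuous of at most exponential growth. With the Gaussian likelihood
factors `Ξ_k(u) = exp(−½‖Ak k u‖² + B (Ak k u) (mk k))` and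
`Ξ(u) = exp(−½‖A u‖² + B (A u) m)`, the ratios of Bochner integrals
`(∫ Ξ_k(u) • g u ∂μs n) / (∫ Ξ_k ∂μs n)` converge, as `k, n → ∞` jointly,
to `(∫ Ξ(u) • g u ∂μ) / (∫ Ξ ∂μ)` in `G`. -/
theorem statement2
    {E : Type*} [NormedAddCommGroup E] [InnerProductSpace ℝ E] [CompleteSpace E]
    [SecondCountableTopology E] [MeasurableSpace E] [BorelSpace E]
    {F : Type*} [NormedAddCommGroup F] [InnerProductSpace ℝ F] [CompleteSpace F]
    [SecondCountableTopology F]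
    {G : Type*} [NormedAddCommGroup G] [InnerProductSpace ℝ G] [CompleteSpace G]
    [SecondCountableTopology G]
    (μs : ℕ → Measure E) (μ : Measure E)
    [∀ n, IsProbabilityMeasure (μs n)] [IsProbabilityMeasure μ]
    (hweak : ∀ h : E → ℝ, Continuous h → (∃ M : ℝ, ∀ u : E, |h u| ≤ M) →
      Tendsto (fun n => ∫ u, h u ∂(μs n)) atTop (nhds (∫ u, h u ∂μ)))
    (C : ℝ → ℝ) (hC : ∀ b > 0, 0 < C b)
    (hmom : ∀ b > 0, ∀ n : ℕ,
      ∫⁻ u, ENNReal.ofReal (Real.exp (b * ‖u‖)) ∂(μs n) ≤ ENNReal.ofReal (C b))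
    (hmom' : ∀ b > 0,
      ∫⁻ u, ENNReal.ofReal (Real.exp (b * ‖u‖)) ∂μ ≤ ENNReal.ofReal (C b))
    (A : E →L[ℝ] F) (Ak : ℕ → E →L[ℝ] F)
    (hAbd : ∃ CA : ℝ, ∀ k, ‖Ak k‖ ≤ CA)
    (hAconv : ∀ u : E, Tendsto (fun k => ‖Ak k u - A u‖) atTop (nhds 0))
    (m : F) (mk : ℕ → F) (hm : Tendsto mk atTop (nhds m))
    (B : F →L[ℝ] F →L[ℝ] ℝ)
    (g : E → G) (hg : Continuous g) (Cg : ℝ) (hCg : 0 < Cg)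
    (hgbd : ∀ u : E, ‖g u‖ ≤ Cg * Real.exp (Cg * ‖u‖)) :
    Tendsto
      (fun p : ℕ × ℕ =>
        (∫ u, Real.exp (-(1/2) * ‖Ak p.1 u‖ ^ 2 + B (Ak p.1 u) (mk p.1)) ∂(μs p.2))⁻¹ •
          ∫ u, Real.exp (-(1/2) * ‖Ak p.1 u‖ ^ 2 + B (Ak p.1 u) (mk p.1)) • g u ∂(μs p.2))
      (atTop ×ˢ atTop)
      (nhds ((∫ u, Real.exp (-(1/2) * ‖A u‖ ^ 2 + B (A u) m) ∂μ)⁻¹ •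
        ∫ u, Real.exp (-(1/2) * ‖A u‖ ^ 2 + B (A u) m) • g u ∂μ)) := by
  have htight : ∀ δ : ℝ≥0∞, 0 < δ →
      ∃ K : Set E, IsCompact K ∧ (∀ n, μs n Kᶜ ≤ δ) ∧ μ Kᶜ ≤ δ :=
    fun δ hδ => aux_tight μs μ hweak hδ
  have hwvG : ∀ (h : E → G), Continuous h → ∀ M : ℝ, (∀ u, ‖h u‖ ≤ M) →
      Tendsto (fun n => ∫ u, h u ∂(μs n)) atTop (nhds (∫ u, h u ∂μ)) :=
    fun h hh M hM => aux_weakvec μs μ hweak htight h hh M hM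
  have hwvR : ∀ (h : E → ℝ), Continuous h → ∀ M : ℝ, (∀ u, ‖h u‖ ≤ M) →
      Tendsto (fun n => ∫ u, h u ∂(μs n)) atTop (nhds (∫ u, h u ∂μ)) :=
    fun h hh M hM => aux_weakvec μs μ hweak htight h hh M hM
  have hintexpG : ∀ (ν : Measure E) [IsProbabilityMeasure ν], ∀ {b c CB : ℝ}, 0 ≤ c →
      (∫⁻ u, ENNReal.ofReal (Real.exp (b * ‖u‖)) ∂ν ≤ ENNReal.ofReal CB) →
      ∀ {f : E → G}, AEStronglyMeasurable f ν → (∀ u, ‖f u‖ ≤ c * Real.exp (b * ‖u‖)) →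
        Integrable f ν := by
    intro ν hν b c CB hc hm f hf hfb
    exact aux_integrable ν hc hm hf hfb
  have hintexpR : ∀ (ν : Measure E) [IsProbabilityMeasure ν], ∀ {b c CB : ℝ}, 0 ≤ c →
      (∫⁻ u, ENNReal.ofReal (Real.exp (b * ‖u‖)) ∂ν ≤ ENNReal.ofReal CB) →
      ∀ {f : E → ℝ}, AEStronglyMeasurable f ν → (∀ u, ‖f u‖ ≤ c * Real.exp (b * ‖u‖)) →
        Integrable f ν := by
    intro ν hν b c CB hc hm f hf hfb
    exact aux_integrable ν hc hm hf hfb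
  have hexple : ∀ (ν : Measure E) [IsProbabilityMeasure ν], ∀ {b CB : ℝ}, 0 ≤ CB →
      (∫⁻ u, ENNReal.ofReal (Real.exp (b * ‖u‖)) ∂ν ≤ ENNReal.ofReal CB) →
      ∫ u, Real.exp (b * ‖u‖) ∂ν ≤ CB := by
    intro ν hν b CB hCB hm
    exact aux_int_exp_le ν hCB hm
  have hunif : ∀ (A : E →L[ℝ] F) (Ak : ℕ → E →L[ℝ] F) {CA : ℝ}, 0 ≤ CA →
      (∀ k, ‖Ak k‖ ≤ CA) →
      (∀ u : E, Tendsto (fun k => ‖Ak k u - A u‖) atTop (nhds 0)) →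
      ∀ {K : Set E}, IsCompact K → ∀ {ε : ℝ}, 0 < ε →
      ∀ᶠ k in atTop, ∀ u ∈ K, ‖Ak k u - A u‖ ≤ ε := by
    intro A' Ak' CA hCA hbd hconv K hK ε hε
    exact aux_unif A' Ak' hCA hbd hconv hK hε
  -- numerator convergence
  have hnum := aux_main μs μ hweak htight hwvG hintexpG hintexpR hexple hunif
    C hC hmom hmom' A Ak hAbd hAconv m mk hm B g hg Cg hCg hgbd
  -- denominator convergence
  have hden' := aux_main μs μ hweak htight hwvR hintexpR hintexpR hexple hunif
    C hC hmom hmom' A Ak hAbd hAconv m mk hm B (fun _ => (1:ℝ)) continuous_const 1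
    one_pos (fun u => by
      rw [norm_one, one_mul]
      exact Real.one_le_exp (by positivity))
  have hden : Tendsto
      (fun p : ℕ × ℕ =>
        ∫ u, Real.exp (-(1/2) * ‖Ak p.1 u‖ ^ 2 + B (Ak p.1 u) (mk p.1)) ∂(μs p.2))
      (atTop ×ˢ atTop)
      (nhds (∫ u, Real.exp (-(1/2) * ‖A u‖ ^ 2 + B (A u) m) ∂μ)) := by
    simpa only [smul_eq_mul, mul_one] using hden'
  -- positivity of the limiting denominator
  have hΞbd : ∀ u : E, Real.exp (-(1/2) * ‖A u‖ ^ 2 + B (A u) m)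
      ≤ Real.exp ((‖B‖ * ‖m‖) ^ 2 / 2) := by
    intro u
    apply Real.exp_le_exp.2
    have hB : B (A u) m ≤ ‖B‖ * ‖m‖ * ‖A u‖ := by
      calc B (A u) m ≤ |B (A u) m| := le_abs_self _
        _ = ‖B (A u) m‖ := (Real.norm_eq_abs _).symm
        _ ≤ ‖B (A u)‖ * ‖m‖ := (B (A u)).le_opNorm m
        _ ≤ ‖B‖ * ‖A u‖ * ‖m‖ :=
            mul_le_mul_of_nonneg_right (B.le_opNorm (A u)) (norm_nonneg m)
        _ = ‖B‖ * ‖m‖ * ‖A u‖ := by ring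
    nlinarith [sq_nonneg (‖A u‖ - ‖B‖ * ‖m‖), norm_nonneg (A u)]
  have hΞcont : Continuous (fun u : E => Real.exp (-(1/2) * ‖A u‖ ^ 2 + B (A u) m)) := by
    apply Real.continuous_exp.comp
    have h2 : Continuous fun u : E => B (A u) m := ((B.flip m).comp A).continuous
    exact (continuous_const.mul (A.continuous.norm.pow 2)).add h2
  have hΞint : Integrable (fun u : E => Real.exp (-(1/2) * ‖A u‖ ^ 2 + B (A u) m)) μ :=
    ⟨hΞcont.aestronglyMeasurable, HasFiniteIntegral.of_bounded (ae_of_all _ fun u => by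
      rw [Real.norm_eq_abs, abs_of_pos (Real.exp_pos _)]
      exact hΞbd u)⟩
  have hpos : 0 < ∫ u, Real.exp (-(1/2) * ‖A u‖ ^ 2 + B (A u) m) ∂μ := by
    rw [integral_pos_iff_support_of_nonneg (fun u => (Real.exp_pos _).le) hΞint]
    have hsupp : Function.support (fun u : E => Real.exp (-(1/2) * ‖A u‖ ^ 2 + B (A u) m))
        = Set.univ := Set.eq_univ_of_forall fun u => (Real.exp_pos _).ne'
    rw [hsupp, measure_univ]
    exact zero_lt_one
  exact (hden.inv₀ hpos.ne').smul hnum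
end

section
/- Let E, F be real separable Hilbert spaces. Let (λ_n)_{n∈ℕ} and λ be Borel probability measures on E that are uniformly discretized with exponential weights. Let A and A_k (k ∈ ℕ) be bounded linear operators from E to F with sup_k ‖A_k‖ < ∞ and ‖A_k u − A u‖_F → 0 for every u ∈ E, and let m_k → m in F. Let B : F × F → ℝ be a continuous bilinear form, and define Ξ_k(u) = exp(−½‖A_k u‖²_F + B(A_k u, m_k)) and Ξ(u) = exp(−½‖A u‖²_F + B(A u, m)). Then for every bounded continuous function h : E → ℝ, as k and n tend to infinity jointly, (∫_E h(u) Ξ_k(u) dλ_n(u)) / (∫_E Ξ_k(u) dλ_n(u)) → (∫_E h(u) Ξ(u) dλ(u)) / (∫_E Ξ(u) dλ(u)); that is, the posterior probability measures with density Ξ_k / ∫ Ξ_k dλ_n with respect to λ_n converge weakly to the posterior probability measure with density Ξ / ∫ Ξ dλ with respect to λ. -/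
open MeasureTheory Filter Real
set_option maxHeartbeats 1000000

lemma abs_exp_sub_exp_le {x y c : ℝ} (hx : x ≤ c) (hy : y ≤ c) :
    |Real.exp x - Real.exp y| ≤ Real.exp c * |x - y| := by
  wlog hxy : y ≤ x generalizing x y
  · rw [abs_sub_comm, abs_sub_comm x y]; exact this hy hx (le_of_not_ge hxy)
  have h1 : Real.exp y ≤ Real.exp x := Real.exp_le_exp.mpr hxy
  rw [abs_of_nonneg (by linarith), abs_of_nonneg (by linarith)]
  have h2 : Real.exp x - Real.exp y = Real.exp x * (1 - Real.exp (y - x)) := by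
    rw [mul_sub, mul_one, ← Real.exp_add]; ring_nf
  have h3 := Real.add_one_le_exp (y - x)
  have h4 : Real.exp x ≤ Real.exp c := Real.exp_le_exp.mpr hx
  nlinarith [Real.exp_pos x]

lemma abs_min_sub_min_le {a b c : ℝ} : |min a c - min b c| ≤ |a - b| := by
  rw [abs_sub_le_iff]
  constructor
  · have h1 : min a c ≤ min (b + |a - b|) (c + |a - b|) :=
      min_le_min (by have := le_abs_self (a - b); linarith)
        (by have := abs_nonneg (a - b); linarith)
    rw [min_add_add_right] at h1; linarith
  · have h1 : min b c ≤ min (a + |a - b|) (c + |a - b|) :=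
      min_le_min (by have := neg_abs_le (a - b); linarith)
        (by have := abs_nonneg (a - b); linarith)
    rw [min_add_add_right] at h1; linarith

lemma integrable_and_integral_le {E : Type*} [MeasurableSpace E]
    (ν : Measure E) {f : E → ℝ}
    (hf : AEStronglyMeasurable f ν) (hnn : ∀ u, 0 ≤ f u) {c : ℝ} (hc : 0 ≤ c)
    (hb : ∫⁻ u, ENNReal.ofReal (f u) ∂ν ≤ ENNReal.ofReal c) :
    Integrable f ν ∧ ∫ u, f u ∂ν ≤ c := by
  have hfi : Integrable f ν := by
    refine ⟨hf, ?_⟩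
    rw [hasFiniteIntegral_iff_ofReal (ae_of_all _ hnn)]
    exact lt_of_le_of_lt hb ENNReal.ofReal_lt_top
  refine ⟨hfi, ?_⟩
  rw [integral_eq_lintegral_of_nonneg_ae (ae_of_all _ hnn) hf]
  calc (∫⁻ u, ENNReal.ofReal (f u) ∂ν).toReal ≤ (ENNReal.ofReal c).toReal :=
        ENNReal.toReal_mono (by simp) hb
    _ = c := ENNReal.toReal_ofReal hc

/-- Weak convergence of the posterior distributions: in the setting
of uniformly discretized priors `(μs n), μ` with exponential weights, strongly
convergent uniformly bounded operators `Ak k → A`, measurements `mk k → m`, and the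
Gaussian likelihood factors `Ξ_k(u) = exp(−½‖Ak k u‖² + B (Ak k u) (mk k))`,
`Ξ(u) = exp(−½‖A u‖² + B (A u) m)`, for every bounded continuous `h : E → ℝ` the
posterior expectations `(∫ h Ξ_k dμs n)/(∫ Ξ_k dμs n)` converge, as `k, n → ∞`
jointly, to `(∫ h Ξ dμ)/(∫ Ξ dμ)`. -/
theorem statement3
    {E : Type*} [NormedAddCommGroup E] [InnerProductSpace ℝ E] [CompleteSpace E]
    [SecondCountableTopology E] [MeasurableSpace E] [BorelSpace E]
    {F : Type*} [NormedAddCommGroup F] [InnerProductSpace ℝ F] [CompleteSpace F]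
    [SecondCountableTopology F]
    (μs : ℕ → Measure E) (μ : Measure E)
    [∀ n, IsProbabilityMeasure (μs n)] [IsProbabilityMeasure μ]
    (hweak : ∀ h : E → ℝ, Continuous h → (∃ M : ℝ, ∀ u : E, |h u| ≤ M) →
      Tendsto (fun n => ∫ u, h u ∂(μs n)) atTop (nhds (∫ u, h u ∂μ)))
    (C : ℝ → ℝ) (hC : ∀ b > 0, 0 < C b)
    (hmom : ∀ b > 0, ∀ n : ℕ,
      ∫⁻ u, ENNReal.ofReal (Real.exp (b * ‖u‖)) ∂(μs n) ≤ ENNReal.ofReal (C b))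
    (hmom' : ∀ b > 0,
      ∫⁻ u, ENNReal.ofReal (Real.exp (b * ‖u‖)) ∂μ ≤ ENNReal.ofReal (C b))
    (A : E →L[ℝ] F) (Ak : ℕ → E →L[ℝ] F)
    (hAbd : ∃ CA : ℝ, ∀ k, ‖Ak k‖ ≤ CA)
    (hAconv : ∀ u : E, Tendsto (fun k => ‖Ak k u - A u‖) atTop (nhds 0))
    (m : F) (mk : ℕ → F) (hm : Tendsto mk atTop (nhds m))
    (B : F →L[ℝ] F →L[ℝ] ℝ) :
    ∀ h : E → ℝ, Continuous h → (∃ M : ℝ, ∀ u : E, |h u| ≤ M) →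
      Tendsto
        (fun p : ℕ × ℕ =>
          (∫ u, h u * Real.exp (-(1/2) * ‖Ak p.1 u‖ ^ 2 + B (Ak p.1 u) (mk p.1)) ∂(μs p.2)) /
            ∫ u, Real.exp (-(1/2) * ‖Ak p.1 u‖ ^ 2 + B (Ak p.1 u) (mk p.1)) ∂(μs p.2))
        (atTop ×ˢ atTop)
        (nhds ((∫ u, h u * Real.exp (-(1/2) * ‖A u‖ ^ 2 + B (A u) m) ∂μ) /
          ∫ u, Real.exp (-(1/2) * ‖A u‖ ^ 2 + B (A u) m) ∂μ)) := by
  intro h hcont hhbd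
  obtain ⟨M, hM⟩ := hhbd
  have hM0 : 0 ≤ M := le_trans (abs_nonneg _) (hM 0)
  obtain ⟨CA, hCA⟩ := hAbd
  have hCA0 : 0 ≤ CA := le_trans (norm_nonneg _) (hCA 0)
  have hAk : ∀ k u, ‖Ak k u‖ ≤ CA * ‖u‖ := fun k u =>
    ((Ak k).le_opNorm u).trans (mul_le_mul_of_nonneg_right (hCA k) (norm_nonneg u))
  have hA : ∀ u, ‖A u‖ ≤ CA * ‖u‖ := by
    intro u
    have h1 : Tendsto (fun k => ‖Ak k u - A u‖ + CA * ‖u‖) atTop (nhds (0 + CA * ‖u‖)) :=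
      (hAconv u).add tendsto_const_nhds
    rw [zero_add] at h1
    refine ge_of_tendsto h1 (Eventually.of_forall fun k => ?_)
    calc ‖A u‖ = ‖(A u - Ak k u) + Ak k u‖ := by rw [sub_add_cancel]
      _ ≤ ‖A u - Ak k u‖ + ‖Ak k u‖ := norm_add_le _ _
      _ ≤ ‖Ak k u - A u‖ + CA * ‖u‖ := by rw [norm_sub_rev]; exact add_le_add_right (hAk k u) _
  -- bound on measurements
  have hmkbdd : BddAbove (Set.range fun k => ‖mk k‖) := (hm.norm).bddAbove_range
  obtain ⟨Mm0, hMm0⟩ := hmkbdd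
  set Mm := max Mm0 ‖m‖ with hMmdef
  have hmk : ∀ k, ‖mk k‖ ≤ Mm := fun k => le_max_of_le_left (hMm0 (Set.mem_range_self k))
  have hmB : ‖m‖ ≤ Mm := le_max_right _ _
  have hMm : 0 ≤ Mm := le_trans (norm_nonneg m) hmB
  set b := ‖B‖ * CA * Mm with hbdef
  have hb0 : 0 ≤ b := by positivity
  set β := b + 1 with hβdef
  have hβ : 0 < β := by linarith
  -- abbreviation for the likelihood factor
  set Ξ' : (E →L[ℝ] F) → F → E → ℝ :=
    fun T w u => Real.exp (-(1/2) * ‖T u‖ ^ 2 + B (T u) w) with hΞ'def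
  -- pointwise exponential bound
  have hψle : ∀ (T : E →L[ℝ] F) (w : F), (∀ z, ‖T z‖ ≤ CA * ‖z‖) → ‖w‖ ≤ Mm → ∀ u : E,
      -(1/2) * ‖T u‖ ^ 2 + B (T u) w ≤ β * ‖u‖ := by
    intro T w hT hw u
    have h1 : |B (T u) w| ≤ b * ‖u‖ := by
      have h2 : ‖B (T u) w‖ ≤ ‖B‖ * ‖T u‖ * ‖w‖ := B.le_opNorm₂ _ _
      rw [Real.norm_eq_abs] at h2
      refine h2.trans ?_
      rw [hbdef]
      have h3 : ‖B‖ * ‖T u‖ * ‖w‖ ≤ ‖B‖ * (CA * ‖u‖) * Mm := by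
        have s1 : ‖B‖ * ‖T u‖ ≤ ‖B‖ * (CA * ‖u‖) := mul_le_mul_of_nonneg_left (hT u) (norm_nonneg B)
        exact mul_le_mul s1 hw (norm_nonneg w) (by positivity)
      linarith [h3]
    have h4 : (0:ℝ) ≤ ‖T u‖ ^ 2 := sq_nonneg _
    have h5 := le_abs_self (B (T u) w)
    have h6 : b * ‖u‖ ≤ β * ‖u‖ :=
      mul_le_mul_of_nonneg_right (by rw [hβdef]; linarith) (norm_nonneg u)
    nlinarith
  have hΞle : ∀ (T : E →L[ℝ] F) (w : F), (∀ z, ‖T z‖ ≤ CA * ‖z‖) → ‖w‖ ≤ Mm → ∀ u : E,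
      Ξ' T w u ≤ Real.exp (β * ‖u‖) := fun T w hT hw u =>
    Real.exp_le_exp.mpr (hψle T w hT hw u)
  have hΞpos : ∀ (T : E →L[ℝ] F) (w : F) (u : E), 0 < Ξ' T w u := fun T w u => Real.exp_pos _
  have hΞcont : ∀ (T : E →L[ℝ] F) (w : F), Continuous (Ξ' T w) := by
    intro T w
    rw [hΞ'def]
    fun_prop
  -- integrability infrastructure
  have hP : ∀ (ν : Measure E), IsProbabilityMeasure ν →
      (∀ c, 0 < c → ∫⁻ u, ENNReal.ofReal (Real.exp (c * ‖u‖)) ∂ν ≤ ENNReal.ofReal (C c)) →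
      ∀ c, 0 < c → Integrable (fun u => Real.exp (c * ‖u‖)) ν ∧
        ∫ u, Real.exp (c * ‖u‖) ∂ν ≤ C c := by
    intro ν hprob hmo c hc
    exact integrable_and_integral_le ν
      (Continuous.aestronglyMeasurable (by fun_prop)) (fun u => (Real.exp_pos _).le)
      (hC c hc).le (hmo c hc)
  have hPn : ∀ n, ∀ c, 0 < c → Integrable (fun u => Real.exp (c * ‖u‖)) (μs n) ∧
      ∫ u, Real.exp (c * ‖u‖) ∂(μs n) ≤ C c :=
    fun n => hP (μs n) inferInstance (fun c hc => hmom c hc n)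
  have hPμ : ∀ c, 0 < c → Integrable (fun u => Real.exp (c * ‖u‖)) μ ∧
      ∫ u, Real.exp (c * ‖u‖) ∂μ ≤ C c :=
    hP μ inferInstance (fun c hc => hmom' c hc)
  have hIntDom : ∀ (ν : Measure E), (∀ c, 0 < c → Integrable (fun u => Real.exp (c * ‖u‖)) ν) →
      ∀ (f : E → ℝ), Continuous f → ∀ (c : ℝ), 0 < c → ∀ (Mf : ℝ),
      (∀ u, |f u| ≤ Mf * Real.exp (c * ‖u‖)) → Integrable f ν := by
    intro ν hνint f hfc c hc Mf hfb
    refine Integrable.mono' ((hνint c hc).const_mul Mf) hfc.aestronglyMeasurable ?_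
    exact ae_of_all _ fun u => by rw [Real.norm_eq_abs]; exact hfb u
  have hC2 : 0 < C (2*β) := hC _ (by linarith)
  have htailidx : ∀ a : ℝ, ∀ ε : ℝ, 0 < ε → ∃ j : ℕ, a * Real.exp (-(β * j)) * C (2*β) < ε := by
    intro a ε hε
    have h1 : Tendsto (fun j : ℕ => Real.exp (-(β * j))) atTop (nhds 0) := by
      have h2 : ∀ j : ℕ, Real.exp (-(β * j)) = Real.exp (-β) ^ j := by
        intro j
        rw [show -(β * (j:ℝ)) = (j:ℝ) * (-β) by ring, Real.exp_nat_mul]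
      simp only [h2]
      exact tendsto_pow_atTop_nhds_zero_of_lt_one (Real.exp_pos _).le
        (Real.exp_lt_one_iff.mpr (by linarith))
    have h3 : Tendsto (fun j : ℕ => a * Real.exp (-(β * j)) * C (2*β)) atTop (nhds 0) := by
      have h4 := (h1.const_mul a).mul_const (C (2*β))
      simpa using h4
    exact (h3.eventually (gt_mem_nhds hε)).exists
  -- main1 : weak convergence extends to continuous functions with exponential growth
  have main1 : ∀ f : E → ℝ, Continuous f → ∀ Mf : ℝ, 0 ≤ Mf →
      (∀ u, |f u| ≤ Mf * Real.exp (β * ‖u‖)) →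
      Tendsto (fun n => ∫ u, f u ∂(μs n)) atTop (nhds (∫ u, f u ∂μ)) := by
    intro f hfc Mf hMf0 hfb
    rw [Metric.tendsto_atTop]
    intro ε hε
    obtain ⟨j, hj⟩ := htailidx Mf (ε/3) (by linarith)
    set χ : E → ℝ := fun u => max 0 (min 1 ((j:ℝ) + 1 - ‖u‖)) with hχdef
    have hχc : Continuous χ := by rw [hχdef]; fun_prop
    have hχ0 : ∀ u, 0 ≤ χ u := fun u => le_max_left _ _
    have hχ1 : ∀ u, χ u ≤ 1 := by
      intro u
      rw [hχdef]
      exact max_le zero_le_one (min_le_left _ _)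
    have hχeq1 : ∀ u : E, ‖u‖ ≤ j → χ u = 1 := by
      intro u hu
      rw [hχdef]
      have h5 : min 1 ((j:ℝ)+1-‖u‖) = 1 := min_eq_left (by linarith)
      simp only [h5]
      exact max_eq_right zero_le_one
    have hχeq0 : ∀ u : E, (j:ℝ)+1 ≤ ‖u‖ → χ u = 0 := by
      intro u hu
      rw [hχdef]
      exact max_eq_left (le_trans (min_le_right _ _) (by linarith))
    -- pointwise tail bound
    have hptw : ∀ u : E, |f u - f u * χ u| ≤ Mf * Real.exp (-(β*j)) * Real.exp (2*β*‖u‖) := by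
      intro u
      have hrw : f u - f u * χ u = f u * (1 - χ u) := by ring
      rw [hrw]
      rcases le_or_gt ‖u‖ j with hu | hu
      · rw [hχeq1 u hu]
        simp only [sub_self, mul_zero, abs_zero]
        positivity
      · rw [abs_mul]
        have h1 : |1 - χ u| ≤ 1 := by
          rw [abs_le]
          constructor
          · linarith [hχ1 u]
          · linarith [hχ0 u]
        calc |f u| * |1 - χ u| ≤ (Mf * Real.exp (β*‖u‖)) * 1 :=
              mul_le_mul (hfb u) h1 (abs_nonneg _) (by positivity)
          _ ≤ Mf * Real.exp (-(β*j)) * Real.exp (2*β*‖u‖) := by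
              rw [mul_one]
              have h6 : Real.exp (β*‖u‖) ≤ Real.exp (-(β*j)) * Real.exp (2*β*‖u‖) := by
                rw [← Real.exp_add]
                apply Real.exp_le_exp.mpr
                nlinarith [norm_nonneg u]
              calc Mf * Real.exp (β*‖u‖) ≤ Mf * (Real.exp (-(β*j)) * Real.exp (2*β*‖u‖)) :=
                    mul_le_mul_of_nonneg_left h6 hMf0
                _ = Mf * Real.exp (-(β*j)) * Real.exp (2*β*‖u‖) := by ring
    -- bound on the truncated function
    have hfχbd : ∀ u, |f u * χ u| ≤ Mf * Real.exp (β*((j:ℝ)+1)) := by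
      intro u
      rcases le_or_gt ‖u‖ ((j:ℝ)+1) with hu | hu
      · rw [abs_mul]
        calc |f u| * |χ u| ≤ (Mf * Real.exp (β*‖u‖)) * 1 :=
              mul_le_mul (hfb u) (by rw [abs_of_nonneg (hχ0 u)]; exact hχ1 u)
                (abs_nonneg _) (by positivity)
          _ = Mf * Real.exp (β*‖u‖) := mul_one _
          _ ≤ Mf * Real.exp (β*((j:ℝ)+1)) := by
              apply mul_le_mul_of_nonneg_left _ hMf0
              exact Real.exp_le_exp.mpr (mul_le_mul_of_nonneg_left hu hβ.le)
      · rw [hχeq0 u hu.le]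
        simp only [mul_zero, abs_zero]
        positivity
    -- integral tail bound
    have htail : ∀ ν : Measure E, IsProbabilityMeasure ν →
        (∀ c, 0 < c → Integrable (fun u => Real.exp (c * ‖u‖)) ν ∧
          ∫ u, Real.exp (c * ‖u‖) ∂ν ≤ C c) →
        |∫ u, f u ∂ν - ∫ u, f u * χ u ∂ν| ≤ Mf * Real.exp (-(β*j)) * C (2*β) := by
      intro ν hνp hν
      have hfint : Integrable f ν := hIntDom ν (fun c hc => (hν c hc).1) f hfc β hβ Mf hfb
      have hfχint : Integrable (fun u => f u * χ u) ν :=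
        hIntDom ν (fun c hc => (hν c hc).1) _ (hfc.mul hχc) β hβ Mf
          (fun u => by
            rw [abs_mul]
            calc |f u| * |χ u| ≤ (Mf * Real.exp (β*‖u‖)) * 1 :=
                  mul_le_mul (hfb u) (by rw [abs_of_nonneg (hχ0 u)]; exact hχ1 u)
                    (abs_nonneg _) (by positivity)
              _ = Mf * Real.exp (β*‖u‖) := mul_one _)
      rw [← integral_sub hfint hfχint]
      have h2 : |∫ u, (f u - f u * χ u) ∂ν| ≤ ∫ u, |f u - f u * χ u| ∂ν := by
        simpa [Real.norm_eq_abs] using norm_integral_le_integral_norm (fun u => f u - f u * χ u) (μ := ν)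
      refine h2.trans ?_
      have hexpint := (hν (2*β) (by linarith)).1
      have h3 : ∫ u, |f u - f u * χ u| ∂ν
          ≤ ∫ u, Mf * Real.exp (-(β*j)) * Real.exp (2*β*‖u‖) ∂ν := by
        apply integral_mono (hfint.sub hfχint).abs (hexpint.const_mul _) hptw
      refine h3.trans ?_
      rw [integral_const_mul]
      exact mul_le_mul_of_nonneg_left (hν (2*β) (by linarith)).2 (by positivity)
    -- weak convergence of the truncated function
    obtain ⟨N, hN⟩ := (Metric.tendsto_atTop.mp (hweak (fun u => f u * χ u) (hfc.mul hχc)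
      ⟨Mf * Real.exp (β*((j:ℝ)+1)), hfχbd⟩)) (ε/3) (by linarith)
    refine ⟨N, fun n hn => ?_⟩
    have t1 := htail (μs n) inferInstance (hPn n)
    have t2 := hN n hn
    rw [Real.dist_eq] at t2
    have t3 := htail μ inferInstance hPμ
    rw [abs_sub_comm] at t3
    rw [Real.dist_eq]
    have d1 := abs_sub_le (∫ u, f u ∂(μs n)) (∫ u, f u * χ u ∂(μs n)) (∫ u, f u ∂μ)
    have d2 := abs_sub_le (∫ u, f u * χ u ∂(μs n)) (∫ u, f u * χ u ∂μ) (∫ u, f u ∂μ)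
    linarith
  -- pointwise convergence of the likelihood factors
  have hΞtend : ∀ u : E, Tendsto (fun k => Ξ' (Ak k) (mk k) u) atTop (nhds (Ξ' A m u)) := by
    intro u
    have hAu : Tendsto (fun k => Ak k u) atTop (nhds (A u)) := by
      rw [tendsto_iff_norm_sub_tendsto_zero]
      exact hAconv u
    have hc2 : Continuous (fun q : F × F => B q.1 q.2) :=
      isBoundedBilinearMap_apply.continuous.comp
        (Continuous.prodMk (B.continuous.comp continuous_fst) continuous_snd)
    have hBt : Tendsto (fun k => B (Ak k u) (mk k)) atTop (nhds (B (A u) m)) :=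
      (hc2.tendsto (A u, m)).comp (hAu.prodMk_nhds hm)
    have hn2 : Tendsto (fun k => -(1/2) * ‖Ak k u‖ ^ 2) atTop (nhds (-(1/2) * ‖A u‖ ^ 2)) :=
      ((hAu.norm).pow 2).const_mul _
    have hsum := hn2.add hBt
    rw [hΞ'def]
    exact (Real.continuous_exp.tendsto _).comp hsum
  have hΔ0 : ∀ u : E, Tendsto (fun k => |Ξ' (Ak k) (mk k) u - Ξ' A m u|) atTop (nhds 0) := by
    intro u
    have h1 := ((hΞtend u).sub (tendsto_const_nhds (x := Ξ' A m u))).abs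
    simpa using h1
  -- Lipschitz estimate on balls for the exponent
  have hψlip : ∀ (T : E →L[ℝ] F) (w : F), (∀ z, ‖T z‖ ≤ CA * ‖z‖) → ‖w‖ ≤ Mm →
      ∀ (r : ℝ) (u v : E), ‖u‖ ≤ r → ‖v‖ ≤ r →
      |(-(1/2) * ‖T u‖ ^ 2 + B (T u) w) - (-(1/2) * ‖T v‖ ^ 2 + B (T v) w)|
        ≤ (CA^2 * r + b) * ‖u - v‖ := by
    intro T w hT hw r u v hu hv
    have hr0 : 0 ≤ r := le_trans (norm_nonneg u) hu
    have e1 : (-(1/2) * ‖T u‖ ^ 2 + B (T u) w) - (-(1/2) * ‖T v‖ ^ 2 + B (T v) w)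
        = -(1/2) * (‖T u‖ ^ 2 - ‖T v‖ ^ 2) + B (T (u - v)) w := by
      rw [map_sub T, map_sub B, ContinuousLinearMap.sub_apply]
      ring
    rw [e1]
    have hTu : ‖T u‖ ≤ CA * r := (hT u).trans (mul_le_mul_of_nonneg_left hu hCA0)
    have hTv : ‖T v‖ ≤ CA * r := (hT v).trans (mul_le_mul_of_nonneg_left hv hCA0)
    have hsub : ‖T u - T v‖ ≤ CA * ‖u - v‖ := by rw [← map_sub]; exact hT _
    have hdiff : |‖T u‖ - ‖T v‖| ≤ CA * ‖u - v‖ := (abs_norm_sub_norm_le _ _).trans hsub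
    have hsq : |‖T u‖ ^ 2 - ‖T v‖ ^ 2| ≤ (2 * (CA * r)) * (CA * ‖u - v‖) := by
      have e2 : ‖T u‖ ^ 2 - ‖T v‖ ^ 2 = (‖T u‖ - ‖T v‖) * (‖T u‖ + ‖T v‖) := by ring
      rw [e2, abs_mul, mul_comm]
      apply mul_le_mul _ hdiff (abs_nonneg _) (by positivity)
      rw [abs_of_nonneg (by positivity)]
      linarith
    have hB2 : |B (T (u - v)) w| ≤ b * ‖u - v‖ := by
      have h2 : ‖B (T (u - v)) w‖ ≤ ‖B‖ * ‖T (u - v)‖ * ‖w‖ := B.le_opNorm₂ _ _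
      rw [Real.norm_eq_abs] at h2
      refine h2.trans ?_
      rw [hbdef]
      have s1 : ‖B‖ * ‖T (u - v)‖ ≤ ‖B‖ * (CA * ‖u - v‖) :=
        mul_le_mul_of_nonneg_left (hT _) (norm_nonneg B)
      calc ‖B‖ * ‖T (u - v)‖ * ‖w‖ ≤ ‖B‖ * (CA * ‖u - v‖) * Mm :=
            mul_le_mul s1 hw (norm_nonneg w) (by positivity)
        _ = ‖B‖ * CA * Mm * ‖u - v‖ := by ring
    refine (abs_add_le _ _).trans ?_
    rw [abs_mul]
    have e3 : |(-(1/2) : ℝ)| = 1/2 := by norm_num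
    rw [e3]
    nlinarith [hsq, hB2, norm_nonneg (u - v)]
  -- Lipschitz estimate on balls for Ξ'
  have hΞlipball : ∀ (T : E →L[ℝ] F) (w : F), (∀ z, ‖T z‖ ≤ CA * ‖z‖) → ‖w‖ ≤ Mm →
      ∀ (r : ℝ) (u v : E), ‖u‖ ≤ r → ‖v‖ ≤ r →
      |Ξ' T w u - Ξ' T w v| ≤ Real.exp (β * r) * ((CA^2 * r + b) * ‖u - v‖) := by
    intro T w hT hw r u v hu hv
    have hψu : -(1/2) * ‖T u‖ ^ 2 + B (T u) w ≤ β * r :=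
      (hψle T w hT hw u).trans (mul_le_mul_of_nonneg_left hu hβ.le)
    have hψv : -(1/2) * ‖T v‖ ^ 2 + B (T v) w ≤ β * r :=
      (hψle T w hT hw v).trans (mul_le_mul_of_nonneg_left hv hβ.le)
    have h1 : |Ξ' T w u - Ξ' T w v|
        ≤ Real.exp (β * r) * |(-(1/2) * ‖T u‖ ^ 2 + B (T u) w) - (-(1/2) * ‖T v‖ ^ 2 + B (T v) w)| := by
      rw [hΞ'def]
      exact abs_exp_sub_exp_le hψu hψv
    exact h1.trans (mul_le_mul_of_nonneg_left (hψlip T w hT hw r u v hu hv) (Real.exp_pos _).le)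
  -- uniform smallness of ∫ |Ξ_k - Ξ| dμs n  for large k, n
  have main2 : ∀ ε : ℝ, 0 < ε → ∃ K N : ℕ, ∀ k, K ≤ k → ∀ n, N ≤ n →
      ∫ u, |Ξ' (Ak k) (mk k) u - Ξ' A m u| ∂(μs n) < ε := by
    intro ε hε
    obtain ⟨j, hj⟩ := htailidx 2 (ε/2) (by linarith)
    set cap := 2 * Real.exp (β * j) with hcapdef
    have hcap0 : 0 < cap := by positivity
    set φ : ℕ → E → ℝ := fun k u => min (|Ξ' (Ak k) (mk k) u - Ξ' A m u|) cap with hφdef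
    have hφnn : ∀ k u, 0 ≤ φ k u := fun k u => le_min (abs_nonneg _) hcap0.le
    have hφcap : ∀ k u, φ k u ≤ cap := fun k u => min_le_right _ _
    set D : ℕ → E → ℝ := fun K u => ⨆ i : ℕ, φ (K + i) u with hDdef
    have hbdd : ∀ K (u : E), BddAbove (Set.range fun i => φ (K + i) u) := by
      intro K u
      refine ⟨cap, ?_⟩
      rintro x ⟨i, rfl⟩
      exact hφcap _ _
    have hDnn : ∀ K (u : E), 0 ≤ D K u :=
      fun K u => le_trans (hφnn (K + 0) u) (le_ciSup (hbdd K u) 0)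
    have hDcap : ∀ K (u : E), D K u ≤ cap := fun K u => ciSup_le fun i => hφcap _ _
    have hφleD : ∀ K k, K ≤ k → ∀ u : E, φ k u ≤ D K u := by
      intro K k hk u
      have e1 : k = K + (k - K) := (Nat.add_sub_cancel' hk).symm
      rw [e1]
      exact le_ciSup (hbdd K u) (k - K)
    -- global bound on Δ
    have hΔbd : ∀ k (u : E), |Ξ' (Ak k) (mk k) u - Ξ' A m u| ≤ 2 * Real.exp (β * ‖u‖) := by
      intro k u
      have b1 := hΞle (Ak k) (mk k) (hAk k) (hmk k) u
      have b2 := hΞle A m hA hmB u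
      have p1 := hΞpos (Ak k) (mk k) u
      have p2 := hΞpos A m u
      calc |Ξ' (Ak k) (mk k) u - Ξ' A m u| ≤ |Ξ' (Ak k) (mk k) u| + |Ξ' A m u| := abs_sub _ _
        _ ≤ 2 * Real.exp (β * ‖u‖) := by
            rw [abs_of_pos p1, abs_of_pos p2]; linarith
    -- Δ ≤ φ + tail
    have hΔtail : ∀ k (u : E), |Ξ' (Ak k) (mk k) u - Ξ' A m u|
        ≤ φ k u + 2 * Real.exp (-(β * j)) * Real.exp (2 * β * ‖u‖) := by
      intro k u
      have htl0 : (0:ℝ) ≤ 2 * Real.exp (-(β * j)) * Real.exp (2 * β * ‖u‖) := by positivity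
      rcases le_or_gt (|Ξ' (Ak k) (mk k) u - Ξ' A m u|) cap with hc | hc
      · have e1 : φ k u = |Ξ' (Ak k) (mk k) u - Ξ' A m u| := min_eq_left hc
        rw [e1]
        linarith
      · have h1 := hΔbd k u
        have h2 : Real.exp (β * j) < Real.exp (β * ‖u‖) := by
          rw [hcapdef] at hc
          linarith
        have h3 : (j:ℝ) ≤ ‖u‖ := by
          have h4 := Real.exp_lt_exp.mp h2
          nlinarith
        have h5 : Real.exp (β * ‖u‖) ≤ Real.exp (-(β * j)) * Real.exp (2 * β * ‖u‖) := by
          rw [← Real.exp_add]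
          apply Real.exp_le_exp.mpr
          nlinarith [norm_nonneg u]
        have h6 := hφnn k u
        nlinarith
    -- continuity of D K
    have hDcont : ∀ K, Continuous (D K) := by
      intro K
      rw [continuous_iff_continuousAt]
      intro u₀
      set r := ‖u₀‖ + 1 with hrdef
      have hr0 : 0 < r := by positivity
      set L := 2 * (Real.exp (β * r) * (CA^2 * r + b)) with hLdef
      have hL0 : 0 ≤ L := by positivity
      have hΔlip : ∀ k (u v : E), ‖u‖ ≤ r → ‖v‖ ≤ r →
          |(|Ξ' (Ak k) (mk k) u - Ξ' A m u|) - (|Ξ' (Ak k) (mk k) v - Ξ' A m v|)|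
            ≤ L * ‖u - v‖ := by
        intro k u v hu hv
        have l1 := hΞlipball (Ak k) (mk k) (hAk k) (hmk k) r u v hu hv
        have l2 := hΞlipball A m hA hmB r u v hu hv
        have t1 : |(|Ξ' (Ak k) (mk k) u - Ξ' A m u|) - (|Ξ' (Ak k) (mk k) v - Ξ' A m v|)|
            ≤ |(Ξ' (Ak k) (mk k) u - Ξ' A m u) - (Ξ' (Ak k) (mk k) v - Ξ' A m v)| :=
          abs_abs_sub_abs_le_abs_sub _ _
        have t2 : |(Ξ' (Ak k) (mk k) u - Ξ' A m u) - (Ξ' (Ak k) (mk k) v - Ξ' A m v)|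
            ≤ |Ξ' (Ak k) (mk k) u - Ξ' (Ak k) (mk k) v| + |Ξ' A m u - Ξ' A m v| := by
          have e1 : (Ξ' (Ak k) (mk k) u - Ξ' A m u) - (Ξ' (Ak k) (mk k) v - Ξ' A m v)
              = (Ξ' (Ak k) (mk k) u - Ξ' (Ak k) (mk k) v) - (Ξ' A m u - Ξ' A m v) := by ring
          rw [e1]
          exact abs_sub _ _
        refine t1.trans (t2.trans ?_)
        rw [hLdef]
        linarith
      have hφlip : ∀ k (u v : E), ‖u‖ ≤ r → ‖v‖ ≤ r → φ k u ≤ φ k v + L * ‖u - v‖ := by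
        intro k u v hu hv
        have l3 : |φ k u - φ k v| ≤ L * ‖u - v‖ := by
          rw [hφdef]
          exact abs_min_sub_min_le.trans (hΔlip k u v hu hv)
        have := abs_le.mp l3
        linarith [this.2]
      have hDlip : ∀ u v : E, ‖u‖ ≤ r → ‖v‖ ≤ r → D K u ≤ D K v + L * ‖u - v‖ := by
        intro u v hu hv
        apply ciSup_le
        intro i
        exact (hφlip (K + i) u v hu hv).trans
          (add_le_add_left (le_ciSup (hbdd K v) i) _)
      rw [Metric.continuousAt_iff]
      intro ε' hε'
      refine ⟨min 1 (ε' / (L + 1)), by positivity, ?_⟩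
      intro u hu
      rw [dist_eq_norm] at hu
      have hu1 : ‖u - u₀‖ < 1 := lt_of_lt_of_le hu (min_le_left _ _)
      have hu2 : ‖u - u₀‖ < ε' / (L + 1) := lt_of_lt_of_le hu (min_le_right _ _)
      have hur : ‖u‖ ≤ r := by
        have e1 : u = (u - u₀) + u₀ := (sub_add_cancel u u₀).symm
        calc ‖u‖ = ‖(u - u₀) + u₀‖ := by rw [← e1]
          _ ≤ ‖u - u₀‖ + ‖u₀‖ := norm_add_le _ _
          _ ≤ r := by rw [hrdef]; linarith
      have hu₀r : ‖u₀‖ ≤ r := by rw [hrdef]; linarith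
      rw [Real.dist_eq]
      have d1 := hDlip u u₀ hur hu₀r
      have d2 := hDlip u₀ u hu₀r hur
      rw [norm_sub_rev u₀ u] at d2
      have d3 : |D K u - D K u₀| ≤ L * ‖u - u₀‖ := by
        rw [abs_le]
        constructor <;> linarith
      have d4 : L * ‖u - u₀‖ < ε' := by
        have d5 : L * ‖u - u₀‖ ≤ L * (ε' / (L + 1)) :=
          mul_le_mul_of_nonneg_left hu2.le hL0
        have d6 : L * (ε' / (L + 1)) < ε' := by
          have hL1 : (0:ℝ) < L + 1 := by linarith
          have e7 : L * (ε' / (L + 1)) = (L * ε') / (L + 1) := by ring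
          rw [e7, div_lt_iff₀ hL1]
          nlinarith
        linarith
      linarith [d3]
    -- pointwise convergence of D K to 0
    have hD0 : ∀ u : E, Tendsto (fun K => D K u) atTop (nhds 0) := by
      intro u
      rw [Metric.tendsto_atTop]
      intro ε' hε'
      have h1 := Metric.tendsto_atTop.mp (hΔ0 u) (ε'/2) (by linarith)
      obtain ⟨K₀, hK₀⟩ := h1
      refine ⟨K₀, fun K hK => ?_⟩
      rw [Real.dist_eq, sub_zero, abs_of_nonneg (hDnn K u)]
      have h2 : D K u ≤ ε'/2 := by
        apply ciSup_le
        intro i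
        have h3 := hK₀ (K + i) (le_trans hK (Nat.le_add_right _ _))
        rw [Real.dist_eq, sub_zero, abs_of_nonneg (abs_nonneg _)] at h3
        exact le_trans (min_le_left _ _) h3.le
      linarith
    -- D K is integrable, and ∫ D K dμ → 0
    have hDbd : ∀ K (u : E), ‖D K u‖ ≤ cap := by
      intro K u
      rw [Real.norm_eq_abs, abs_of_nonneg (hDnn K u)]
      exact hDcap K u
    have hDtend : Tendsto (fun K => ∫ u, D K u ∂μ) atTop (nhds 0) := by
      have h1 := tendsto_integral_of_dominated_convergence (μ := μ)
        (F := fun K => D K) (f := fun _ => (0:ℝ)) (bound := fun _ => cap)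
        (fun K => (hDcont K).aestronglyMeasurable) (integrable_const cap)
        (fun K => ae_of_all _ fun u => hDbd K u) (ae_of_all _ hD0)
      simpa using h1
    obtain ⟨K, hK⟩ := (hDtend.eventually (gt_mem_nhds (show (0:ℝ) < ε/8 by linarith))).exists
    obtain ⟨N, hN⟩ := Metric.tendsto_atTop.mp
      (hweak (D K) (hDcont K) ⟨cap, fun u => by
        rw [abs_of_nonneg (hDnn K u)]; exact hDcap K u⟩) (ε/8) (by linarith)
    refine ⟨K, N, fun k hk n hn => ?_⟩
    have hΔcont : Continuous (fun u => |Ξ' (Ak k) (mk k) u - Ξ' A m u|) :=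
      ((hΞcont (Ak k) (mk k)).sub (hΞcont A m)).abs
    have hΔint : Integrable (fun u => |Ξ' (Ak k) (mk k) u - Ξ' A m u|) (μs n) :=
      hIntDom (μs n) (fun c hc => (hPn n c hc).1) _ hΔcont β hβ 2
        (fun u => by rw [abs_abs]; exact hΔbd k u)
    have hDint : Integrable (D K) (μs n) :=
      Integrable.mono' (integrable_const cap) (hDcont K).aestronglyMeasurable
        (ae_of_all _ fun u => hDbd K u)
    have hexpint := (hPn n (2*β) (by linarith)).1
    have hrhsint : Integrable
        (fun u => D K u + 2 * Real.exp (-(β * j)) * Real.exp (2 * β * ‖u‖)) (μs n) :=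
      hDint.add (hexpint.const_mul _)
    have h5 : ∫ u, |Ξ' (Ak k) (mk k) u - Ξ' A m u| ∂(μs n)
        ≤ ∫ u, (D K u + 2 * Real.exp (-(β * j)) * Real.exp (2 * β * ‖u‖)) ∂(μs n) :=
      integral_mono hΔint hrhsint
        (fun u => (hΔtail k u).trans (add_le_add_left (hφleD K k hk u) _))
    rw [integral_add hDint (hexpint.const_mul _), integral_const_mul] at h5
    have h6 : ∫ u, D K u ∂(μs n) < ε/4 := by
      have h7 := hN n hn
      rw [Real.dist_eq] at h7
      have := abs_le.mp h7.le
      linarith [this.2]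
    have h8 : 2 * Real.exp (-(β * j)) * ∫ u, Real.exp (2 * β * ‖u‖) ∂(μs n)
        ≤ 2 * Real.exp (-(β * j)) * C (2*β) :=
      mul_le_mul_of_nonneg_left (hPn n (2*β) (by linarith)).2 (by positivity)
    calc ∫ u, |Ξ' (Ak k) (mk k) u - Ξ' A m u| ∂(μs n)
        ≤ ∫ u, D K u ∂(μs n) + 2 * Real.exp (-(β * j)) * ∫ u, Real.exp (2 * β * ‖u‖) ∂(μs n) := h5
      _ < ε/4 + ε/2 := by
          have : (2:ℝ) * Real.exp (-(β * j)) * C (2*β) < ε/2 := by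
            have := hj; linarith [hj]
          linarith
      _ < ε := by linarith
  -- joint convergence of the integrals
  have key : ∀ g : E → ℝ, Continuous g → ∀ Mg : ℝ, 0 ≤ Mg → (∀ u, |g u| ≤ Mg) →
      Tendsto (fun p : ℕ × ℕ => ∫ u, g u * Ξ' (Ak p.1) (mk p.1) u ∂(μs p.2)) (atTop ×ˢ atTop)
        (nhds (∫ u, g u * Ξ' A m u ∂μ)) := by
    intro g hgc Mg hMg0 hgb
    rw [Metric.tendsto_nhds]
    intro ε hε
    have hgΞb : ∀ u, |g u * Ξ' A m u| ≤ Mg * Real.exp (β * ‖u‖) := by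
      intro u
      rw [abs_mul]
      exact mul_le_mul (hgb u)
        (by rw [abs_of_pos (hΞpos A m u)]; exact hΞle A m hA hmB u) (abs_nonneg _) hMg0
    obtain ⟨N₁, hN₁⟩ := Metric.tendsto_atTop.mp
      (main1 (fun u => g u * Ξ' A m u) (hgc.mul (hΞcont A m)) Mg hMg0 hgΞb) (ε/2) (by linarith)
    obtain ⟨K, N₂, hKN⟩ := main2 (ε/(2*(Mg+1))) (by positivity)
    have hev : ∀ᶠ p : ℕ × ℕ in atTop ×ˢ atTop, K ≤ p.1 ∧ max N₁ N₂ ≤ p.2 :=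
      (eventually_ge_atTop K).prod_mk (eventually_ge_atTop (max N₁ N₂))
    filter_upwards [hev] with p hp
    obtain ⟨hk, hn⟩ := hp
    have hΔcont : Continuous (fun u => |Ξ' (Ak p.1) (mk p.1) u - Ξ' A m u|) :=
      ((hΞcont (Ak p.1) (mk p.1)).sub (hΞcont A m)).abs
    have hΔbd2 : ∀ u : E, |Ξ' (Ak p.1) (mk p.1) u - Ξ' A m u| ≤ 2 * Real.exp (β * ‖u‖) := by
      intro u
      have b1 := hΞle (Ak p.1) (mk p.1) (hAk p.1) (hmk p.1) u
      have b2 := hΞle A m hA hmB u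
      have p1 := hΞpos (Ak p.1) (mk p.1) u
      have p2 := hΞpos A m u
      calc |Ξ' (Ak p.1) (mk p.1) u - Ξ' A m u|
          ≤ |Ξ' (Ak p.1) (mk p.1) u| + |Ξ' A m u| := abs_sub _ _
        _ ≤ 2 * Real.exp (β * ‖u‖) := by rw [abs_of_pos p1, abs_of_pos p2]; linarith
    have hΔint : Integrable (fun u => |Ξ' (Ak p.1) (mk p.1) u - Ξ' A m u|) (μs p.2) :=
      hIntDom (μs p.2) (fun c hc => (hPn p.2 c hc).1) _ hΔcont β hβ 2
        (fun u => by rw [abs_abs]; exact hΔbd2 u)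
    have hgΞkb : ∀ u, |g u * Ξ' (Ak p.1) (mk p.1) u| ≤ Mg * Real.exp (β * ‖u‖) := by
      intro u
      rw [abs_mul]
      exact mul_le_mul (hgb u)
        (by rw [abs_of_pos (hΞpos (Ak p.1) (mk p.1) u)]
            exact hΞle (Ak p.1) (mk p.1) (hAk p.1) (hmk p.1) u) (abs_nonneg _) hMg0
    have hgΞkint : Integrable (fun u => g u * Ξ' (Ak p.1) (mk p.1) u) (μs p.2) :=
      hIntDom (μs p.2) (fun c hc => (hPn p.2 c hc).1) _
        (hgc.mul (hΞcont (Ak p.1) (mk p.1))) β hβ Mg hgΞkb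
    have hgΞint : Integrable (fun u => g u * Ξ' A m u) (μs p.2) :=
      hIntDom (μs p.2) (fun c hc => (hPn p.2 c hc).1) _ (hgc.mul (hΞcont A m)) β hβ Mg hgΞb
    have t1 : |(∫ u, g u * Ξ' (Ak p.1) (mk p.1) u ∂(μs p.2)) - ∫ u, g u * Ξ' A m u ∂(μs p.2)|
        ≤ Mg * ∫ u, |Ξ' (Ak p.1) (mk p.1) u - Ξ' A m u| ∂(μs p.2) := by
      rw [← integral_sub hgΞkint hgΞint]
      have s1 : |∫ u, (g u * Ξ' (Ak p.1) (mk p.1) u - g u * Ξ' A m u) ∂(μs p.2)|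
          ≤ ∫ u, |g u * Ξ' (Ak p.1) (mk p.1) u - g u * Ξ' A m u| ∂(μs p.2) := by
        simpa [Real.norm_eq_abs] using norm_integral_le_integral_norm
          (fun u => g u * Ξ' (Ak p.1) (mk p.1) u - g u * Ξ' A m u) (μ := μs p.2)
      refine s1.trans ?_
      have s2 : ∫ u, |g u * Ξ' (Ak p.1) (mk p.1) u - g u * Ξ' A m u| ∂(μs p.2)
          ≤ ∫ u, Mg * |Ξ' (Ak p.1) (mk p.1) u - Ξ' A m u| ∂(μs p.2) := by
        apply integral_mono (hgΞkint.sub hgΞint).abs (hΔint.const_mul Mg)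
        intro u
        simp only [Pi.sub_apply]
        have e1 : g u * Ξ' (Ak p.1) (mk p.1) u - g u * Ξ' A m u
            = g u * (Ξ' (Ak p.1) (mk p.1) u - Ξ' A m u) := by ring
        rw [e1, abs_mul]
        exact mul_le_mul_of_nonneg_right (hgb u) (abs_nonneg _)
      refine s2.trans ?_
      rw [integral_const_mul]
    have t2 : Mg * ∫ u, |Ξ' (Ak p.1) (mk p.1) u - Ξ' A m u| ∂(μs p.2) < ε/2 := by
      have s3 := hKN p.1 hk p.2 (le_trans (le_max_right _ _) hn)
      have s4 : (0:ℝ) ≤ ∫ u, |Ξ' (Ak p.1) (mk p.1) u - Ξ' A m u| ∂(μs p.2) :=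
        integral_nonneg fun u => abs_nonneg _
      have s5 : Mg * ∫ u, |Ξ' (Ak p.1) (mk p.1) u - Ξ' A m u| ∂(μs p.2)
          ≤ Mg * (ε/(2*(Mg+1))) := mul_le_mul_of_nonneg_left s3.le hMg0
      have s6 : Mg * (ε/(2*(Mg+1))) < ε/2 := by
        have hMg1 : (0:ℝ) < Mg + 1 := by linarith
        have e7 : Mg * (ε/(2*(Mg+1))) = (Mg * ε) / (2*(Mg+1)) := by ring
        rw [e7, div_lt_iff₀ (by linarith)]
        nlinarith
      linarith
    have t3 := hN₁ p.2 (le_trans (le_max_left _ _) hn)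
    rw [Real.dist_eq] at t3 ⊢
    have d1 := abs_sub_le (∫ u, g u * Ξ' (Ak p.1) (mk p.1) u ∂(μs p.2))
      (∫ u, g u * Ξ' A m u ∂(μs p.2)) (∫ u, g u * Ξ' A m u ∂μ)
    linarith
  -- positivity of the limiting denominator
  have hΞint : Integrable (Ξ' A m) μ :=
    hIntDom μ (fun c hc => (hPμ c hc).1) _ (hΞcont A m) β hβ 1
      (fun u => by rw [abs_of_pos (hΞpos A m u), one_mul]; exact hΞle A m hA hmB u)
  have hden_pos : 0 < ∫ u, Ξ' A m u ∂μ := by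
    rw [integral_pos_iff_support_of_nonneg (fun u => (hΞpos A m u).le) hΞint]
    have e1 : Function.support (Ξ' A m) = Set.univ :=
      Set.eq_univ_of_forall fun u => (hΞpos A m u).ne'
    rw [e1]
    simp
  -- assemble
  have hnum := key h hcont M hM0 hM
  have hden := key (fun _ => 1) continuous_const 1 zero_le_one (fun u => by norm_num)
  simp only [one_mul] at hden
  have hfinal := hnum.div hden (ne_of_gt hden_pos)
  simp only [hΞ'def] at hfinal
  exact hfinal
end

section
/- Let H be a real separable Hilbert space, G a real separable Hilbert space. Let (λ_n)_{n∈ℕ} and λ be Borel probability measures on H that are uniformly discretized with exponential weights. Let g : H → G be continuous with ‖g(u)‖_G ≤ exp(b‖u‖_H) for some b > 0 and all u ∈ H. Then the Bochner integrals converge: ∫_H g(u) dλ_n(u) → ∫_H g(u) dλ(u) in G as n → ∞. -/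
open MeasureTheory Filter Real
open Set Metric
open scoped ENNReal NNReal

section AuxStatement5
private lemma exists_compact_measure_compl_le
    {X : Type*} [MetricSpace X] [CompleteSpace X] [SecondCountableTopology X]
    [MeasurableSpace X] [OpensMeasurableSpace X]
    (ν : Measure X) [IsFiniteMeasure ν] {ε : ℝ≥0∞} (hε : ε ≠ 0) :
    ∃ K : Set X, IsCompact K ∧ ν Kᶜ ≤ ε := by
  rcases isEmpty_or_nonempty X with hX | hX
  · exact ⟨∅, isCompact_empty,
      by rw [Set.compl_empty, Set.univ_eq_empty_iff.mpr hX, measure_empty]; exact zero_le⟩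
  obtain ⟨δ, hδ0, hδsum⟩ := ENNReal.exists_pos_sum_of_countable hε ℕ
  set x : ℕ → X := TopologicalSpace.denseSeq X with hxdef
  have hx : DenseRange x := TopologicalSpace.denseRange_denseSeq X
  set A : ℕ → ℕ → Set X :=
    fun k n => ⋃ i ∈ Finset.range n, Metric.closedBall (x i) (1/(k+1)) with hA
  have hclosed : ∀ k n, IsClosed (A k n) := by
    intro k n
    apply Set.Finite.isClosed_biUnion (Finset.finite_toSet _)
    intro i _
    exact Metric.isClosed_closedBall
  have hcover : ∀ k : ℕ, (⋃ n, A k n) = Set.univ := by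
    intro k
    ext u
    simp only [Set.mem_univ, iff_true, Set.mem_iUnion, hA, exists_prop, Finset.mem_range]
    obtain ⟨i, hi⟩ := Metric.denseRange_iff.mp hx u (1/(k+1)) (by positivity)
    exact ⟨i+1, i, Nat.lt_succ_self i, Metric.mem_closedBall.mpr hi.le⟩
  have htend : ∀ k, ∃ n, ν (A k n)ᶜ < δ k := by
    intro k
    have hmono : Antitone fun n => (A k n)ᶜ := by
      intro m n hmn
      apply Set.compl_subset_compl.mpr
      apply Set.biUnion_subset_biUnion_left
      exact Finset.range_subset_range.mpr hmn
    have h0 : (⋂ n, (A k n)ᶜ) = ∅ := by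
      rw [← Set.compl_iUnion, hcover k, Set.compl_univ]
    have h := tendsto_measure_iInter_atTop
      (fun n => ((hclosed k n).measurableSet.compl).nullMeasurableSet) hmono
      ⟨0, measure_ne_top ν _⟩
    rw [h0, measure_empty] at h
    exact (h.eventually_lt_const (ENNReal.coe_pos.mpr (hδ0 k))).exists
  choose N hN using htend
  refine ⟨⋂ k, A k (N k), ?_, ?_⟩
  · apply TotallyBounded.isCompact_of_isClosed
    · rw [Metric.totallyBounded_iff]
      intro r hr
      obtain ⟨k, hk⟩ := exists_nat_one_div_lt hr
      refine ⟨x '' (Finset.range (N k) : Set ℕ), (Finset.finite_toSet _).image x, ?_⟩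
      intro u hu
      have hu' : u ∈ A k (N k) := Set.mem_iInter.mp hu k
      simp only [hA, Set.mem_iUnion, exists_prop] at hu'
      obtain ⟨i, hi, hui⟩ := hu'
      simp only [Set.mem_iUnion, exists_prop]
      exact ⟨x i, Set.mem_image_of_mem x (by simpa using hi),
        Metric.mem_ball.mpr (lt_of_le_of_lt (Metric.mem_closedBall.mp hui) (by exact_mod_cast hk))⟩
    · exact isClosed_iInter fun k => hclosed k (N k)
  · rw [Set.compl_iInter]
    calc ν (⋃ k, (A k (N k))ᶜ) ≤ ∑' k, ν (A k (N k))ᶜ := measure_iUnion_le _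
      _ ≤ ∑' k, (δ k : ℝ≥0∞) := ENNReal.tsum_le_tsum fun k => (hN k).le
      _ ≤ ε := hδsum.le

private lemma integrable_of_bdd {X E : Type*} [TopologicalSpace X] [MeasurableSpace X]
    [OpensMeasurableSpace X] [NormedAddCommGroup E] [SecondCountableTopology E]
    (ν : Measure X) [IsFiniteMeasure ν] {φ : X → E} (hφ : Continuous φ)
    {M : ℝ} (hM : ∀ u, ‖φ u‖ ≤ M) : Integrable φ ν :=
  (integrable_const M).mono' hφ.aestronglyMeasurable (Eventually.of_forall hM)

end AuxStatement5

/-- Convergence of the conditional-mean-type vector integrals: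
if `(μs n), μ` are Borel probability measures on a real separable Hilbert space `H`,
uniformly discretized with exponential weights, and `g : H → G` is a continuous map
into a real separable Hilbert space with `‖g u‖ ≤ exp (b * ‖u‖)` for some `b > 0`,
then the Bochner integrals `∫ g ∂(μs n)` converge to `∫ g ∂μ` in `G`. -/
theorem statement5
    {H : Type*} [NormedAddCommGroup H] [InnerProductSpace ℝ H] [CompleteSpace H]
    [SecondCountableTopology H] [MeasurableSpace H] [BorelSpace H]
    {G : Type*} [NormedAddCommGroup G] [InnerProductSpace ℝ G] [CompleteSpace G]
    [SecondCountableTopology G]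
    (μs : ℕ → Measure H) (μ : Measure H)
    [∀ n, IsProbabilityMeasure (μs n)] [IsProbabilityMeasure μ]
    (hweak : ∀ h : H → ℝ, Continuous h → (∃ M : ℝ, ∀ u : H, |h u| ≤ M) →
      Tendsto (fun n => ∫ u, h u ∂(μs n)) atTop (nhds (∫ u, h u ∂μ)))
    (C : ℝ → ℝ) (hC : ∀ b > 0, 0 < C b)
    (hmom : ∀ b > 0, ∀ n : ℕ,
      ∫⁻ u, ENNReal.ofReal (Real.exp (b * ‖u‖)) ∂(μs n) ≤ ENNReal.ofReal (C b))
    (hmom' : ∀ b > 0,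
      ∫⁻ u, ENNReal.ofReal (Real.exp (b * ‖u‖)) ∂μ ≤ ENNReal.ofReal (C b))
    (g : H → G) (hg : Continuous g) (b : ℝ) (hb : 0 < b)
    (hgbd : ∀ u : H, ‖g u‖ ≤ Real.exp (b * ‖u‖)) :
    Tendsto (fun n => ∫ u, g u ∂(μs n)) atTop (nhds (∫ u, g u ∂μ)) := by
  have h2b : (0:ℝ) < 2*b := by positivity
  have hIg : ∀ (ν : Measure H), IsProbabilityMeasure ν →
      (∫⁻ u, ENNReal.ofReal (Real.exp (b * ‖u‖)) ∂ν ≤ ENNReal.ofReal (C b)) → Integrable g ν := by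
    intro ν hν hmomν
    refine ⟨hg.aestronglyMeasurable, ?_⟩
    rw [hasFiniteIntegral_iff_norm]
    calc ∫⁻ u, ENNReal.ofReal ‖g u‖ ∂ν
        ≤ ∫⁻ u, ENNReal.ofReal (Real.exp (b * ‖u‖)) ∂ν :=
          lintegral_mono fun u => ENNReal.ofReal_le_ofReal (hgbd u)
      _ ≤ ENNReal.ofReal (C b) := hmomν
      _ < ⊤ := ENNReal.ofReal_lt_top
  rw [Metric.tendsto_nhds]
  intro ε hε
  set δ : ℝ := ε/9 with hδdef
  have hδ : 0 < δ := by positivity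
  have hC2 : 0 < C (2*b) := hC _ h2b
  set R : ℝ := max 1 (Real.log (C (2*b) / δ) / b) with hRdef
  have hbR : Real.log (C (2*b) / δ) ≤ b * R := by
    have h1 : Real.log (C (2*b) / δ) / b ≤ R := le_max_right _ _
    calc Real.log (C (2*b) / δ) = b * (Real.log (C (2*b) / δ) / b) :=
          (mul_div_cancel₀ _ hb.ne').symm
      _ ≤ b * R := by nlinarith
  have hexpR : Real.exp (-(b*R)) * C (2*b) ≤ δ := by
    have h2 : C (2*b) / δ ≤ Real.exp (b*R) := by
      calc C (2*b) / δ = Real.exp (Real.log (C (2*b)/δ)) := (Real.exp_log (by positivity)).symm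
        _ ≤ Real.exp (b*R) := Real.exp_le_exp.mpr hbR
    rw [div_le_iff₀ hδ] at h2
    rw [Real.exp_neg, inv_mul_eq_div, div_le_iff₀ (Real.exp_pos _)]
    nlinarith
  -- cutoff
  set φ : H → ℝ := fun u => max 0 (min 1 (R + 1 - ‖u‖)) with hφdef
  have hφcont : Continuous φ :=
    continuous_const.max (continuous_const.min (continuous_const.sub continuous_norm))
  have hφ0 : ∀ u, 0 ≤ φ u := fun u => le_max_left _ _
  have hφle1 : ∀ u, φ u ≤ 1 := fun u => max_le zero_le_one (min_le_left _ _)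
  have hφ1 : ∀ u, ‖u‖ ≤ R → φ u = 1 := by
    intro u hu
    simp only [hφdef]
    rw [min_eq_left (by linarith)]
    exact max_eq_right zero_le_one
  have hφz : ∀ u, R + 1 ≤ ‖u‖ → φ u = 0 := by
    intro u hu
    simp only [hφdef]
    exact max_eq_left ((min_le_right _ _).trans (by linarith))
  set f : H → G := fun u => φ u • g u with hfdef
  have hfcont : Continuous f := hφcont.smul hg
  set M : ℝ := Real.exp (b * (R + 1)) with hMdef
  have hM0 : 0 < M := Real.exp_pos _
  have hfM : ∀ u, ‖f u‖ ≤ M := by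
    intro u
    rcases le_or_gt ‖u‖ (R+1) with h | h
    · calc ‖f u‖ = |φ u| * ‖g u‖ := by
            simp only [hfdef, norm_smul, Real.norm_eq_abs]
        _ ≤ 1 * Real.exp (b * ‖u‖) :=
            mul_le_mul (by rw [abs_of_nonneg (hφ0 u)]; exact hφle1 u) (hgbd u)
              (norm_nonneg _) zero_le_one
        _ ≤ M := by
            rw [one_mul, hMdef]
            exact Real.exp_le_exp.mpr (by nlinarith)
    · simp only [hfdef]
      rw [hφz u h.le, zero_smul, norm_zero]
      exact hM0.le
  -- tail estimate
  have htail : ∀ (ν : Measure H), IsProbabilityMeasure ν →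
      (∫⁻ u, ENNReal.ofReal (Real.exp (2*b * ‖u‖)) ∂ν ≤ ENNReal.ofReal (C (2*b))) →
      Integrable g ν →
      ‖(∫ u, g u ∂ν) - ∫ u, f u ∂ν‖ ≤ δ := by
    intro ν hν hm hIgν
    haveI := hν
    have hIf : Integrable f ν := integrable_of_bdd ν hfcont hfM
    have hpt : ∀ u, ‖g u - f u‖ ≤ Real.exp (-(b*R)) * Real.exp (2*b*‖u‖) := by
      intro u
      rcases le_or_gt ‖u‖ R with h | h
      · simp only [hfdef]
        rw [hφ1 u h, one_smul, sub_self, norm_zero]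
        positivity
      · have h1 : ‖g u - f u‖ = (1 - φ u) * ‖g u‖ := by
          simp only [hfdef]
          rw [show g u - φ u • g u = (1 - φ u) • g u by rw [sub_smul, one_smul],
            norm_smul, Real.norm_eq_abs, abs_of_nonneg (by linarith [hφle1 u])]
        rw [h1]
        calc (1 - φ u) * ‖g u‖ ≤ 1 * Real.exp (b * ‖u‖) :=
              mul_le_mul (by linarith [hφ0 u]) (hgbd u) (norm_nonneg _) zero_le_one
          _ = Real.exp (b*‖u‖) := one_mul _
          _ ≤ _ := by
              rw [← Real.exp_add]
              exact Real.exp_le_exp.mpr (by nlinarith)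
    rw [← integral_sub hIgν hIf]
    calc ‖∫ u, (g u - f u) ∂ν‖ ≤ (∫⁻ u, ENNReal.ofReal ‖g u - f u‖ ∂ν).toReal :=
          norm_integral_le_lintegral_norm _
      _ ≤ δ := by
        apply ENNReal.toReal_le_of_le_ofReal hδ.le
        calc ∫⁻ u, ENNReal.ofReal ‖g u - f u‖ ∂ν
            ≤ ∫⁻ u, ENNReal.ofReal (Real.exp (-(b*R))) * ENNReal.ofReal (Real.exp (2*b*‖u‖)) ∂ν := by
              refine lintegral_mono fun u => ?_
              calc ENNReal.ofReal ‖g u - f u‖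
                  ≤ ENNReal.ofReal (Real.exp (-(b*R)) * Real.exp (2*b*‖u‖)) :=
                    ENNReal.ofReal_le_ofReal (hpt u)
                _ = _ := ENNReal.ofReal_mul (Real.exp_pos _).le
          _ = ENNReal.ofReal (Real.exp (-(b*R))) * ∫⁻ u, ENNReal.ofReal (Real.exp (2*b*‖u‖)) ∂ν :=
              lintegral_const_mul' _ _ ENNReal.ofReal_ne_top
          _ ≤ ENNReal.ofReal (Real.exp (-(b*R))) * ENNReal.ofReal (C (2*b)) :=
              mul_le_mul_right hm _
          _ ≤ ENNReal.ofReal δ := by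
              rw [← ENNReal.ofReal_mul (Real.exp_pos _).le]
              exact ENNReal.ofReal_le_ofReal hexpR
  -- tightness
  obtain ⟨K, hKcomp, hKle⟩ := exists_compact_measure_compl_le μ
      (ε := ENNReal.ofReal (δ/M)) (ENNReal.ofReal_pos.mpr (by positivity)).ne'
  -- finite net on a neighborhood of K
  have hrad : ∀ x : H, ∃ r > 0, ∀ y, dist y x < r → dist (f y) (f x) < δ := fun x =>
    Metric.continuous_iff.mp hfcont x δ hδ
  choose r hr hrlt using hrad
  obtain ⟨t, htK, hKt⟩ := hKcomp.elim_nhds_subcover (fun x => Metric.ball x (r x))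
      (fun x _ => Metric.ball_mem_nhds x (hr x))
  set U : Set H := ⋃ x ∈ t, Metric.ball x (r x) with hUdef
  have hUopen : IsOpen U := isOpen_biUnion fun x _ => Metric.isOpen_ball
  have hKU : K ⊆ U := hKt
  set V : Submodule ℝ G := Submodule.span ℝ (f '' (t : Set H)) with hVdef
  haveI hVfd : FiniteDimensional ℝ V := FiniteDimensional.span_of_finite ℝ ((t.finite_toSet).image f)
  haveI hVc : CompleteSpace V := FiniteDimensional.complete ℝ V
  set Pf : H → G := fun u => (V.orthogonalProjectionOnto (f u) : G) with hPfdef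
  have hkey : ∀ (y w : G), w ∈ V → ‖y - (V.orthogonalProjectionOnto y : G)‖ ≤ ‖y - w‖ := by
    intro y w hw
    rw [← Submodule.starProjection_apply, Submodule.starProjection_minimal]
    exact ciInf_le ⟨0, by rintro s ⟨z, rfl⟩; exact norm_nonneg _⟩ (⟨w, hw⟩ : V)
  have hPfM : ∀ u, ‖f u - Pf u‖ ≤ M := fun u => by
    calc ‖f u - Pf u‖ ≤ ‖f u - 0‖ := hkey (f u) 0 V.zero_mem
      _ = ‖f u‖ := by rw [sub_zero]
      _ ≤ M := hfM u
  have hPfU : ∀ u ∈ U, ‖f u - Pf u‖ ≤ δ := by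
    intro u hu
    simp only [hUdef, Set.mem_iUnion, exists_prop] at hu
    obtain ⟨x, hxt, hux⟩ := hu
    have hfx : f x ∈ V := Submodule.subset_span (Set.mem_image_of_mem f hxt)
    calc ‖f u - Pf u‖ ≤ ‖f u - f x‖ := hkey _ _ hfx
      _ = dist (f u) (f x) := (dist_eq_norm _ _).symm
      _ ≤ δ := (hrlt x u (Metric.mem_ball.mp hux)).le
  have hIf : ∀ (ν : Measure H), IsProbabilityMeasure ν → Integrable f ν := fun ν hν => by
    haveI := hν; exact integrable_of_bdd ν hfcont hfM
  have hIPf : ∀ (ν : Measure H), IsProbabilityMeasure ν → Integrable Pf ν := fun ν hν => by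
    haveI := hν
    exact (V.subtypeL.comp V.orthogonalProjectionOnto).integrable_comp (hIf ν hν)
  have hUc : MeasurableSet (Uᶜ) := hUopen.measurableSet.compl
  have hpw : ∀ u, ‖f u - Pf u‖ ≤ δ + M * Set.indicator Uᶜ (fun _ => (1:ℝ)) u := by
    intro u
    by_cases hu : u ∈ U
    · rw [Set.indicator_of_notMem (by simpa using hu)]
      simpa using hPfU u hu
    · rw [Set.indicator_of_mem (by simpa using hu)]
      have := hPfM u
      nlinarith
  have hnd : ∀ (ν : Measure H), IsProbabilityMeasure ν →
      ‖(∫ u, f u ∂ν) - ∫ u, Pf u ∂ν‖ ≤ δ + M * (ν Uᶜ).toReal := by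
    intro ν hν
    haveI := hν
    have hint1 : Integrable (fun u => ‖f u - Pf u‖) ν := ((hIf ν hν).sub (hIPf ν hν)).norm
    have hint2 : Integrable (fun u => δ + M * Set.indicator Uᶜ (fun _ => (1:ℝ)) u) ν :=
      (integrable_const δ).add (((integrable_const (1:ℝ)).indicator hUc).const_mul M)
    rw [← integral_sub (hIf ν hν) (hIPf ν hν)]
    calc ‖∫ u, (f u - Pf u) ∂ν‖ ≤ ∫ u, ‖f u - Pf u‖ ∂ν := norm_integral_le_integral_norm _
      _ ≤ ∫ u, (δ + M * Set.indicator Uᶜ (fun _ => (1:ℝ)) u) ∂ν := integral_mono hint1 hint2 hpw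
      _ = δ + M * (ν Uᶜ).toReal := by
          rw [integral_add (integrable_const δ)
            (((integrable_const (1:ℝ)).indicator hUc).const_mul M),
            integral_const, integral_const_mul, integral_indicator_const (1:ℝ) hUc]
          simp [measure_univ, measureReal_def]
  have hμU : (μ Uᶜ).toReal ≤ δ / M := by
    apply ENNReal.toReal_le_of_le_ofReal (by positivity)
    exact le_trans (measure_mono (Set.compl_subset_compl.mpr hKU)) hKle
  have hμside : ‖(∫ u, f u ∂μ) - ∫ u, Pf u ∂μ‖ ≤ 2*δ := by
    calc ‖(∫ u, f u ∂μ) - ∫ u, Pf u ∂μ‖ ≤ δ + M * (μ Uᶜ).toReal := hnd μ inferInstance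
      _ ≤ δ + M * (δ/M) := by nlinarith
      _ = 2*δ := by field_simp; ring
  -- Urysohn
  obtain ⟨χ, hχ0, hχ1, hχmem⟩ := exists_continuous_zero_one_of_isClosed
      hUopen.isClosed_compl hKcomp.isClosed (Set.disjoint_left.mpr fun x hx hxK => hx (hKU hxK))
  set h0 : H → ℝ := fun u => 1 - χ u with hh0def
  have hh0cont : Continuous h0 := continuous_const.sub χ.continuous
  have hh0bd : ∀ u, |h0 u| ≤ 1 := by
    intro u
    have h := hχmem u
    rw [abs_le]
    constructor <;> simp only [hh0def] <;> [linarith [h.2]; linarith [h.1]]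
  have hIh0 : ∀ (ν : Measure H), IsProbabilityMeasure ν → Integrable h0 ν := fun ν hν => by
    haveI := hν
    exact integrable_of_bdd ν hh0cont (fun u => by rw [Real.norm_eq_abs]; exact hh0bd u)
  have hKc : MeasurableSet (Kᶜ) := hKcomp.isClosed.measurableSet.compl
  have hlim : ∫ u, h0 u ∂μ ≤ δ / M := by
    calc ∫ u, h0 u ∂μ ≤ ∫ u, Set.indicator Kᶜ (fun _ => (1:ℝ)) u ∂μ := by
          apply integral_mono (hIh0 μ inferInstance) ((integrable_const (1:ℝ)).indicator hKc)
          intro u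
          by_cases hu : u ∈ K
          · rw [Set.indicator_of_notMem (by simpa using hu)]
            simp only [hh0def]
            rw [hχ1 hu]
            norm_num
          · rw [Set.indicator_of_mem (by simpa using hu)]
            have h := hχmem u
            simp only [hh0def]
            linarith [h.1]
      _ = (μ Kᶜ).toReal := by rw [integral_indicator_const (1:ℝ) hKc]; simp [measureReal_def]
      _ ≤ δ / M := ENNReal.toReal_le_of_le_ofReal (by positivity) hKle
  have hδM : 0 < δ / M := by positivity
  have hev2 : ∀ᶠ n in atTop, ∫ u, h0 u ∂(μs n) < 2*(δ/M) :=
    Filter.Tendsto.eventually_lt_const (by linarith) (hweak h0 hh0cont ⟨1, hh0bd⟩)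
  have hμnU : ∀ n, ((μs n) Uᶜ).toReal ≤ ∫ u, h0 u ∂(μs n) := by
    intro n
    have heq : ((μs n) Uᶜ).toReal = ∫ u, Set.indicator Uᶜ (fun _ => (1:ℝ)) u ∂(μs n) := by
      rw [integral_indicator_const (1:ℝ) hUc]; simp [measureReal_def]
    rw [heq]
    apply integral_mono ((integrable_const (1:ℝ)).indicator hUc) (hIh0 (μs n) inferInstance)
    intro u
    by_cases hu : u ∈ Uᶜ
    · rw [Set.indicator_of_mem hu]
      simp only [hh0def]
      rw [hχ0 hu]
      norm_num
    · rw [Set.indicator_of_notMem hu]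
      have h := hχmem u
      simp only [hh0def]
      linarith [h.2]
  -- projection integrals converge
  set B := stdOrthonormalBasis ℝ V with hBdef
  set vv : Fin (Module.finrank ℝ V) → G := fun i => (B i : G) with hvvdef
  set hi : Fin (Module.finrank ℝ V) → H → ℝ := fun i u => (inner ℝ (vv i) (f u) : ℝ) with hhidef
  have hproj : ∀ y : G, (V.orthogonalProjectionOnto y : G) = ∑ i, (inner ℝ (vv i) y : ℝ) • vv i := by
    intro y
    have h := B.orthogonalProjectionOnto_apply_eq_sum y
    have h2 := congrArg (Submodule.subtype V) h
    simpa using h2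
  have hhicont : ∀ i, Continuous (hi i) := fun i => continuous_const.inner hfcont
  have hhibd : ∀ i, ∀ u, |hi i u| ≤ ‖vv i‖ * M := fun i u =>
    (abs_real_inner_le_norm _ _).trans (mul_le_mul_of_nonneg_left (hfM u) (norm_nonneg _))
  have hIhi : ∀ i (ν : Measure H), IsProbabilityMeasure ν → Integrable (hi i) ν := fun i ν hν => by
    haveI := hν
    exact integrable_of_bdd ν (hhicont i) (fun u => by rw [Real.norm_eq_abs]; exact hhibd i u)
  have hPint : ∀ (ν : Measure H), IsProbabilityMeasure ν →
      ∫ u, Pf u ∂ν = ∑ i, (∫ u, hi i u ∂ν) • vv i := by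
    intro ν hν
    haveI := hν
    have h1 : ∫ u, Pf u ∂ν = ∫ u, ∑ i, hi i u • vv i ∂ν := by
      apply integral_congr_ae
      filter_upwards with u
      simp only [hPfdef, hhidef]
      exact hproj (f u)
    rw [h1, integral_finset_sum _ (fun i _ => ((hIhi i ν hν).smul_const (vv i)))]
    simp_rw [integral_smul_const]
  have hconv : Tendsto (fun n => ∫ u, Pf u ∂(μs n)) atTop (nhds (∫ u, Pf u ∂μ)) := by
    rw [hPint μ inferInstance]
    have heq : ∀ n, ∫ u, Pf u ∂(μs n) = ∑ i, (∫ u, hi i u ∂(μs n)) • vv i := fun n =>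
      hPint (μs n) inferInstance
    simp_rw [heq]
    exact tendsto_finset_sum _ fun i _ =>
      (hweak (hi i) (hhicont i) ⟨‖vv i‖ * M, hhibd i⟩).smul_const (vv i)
  have hev1 : ∀ᶠ n in atTop, dist (∫ u, Pf u ∂(μs n)) (∫ u, Pf u ∂μ) < δ :=
    (Metric.tendsto_nhds.mp hconv) δ hδ
  -- tails
  have htailμ : ‖(∫ u, g u ∂μ) - ∫ u, f u ∂μ‖ ≤ δ :=
    htail μ inferInstance (hmom' (2*b) h2b) (hIg μ inferInstance (hmom' b hb))
  have htailn : ∀ n, ‖(∫ u, g u ∂(μs n)) - ∫ u, f u ∂(μs n)‖ ≤ δ := fun n =>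
    htail (μs n) inferInstance (hmom (2*b) h2b n) (hIg (μs n) inferInstance (hmom b hb n))
  -- conclusion
  filter_upwards [hev1, hev2] with n h1 h2
  have hn : ‖(∫ u, f u ∂(μs n)) - ∫ u, Pf u ∂(μs n)‖ ≤ 3*δ := by
    calc ‖(∫ u, f u ∂(μs n)) - ∫ u, Pf u ∂(μs n)‖ ≤ δ + M * ((μs n) Uᶜ).toReal :=
          hnd (μs n) inferInstance
      _ ≤ δ + M * (2*(δ/M)) := by nlinarith [hμnU n, h2, ((μs n) Uᶜ).toReal]
      _ = 3*δ := by field_simp; ring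
  have d1 := dist_triangle4 (∫ u, g u ∂(μs n)) (∫ u, f u ∂(μs n)) (∫ u, Pf u ∂(μs n))
    (∫ u, Pf u ∂μ)
  have d2 := dist_triangle4 (∫ u, g u ∂(μs n)) (∫ u, Pf u ∂μ) (∫ u, f u ∂μ) (∫ u, g u ∂μ)
  have e1 : dist (∫ u, g u ∂(μs n)) (∫ u, f u ∂(μs n)) ≤ δ := by
    rw [dist_eq_norm]; exact htailn n
  have e2 : dist (∫ u, f u ∂(μs n)) (∫ u, Pf u ∂(μs n)) ≤ 3*δ := by
    rw [dist_eq_norm]; exact hn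
  have e4 : dist (∫ u, Pf u ∂μ) (∫ u, f u ∂μ) ≤ 2*δ := by
    rw [dist_eq_norm, norm_sub_rev]; exact hμside
  have e5 : dist (∫ u, f u ∂μ) (∫ u, g u ∂μ) ≤ δ := by
    rw [dist_eq_norm, norm_sub_rev]; exact htailμ
  have hδε : δ = ε / 9 := hδdef
  linarith
end

section
/- Let ℓ ∈ ℕ, let ρ : Fin ℓ → ℝ≥0 be variances, and let μ be the product measure on (Fin ℓ → ℝ) of the centered Gaussian measures gaussianReal 0 (ρ j). Let a > 0 satisfy 4a ∑_j ρ_j < 1. Then ∫ exp(a ∑_{j} x_j²) dμ(x) ≤ exp(2a ∑_j ρ_j). -/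
open MeasureTheory ProbabilityTheory Real

lemma statement8_key (v : NNReal) {a : ℝ} (ha : 0 < a) (h : 4 * a * v < 1) :
    ∫ x : ℝ, Real.exp (a * x ^ 2) ∂(gaussianReal 0 v) ≤ Real.exp (2 * a * v) := by
  by_cases hv : v = 0
  · simp [hv, gaussianReal_zero_var, integral_dirac]
  · have hV : (0 : ℝ) < v := lt_of_le_of_ne v.coe_nonneg (by exact_mod_cast (Ne.symm hv))
    set V : ℝ := (v : ℝ) with hVdef
    set b : ℝ := (2 * V)⁻¹ - a with hb_def
    have hb : 0 < b := by
      have : a < (2 * V)⁻¹ := by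
        rw [show (2 * V)⁻¹ = 1 / (2 * V) by ring, lt_div_iff₀ (by positivity)]
        nlinarith
      simp only [hb_def]; linarith
    have hmeas : Measurable fun x => (gaussianPDFReal 0 v x).toNNReal :=
      (measurable_gaussianPDFReal 0 v).real_toNNReal
    have hrw : ∫ x : ℝ, Real.exp (a * x ^ 2) ∂(gaussianReal 0 v)
        = ∫ x : ℝ, gaussianPDFReal 0 v x * Real.exp (a * x ^ 2) := by
      rw [gaussianReal_of_var_ne_zero 0 hv]
      have : gaussianPDF 0 v = fun x => ((gaussianPDFReal 0 v x).toNNReal : ENNReal) := rfl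
      rw [this, integral_withDensity_eq_integral_smul hmeas]
      refine integral_congr_ae (Filter.Eventually.of_forall fun x => ?_)
      simp [NNReal.smul_def, Real.coe_toNNReal _ (gaussianPDFReal_nonneg 0 v x)]
    have hrw2 : (fun x : ℝ => gaussianPDFReal 0 v x * Real.exp (a * x ^ 2))
        = fun x : ℝ => (√(2 * π * V))⁻¹ * Real.exp (-b * x ^ 2) := by
      funext x
      rw [gaussianPDFReal, mul_assoc, ← Real.exp_add]
      congr 1
      have : (2 : ℝ) * V ≠ 0 := by positivity
      rw [hb_def]
      congr 1
      field_simp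
      ring
    have hval : ∫ x : ℝ, gaussianPDFReal 0 v x * Real.exp (a * x ^ 2)
        = (√(2 * π * V))⁻¹ * √(π / b) := by
      rw [hrw2, integral_const_mul, integral_gaussian]
    rw [hrw, hval]
    -- now bound
    have hπ : (0 : ℝ) < π := Real.pi_pos
    have h1 : (√(2 * π * V))⁻¹ * √(π / b) = √((2 * π * V)⁻¹ * (π / b)) := by
      rw [Real.sqrt_mul (by positivity : (0:ℝ) ≤ (2 * π * V)⁻¹) (π / b), Real.sqrt_inv]
    have h2 : (2 * π * V)⁻¹ * (π / b) = (1 - 2 * a * V)⁻¹ := by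
      have hbne : b ≠ 0 := ne_of_gt hb
      have h2vb : 2 * V * b = 1 - 2 * a * V := by
        simp only [hb_def]
        field_simp
      rw [← h2vb]
      field_simp
    rw [h1, h2]
    have h3 : (1 - 2 * a * V)⁻¹ ≤ Real.exp (4 * a * V) := by
      have he : 1 + 4 * a * V ≤ Real.exp (4 * a * V) := by
        have := Real.add_one_le_exp (4 * a * V); linarith
      have hpos : 0 < 1 - 2 * a * V := by nlinarith
      rw [inv_le_iff_one_le_mul₀ hpos]
      calc (1 : ℝ) ≤ (1 + 4 * a * V) * (1 - 2 * a * V) := by nlinarith [mul_pos ha hV, h]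
      _ ≤ Real.exp (4 * a * V) * (1 - 2 * a * V) := by
          apply mul_le_mul_of_nonneg_right _ hpos.le
          have := Real.add_one_le_exp (4 * a * V); linarith
    calc √((1 - 2 * a * V)⁻¹) ≤ √(Real.exp (4 * a * V)) := Real.sqrt_le_sqrt h3
    _ = Real.exp (2 * a * V) := by
        rw [show (4 : ℝ) * a * V = 2 * a * V + 2 * a * V by ring, Real.exp_add,
          Real.sqrt_mul_self (Real.exp_nonneg _)]

/-- For a centered Gaussian random vector on `Fin ℓ → ℝ` with
independent coordinates of variances `ρ j` (product of `gaussianReal 0 (ρ j)`),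
and `a > 0` with `4a ∑ ρ j < 1`, one has
`∫ exp (a ∑ x_j²) dμ ≤ exp (2a ∑ ρ j)`. -/
theorem statement8 (ℓ : ℕ) (ρ : Fin ℓ → NNReal) (a : ℝ) (ha : 0 < a)
    (hsmall : 4 * a * ∑ j, (ρ j : ℝ) < 1) :
    ∫ x : Fin ℓ → ℝ, Real.exp (a * ∑ j, x j ^ 2)
        ∂(Measure.pi (fun j => gaussianReal 0 (ρ j))) ≤
      Real.exp (2 * a * ∑ j, (ρ j : ℝ)) := by
  have hrw : (fun x : Fin ℓ → ℝ => Real.exp (a * ∑ j, x j ^ 2))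
      = fun x : Fin ℓ → ℝ => ∏ j, Real.exp (a * x j ^ 2) := by
    funext x
    rw [← Real.exp_sum, Finset.mul_sum]
  rw [hrw]
  have hfact := MeasureTheory.integral_fintype_prod_eq_prod (𝕜 := ℝ) (ι := Fin ℓ) (E := fun _ => ℝ)
    (fun _ y => Real.exp (a * y ^ 2)) (μ := fun j => gaussianReal 0 (ρ j))
  refine le_trans (le_of_eq hfact) ?_
  calc ∏ j, ∫ y : ℝ, Real.exp (a * y ^ 2) ∂(gaussianReal 0 (ρ j))
      ≤ ∏ j, Real.exp (2 * a * (ρ j : ℝ)) := by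
        apply Finset.prod_le_prod
        · intro j _
          exact integral_nonneg fun y => (Real.exp_nonneg _)
        · intro j _
          apply statement8_key _ ha
          have hle : (ρ j : ℝ) ≤ ∑ i, (ρ i : ℝ) :=
            Finset.single_le_sum (fun i _ => (ρ i).coe_nonneg) (Finset.mem_univ j)
          nlinarith
  _ = Real.exp (2 * a * ∑ j, (ρ j : ℝ)) := by
      rw [← Real.exp_sum, Finset.mul_sum]
end

section
/- Let ℓ ∈ ℕ, let m : Fin ℓ → ℝ be means and ρ : Fin ℓ → ℝ≥0 variances, and let μ be the product measure on (Fin ℓ → ℝ) of the Gaussian measures gaussianReal (m j) (ρ j). Let b > 0 and let a > 0 satisfy 4a ∑_j ρ_j < 1. Then ∫ exp(b √(∑_j x_j²)) dμ(x) ≤ exp(b √(∑_j m_j²)) · exp(b²/(4a)) · exp(2a ∑_j ρ_j). -/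
open MeasureTheory ProbabilityTheory Real

section aux

/-- pointwise bound helper: exponential moment of squared deviation for one Gaussian coord. -/
lemma gauss_sq_exp_moment (μ0 : ℝ) (ρ : NNReal) (a : ℝ) (ha : 0 < a)
    (h : 4 * a * (ρ : ℝ) ≤ 1) :
    Integrable (fun x => Real.exp (a * (x - μ0) ^ 2)) (gaussianReal μ0 ρ) ∧
      ∫ x, Real.exp (a * (x - μ0) ^ 2) ∂(gaussianReal μ0 ρ) ≤ Real.exp (2 * a * (ρ : ℝ)) := by
  rcases eq_or_ne ρ 0 with hρ | hρ
  · subst hρ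
    rw [gaussianReal_zero_var]
    constructor
    · exact (integrable_const (Real.exp (a * (μ0 - μ0) ^ 2))).congr
        (MeasureTheory.ae_eq_dirac (fun x => Real.exp (a * (x - μ0) ^ 2))).symm
    · rw [MeasureTheory.integral_dirac]
      simp
  · have hρpos : (0 : ℝ) < (ρ : ℝ) := by positivity
    set t : ℝ := 2 * a * (ρ : ℝ) with ht
    have ht0 : 0 < t := by positivity
    have ht2 : t ≤ 1 / 2 := by rw [ht]; linarith
    set c : ℝ := (2 * (ρ : ℝ))⁻¹ - a with hc
    have hρne : (ρ : ℝ) ≠ 0 := ne_of_gt hρpos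
    have hcpos : 0 < c := by
      rw [hc, sub_pos, show ((2 : ℝ) * ρ)⁻¹ = 1 / (2 * ρ) by ring,
        lt_div_iff₀ (by positivity)]
      nlinarith
    have hmeas : Measurable (fun x => (gaussianPDFReal μ0 ρ x).toNNReal) :=
      (measurable_gaussianPDFReal μ0 ρ).real_toNNReal
    have hdens : gaussianPDF μ0 ρ = fun x => ((gaussianPDFReal μ0 ρ x).toNNReal : ENNReal) := rfl
    -- pointwise identity
    have hpt : ∀ x : ℝ, gaussianPDFReal μ0 ρ x * Real.exp (a * (x - μ0) ^ 2)
        = (Real.sqrt (2 * π * ρ))⁻¹ * Real.exp (-c * (x - μ0) ^ 2) := by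
      intro x
      rw [gaussianPDFReal_def]
      simp only [mul_assoc, ← Real.exp_add]
      congr 2
      rw [hc]
      ring
    have hint_vol : Integrable (fun x => (Real.sqrt (2 * π * ρ))⁻¹
        * Real.exp (-c * (x - μ0) ^ 2)) := by
      exact ((integrable_exp_neg_mul_sq hcpos).comp_sub_right μ0).const_mul _
    have hIval : ∫ x : ℝ, (Real.sqrt (2 * π * ρ))⁻¹ * Real.exp (-c * (x - μ0) ^ 2)
        = (Real.sqrt (2 * π * ρ))⁻¹ * Real.sqrt (π / c) := by
      rw [MeasureTheory.integral_const_mul]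
      congr 1
      rw [integral_sub_right_eq_self (fun x => Real.exp (-c * x ^ 2)) μ0]
      exact integral_gaussian c
    have key : (Real.sqrt (2 * π * ρ))⁻¹ * Real.sqrt (π / c) ≤ Real.exp t := by
      have h1 : (Real.sqrt (2 * π * ρ))⁻¹ * Real.sqrt (π / c)
          = Real.sqrt ((2 * π * ρ)⁻¹ * (π / c)) := by
        conv_rhs => rw [Real.sqrt_mul (by positivity : (0:ℝ) ≤ (2 * π * ρ)⁻¹), Real.sqrt_inv]
      have hπ : (0 : ℝ) < π := Real.pi_pos
      have hcne : c ≠ 0 := ne_of_gt hcpos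
      have h2c : 2 * (ρ : ℝ) * c = 1 - t := by
        rw [hc, ht, mul_sub, mul_inv_cancel₀ (by positivity : (2:ℝ) * (ρ:ℝ) ≠ 0)]; ring
      have h2 : (2 * π * (ρ : ℝ))⁻¹ * (π / c) = 1 / (1 - t) := by
        rw [← h2c]
        field_simp
      rw [h1, h2]
      have hexp : Real.exp t = Real.sqrt (Real.exp t ^ 2) :=
        (Real.sqrt_sq (Real.exp_pos t).le).symm
      rw [hexp]
      apply Real.sqrt_le_sqrt
      have h3 : Real.exp t ^ 2 = Real.exp (2 * t) := by
        rw [sq, ← Real.exp_add, two_mul]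
      rw [h3]
      have h4 : 1 + 2 * t ≤ Real.exp (2 * t) := by
        have := Real.add_one_le_exp (2 * t); linarith
      have h5 : 1 / (1 - t) ≤ 1 + 2 * t := by
        rw [div_le_iff₀ (by linarith : (0:ℝ) < 1 - t)]
        nlinarith
      linarith
    constructor
    · rw [gaussianReal_of_var_ne_zero μ0 hρ, hdens,
        integrable_withDensity_iff_integrable_smul hmeas]
      apply hint_vol.congr
      filter_upwards with x
      rw [NNReal.smul_def, smul_eq_mul, Real.coe_toNNReal _ (gaussianPDFReal_nonneg μ0 ρ x),
        hpt x]
    · rw [gaussianReal_of_var_ne_zero μ0 hρ, hdens,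
        integral_withDensity_eq_integral_smul hmeas]
      calc ∫ x : ℝ, (gaussianPDFReal μ0 ρ x).toNNReal • Real.exp (a * (x - μ0) ^ 2)
          = ∫ x : ℝ, (Real.sqrt (2 * π * ρ))⁻¹ * Real.exp (-c * (x - μ0) ^ 2) := by
            congr 1; funext x
            rw [NNReal.smul_def, smul_eq_mul,
              Real.coe_toNNReal _ (gaussianPDFReal_nonneg μ0 ρ x), hpt x]
        _ = (Real.sqrt (2 * π * ρ))⁻¹ * Real.sqrt (π / c) := hIval
        _ ≤ Real.exp t := key

/-- Euclidean triangle inequality for sqrt of sum of squares. -/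
lemma sqrt_sum_sq_triangle {ℓ : ℕ} (x m : Fin ℓ → ℝ) :
    Real.sqrt (∑ j, x j ^ 2) ≤ Real.sqrt (∑ j, m j ^ 2)
      + Real.sqrt (∑ j, (x j - m j) ^ 2) := by
  have hn : ∀ y : Fin ℓ → ℝ,
      Real.sqrt (∑ j, y j ^ 2) = ‖(WithLp.equiv 2 (Fin ℓ → ℝ)).symm y‖ := by
    intro y
    rw [EuclideanSpace.norm_eq]
    congr 1
    refine Finset.sum_congr rfl fun j _ => ?_
    simp [Real.norm_eq_abs, sq_abs]
  have h3 : (∑ j, (x j - m j) ^ 2) = ∑ j, (x - m) j ^ 2 := by simp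
  rw [hn x, hn m, h3, hn (x - m)]
  have hsub : (WithLp.equiv 2 (Fin ℓ → ℝ)).symm (x - m)
      = (WithLp.equiv 2 (Fin ℓ → ℝ)).symm x - (WithLp.equiv 2 (Fin ℓ → ℝ)).symm m := rfl
  rw [hsub]
  have := norm_sub_norm_le ((WithLp.equiv 2 (Fin ℓ → ℝ)).symm x)
    ((WithLp.equiv 2 (Fin ℓ → ℝ)).symm m)
  linarith

end aux

/-- For a Gaussian random vector on `Fin ℓ → ℝ` with independent
coordinates of means `m j` and variances `ρ j` (product of `gaussianReal (m j) (ρ j)`),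
`b > 0` and `a > 0` with `4a ∑ ρ j < 1`, the exponential moment of the Euclidean norm
satisfies `∫ exp (b ‖x‖) dμ ≤ exp (b ‖m‖) · exp (b²/(4a)) · exp (2a ∑ ρ j)`. -/
theorem statement10 (ℓ : ℕ) (m : Fin ℓ → ℝ) (ρ : Fin ℓ → NNReal)
    (b : ℝ) (hb : 0 < b) (a : ℝ) (ha : 0 < a)
    (hsmall : 4 * a * ∑ j, (ρ j : ℝ) < 1) :
    ∫ x : Fin ℓ → ℝ, Real.exp (b * Real.sqrt (∑ j, x j ^ 2))
        ∂(Measure.pi (fun j => gaussianReal (m j) (ρ j))) ≤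
      Real.exp (b * Real.sqrt (∑ j, m j ^ 2)) * Real.exp (b ^ 2 / (4 * a)) *
        Real.exp (2 * a * ∑ j, (ρ j : ℝ)) := by
  set μpi := Measure.pi (fun j => gaussianReal (m j) (ρ j)) with hμpi
  have hcoord : ∀ j : Fin ℓ,
      Integrable (fun x => Real.exp (a * (x - m j) ^ 2)) (gaussianReal (m j) (ρ j)) ∧
      ∫ x, Real.exp (a * (x - m j) ^ 2) ∂(gaussianReal (m j) (ρ j))
        ≤ Real.exp (2 * a * (ρ j : ℝ)) := by
    intro j
    apply gauss_sq_exp_moment (m j) (ρ j) a ha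
    have hle : (ρ j : ℝ) ≤ ∑ i, (ρ i : ℝ) :=
      Finset.single_le_sum (fun i _ => (ρ i).coe_nonneg) (Finset.mem_univ j)
    nlinarith
  set C : ℝ := Real.exp (b * Real.sqrt (∑ j, m j ^ 2)) * Real.exp (b ^ 2 / (4 * a)) with hC
  have hCpos : 0 < C := by positivity
  -- integrability of the dominating product function
  letI Minst : ∀ j : Fin ℓ, MeasureSpace ℝ := fun j => ⟨gaussianReal (m j) (ρ j)⟩
  have hIntProd : Integrable (fun x : Fin ℓ → ℝ =>
      ∏ j, Real.exp (a * (x j - m j) ^ 2)) μpi := by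
    have := @Integrable.fin_nat_prod ℝ _ ℓ (fun _ => ℝ) (fun _ => inferInstance) (fun j => gaussianReal (m j) (ρ j))
      (fun j => inferInstanceAs (SigmaFinite (gaussianReal (m j) (ρ j))))
      (fun j x => Real.exp (a * (x - m j) ^ 2)) (fun j => (hcoord j).1)
    exact this
  have hIntg : Integrable (fun x : Fin ℓ → ℝ =>
      C * ∏ j, Real.exp (a * (x j - m j) ^ 2)) μpi := hIntProd.const_mul C
  -- pointwise bound
  have hpt : ∀ x : Fin ℓ → ℝ, Real.exp (b * Real.sqrt (∑ j, x j ^ 2))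
      ≤ C * ∏ j, Real.exp (a * (x j - m j) ^ 2) := by
    intro x
    have hprod : (∏ j, Real.exp (a * (x j - m j) ^ 2))
        = Real.exp (∑ j, a * (x j - m j) ^ 2) := (Real.exp_sum _ _).symm
    rw [hprod, hC, ← Real.exp_add, ← Real.exp_add]
    apply Real.exp_le_exp.mpr
    have htri := sqrt_sum_sq_triangle x m
    set s := Real.sqrt (∑ j, (x j - m j) ^ 2) with hs
    have hs0 : 0 ≤ s := Real.sqrt_nonneg _
    have hs2 : s ^ 2 = ∑ j, (x j - m j) ^ 2 :=
      Real.sq_sqrt (Finset.sum_nonneg fun j _ => sq_nonneg _)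
    have hsum : (∑ j, a * (x j - m j) ^ 2) = a * s ^ 2 := by
      rw [hs2, Finset.mul_sum]
    rw [hsum]
    have h1 : b * Real.sqrt (∑ j, x j ^ 2)
        ≤ b * Real.sqrt (∑ j, m j ^ 2) + b * s := by nlinarith
    have h2 : b * s ≤ b ^ 2 / (4 * a) + a * s ^ 2 := by
      rw [div_add' _ _ _ (by positivity : (4 : ℝ) * a ≠ 0), le_div_iff₀ (by positivity)]
      nlinarith [sq_nonneg (b - 2 * a * s)]
    linarith
  -- conclude
  have hmono : ∫ x : Fin ℓ → ℝ, Real.exp (b * Real.sqrt (∑ j, x j ^ 2)) ∂μpi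
      ≤ ∫ x : Fin ℓ → ℝ, C * ∏ j, Real.exp (a * (x j - m j) ^ 2) ∂μpi := by
    apply integral_mono_of_nonneg
    · filter_upwards with x; positivity
    · exact hIntg
    · filter_upwards with x using hpt x
  refine hmono.trans ?_
  have hfub : ∫ x : Fin ℓ → ℝ, (∏ j, Real.exp (a * (x j - m j) ^ 2)) ∂μpi
      = ∏ j, ∫ x : ℝ, Real.exp (a * (x - m j) ^ 2) ∂(gaussianReal (m j) (ρ j)) := by
    have := @MeasureTheory.integral_fin_nat_prod_eq_prod ℝ _ ℓ (fun _ => ℝ) (fun _ => inferInstance) (fun j => gaussianReal (m j) (ρ j))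
      (fun j => inferInstanceAs (SigmaFinite (gaussianReal (m j) (ρ j))))
      (fun j x => Real.exp (a * (x - m j) ^ 2))
    exact this
  rw [MeasureTheory.integral_const_mul, hfub]
  have hprodle : (∏ j, ∫ x : ℝ, Real.exp (a * (x - m j) ^ 2) ∂(gaussianReal (m j) (ρ j)))
      ≤ ∏ j, Real.exp (2 * a * (ρ j : ℝ)) := by
    apply Finset.prod_le_prod
    · intro j _
      exact integral_nonneg fun x => (Real.exp_pos _).le
    · intro j _
      exact (hcoord j).2
  have hprodexp : (∏ j, Real.exp (2 * a * (ρ j : ℝ)))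
      = Real.exp (2 * a * ∑ j, (ρ j : ℝ)) := by
    rw [← Real.exp_sum, Finset.mul_sum]
  calc C * ∏ j, ∫ x : ℝ, Real.exp (a * (x - m j) ^ 2) ∂(gaussianReal (m j) (ρ j))
      ≤ C * ∏ j, Real.exp (2 * a * (ρ j : ℝ)) := by
        exact mul_le_mul_of_nonneg_left hprodle hCpos.le
    _ = C * Real.exp (2 * a * ∑ j, (ρ j : ℝ)) := by rw [hprodexp]
end

section
/- Let ε > 0, α ∈ (0,1], C ≥ 0. Let v : ℝ → ℝ be continuous on [0,1], and for each n ∈ ℕ let v_n : ℝ → ℝ satisfy |v_n(x) − v_n(y)| ≤ C|x − y|^α for all x, y ∈ [0,1]. Assume sup_{x∈[0,1]} |v_n(x) − v(x)| → 0 as n → ∞. For N ≥ 1 define the averaging operator (Q_N g)(x) = N ∫_{⌊Nx⌋/N}^{(⌊Nx⌋+1)/N} g(y) dy. Then sup_{x ∈ [0,1)} | (ε² + v(x)²)^{−1} − (ε² + (Q_{2^n} v_n)(x)²)^{−1} | → 0 as n → ∞. -/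
open MeasureTheory Filter Real
open scoped ENNReal NNReal

/-- The averaging operator: `Qavg N g` is the piecewise-constant function whose value
at `x` is the average `N ∫_{⌊Nx⌋/N}^{(⌊Nx⌋+1)/N} g(y) dy` of `g` over the dyadic-type
interval of length `1/N` containing `x`. -/
noncomputable def Qavg (N : ℕ) (g : ℝ → ℝ) (x : ℝ) : ℝ :=
  (N : ℝ) * ∫ y in ((⌊(N : ℝ) * x⌋ : ℝ) / N)..(((⌊(N : ℝ) * x⌋ : ℝ) + 1) / N), g y

lemma holder_continuousOn {C α : ℝ} (hC : 0 ≤ C) (hα : 0 < α) {g : ℝ → ℝ}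
    (hg : ∀ x ∈ Set.Icc (0:ℝ) 1, ∀ y ∈ Set.Icc (0:ℝ) 1, |g x - g y| ≤ C * |x - y| ^ α) :
    ContinuousOn g (Set.Icc 0 1) := by
  have h : HolderOnWith C.toNNReal α.toNNReal g (Set.Icc 0 1) := by
    intro x hx y hy
    rw [edist_dist, edist_dist, Real.dist_eq, Real.dist_eq]
    calc ENNReal.ofReal |g x - g y| ≤ ENNReal.ofReal (C * |x - y| ^ α) :=
          ENNReal.ofReal_le_ofReal (hg x hx y hy)
      _ = (C.toNNReal : ℝ≥0∞) * ENNReal.ofReal (|x - y|) ^ (α.toNNReal : ℝ) := by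
          rw [ENNReal.ofReal_mul hC,
            ← ENNReal.ofReal_rpow_of_nonneg (abs_nonneg _) hα.le,
            Real.coe_toNNReal α hα.le, ENNReal.ofReal_eq_coe_nnreal hC]
          congr 1
          simp [Real.toNNReal, hC]
  exact h.continuousOn (by simpa using hα)

lemma qavg_close {C α : ℝ} (hC : 0 ≤ C) (hα : 0 < α) {g : ℝ → ℝ}
    (hg : ∀ x ∈ Set.Icc (0:ℝ) 1, ∀ y ∈ Set.Icc (0:ℝ) 1, |g x - g y| ≤ C * |x - y| ^ α)
    {N : ℕ} (hN : 1 ≤ N) {x : ℝ} (hx : x ∈ Set.Ico (0:ℝ) 1) :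
    |Qavg N g x - g x| ≤ C * ((N : ℝ)⁻¹) ^ α := by
  have hN' : (0:ℝ) < N := by exact_mod_cast hN
  set j : ℤ := ⌊(N : ℝ) * x⌋ with hj
  set a : ℝ := (j : ℝ) / N with ha
  set b : ℝ := ((j : ℝ) + 1) / N with hb
  have hj0 : (0:ℝ) ≤ (j : ℝ) := by
    exact_mod_cast Int.floor_nonneg.mpr (mul_nonneg hN'.le hx.1)
  have hjle : (j : ℝ) ≤ (N : ℝ) * x := Int.floor_le _
  have hjlt : (N : ℝ) * x < (j : ℝ) + 1 := Int.lt_floor_add_one _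
  have hjN : (j : ℝ) + 1 ≤ (N : ℝ) := by
    have : (j : ℤ) < (N : ℤ) := by
      have : (j : ℝ) < (N : ℝ) := hjle.trans_lt (by nlinarith [hx.2, hx.1])
      exact_mod_cast this
    exact_mod_cast this
  have ha0 : 0 ≤ a := by positivity
  have hb1 : b ≤ 1 := by rw [hb, div_le_one hN']; exact hjN
  have hax : a ≤ x := by rw [ha, div_le_iff₀ hN']; linarith [hjle]
  have hxb : x < b := by rw [hb, lt_div_iff₀ hN']; linarith [hjlt]
  have hab : a < b := hax.trans_lt hxb
  have hba : b - a = (N : ℝ)⁻¹ := by rw [ha, hb, ← sub_div, add_sub_cancel_left, one_div]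
  have hsub : Set.uIcc a b ⊆ Set.Icc (0:ℝ) 1 := by
    rw [Set.uIcc_of_le hab.le]
    exact Set.Icc_subset_Icc ha0 hb1
  have hgc : ContinuousOn g (Set.Icc 0 1) := holder_continuousOn hC hα hg
  have hInt : IntervalIntegrable g volume a b :=
    (hgc.mono hsub).intervalIntegrable
  have hxmem : x ∈ Set.Icc (0:ℝ) 1 := ⟨hx.1, hx.2.le⟩
  have hQ : Qavg N g x - g x = (N : ℝ) * ∫ y in a..b, (g y - g x) := by
    rw [intervalIntegral.integral_sub hInt (intervalIntegrable_const)]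
    rw [intervalIntegral.integral_const, smul_eq_mul, hba]
    rw [Qavg, ← ha, ← hb]
    field_simp
  have hbound : ∀ y ∈ Set.uIoc a b, ‖g y - g x‖ ≤ C * ((N : ℝ)⁻¹) ^ α := by
    intro y hy
    rw [Set.uIoc_of_le hab.le] at hy
    have hymem : y ∈ Set.Icc (0:ℝ) 1 := ⟨ha0.trans hy.1.le, hy.2.trans hb1⟩
    have hd : |y - x| ≤ (N : ℝ)⁻¹ := by
      rw [← hba, abs_le]; constructor <;> [linarith [hy.1, hxb]; linarith [hy.2, hax]]
    calc ‖g y - g x‖ ≤ C * |y - x| ^ α := hg y hymem x hxmem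
      _ ≤ C * ((N : ℝ)⁻¹) ^ α :=
          mul_le_mul_of_nonneg_left (Real.rpow_le_rpow (abs_nonneg _) hd hα.le) hC
  calc |Qavg N g x - g x| = (N : ℝ) * ‖∫ y in a..b, (g y - g x)‖ := by
        rw [hQ, abs_mul, abs_of_nonneg hN'.le]; rfl
    _ ≤ (N : ℝ) * (C * ((N : ℝ)⁻¹) ^ α * |b - a|) := by
        gcongr
        exact intervalIntegral.norm_integral_le_of_norm_le_const hbound
    _ = C * ((N : ℝ)⁻¹) ^ α := by
        rw [hba, abs_of_nonneg (by positivity)]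
        field_simp

lemma lip_inv {ε : ℝ} (hε : 0 < ε) :
    LipschitzWith (Real.toNNReal (ε⁻¹ ^ 3)) (fun t : ℝ => (ε ^ 2 + t ^ 2)⁻¹) := by
  apply LipschitzWith.of_dist_le_mul
  intro s t
  rw [Real.dist_eq, Real.dist_eq, Real.coe_toNNReal _ (by positivity)]
  have ha : (0:ℝ) < ε ^ 2 + s ^ 2 := by positivity
  have hb : (0:ℝ) < ε ^ 2 + t ^ 2 := by positivity
  have key : |s + t| * ε ^ 3 ≤ (ε ^ 2 + s ^ 2) * (ε ^ 2 + t ^ 2) := by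
    have h1 : |s + t| ≤ |s| + |t| := abs_add_le _ _
    nlinarith [sq_nonneg (ε * ε - ε * |s|), sq_nonneg (ε * ε - ε * |t|),
      sq_abs s, sq_abs t, mul_nonneg (sq_nonneg s) (sq_nonneg t),
      mul_le_mul_of_nonneg_right h1 (pow_nonneg hε.le 3)]
  have heq : (ε ^ 2 + s ^ 2)⁻¹ - (ε ^ 2 + t ^ 2)⁻¹
      = ((s - t) * (-(s + t))) / ((ε ^ 2 + s ^ 2) * (ε ^ 2 + t ^ 2)) := by
    field_simp
    ring
  rw [heq, abs_div, abs_mul, abs_neg,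
    abs_of_pos (show (0:ℝ) < (ε ^ 2 + s ^ 2) * (ε ^ 2 + t ^ 2) from by positivity)]
  rw [div_le_iff₀ (by positivity)]
  calc |s - t| * |s + t| ≤ |s - t| * ((ε ^ 2 + s ^ 2) * (ε ^ 2 + t ^ 2) / ε ^ 3) := by
        gcongr
        rw [le_div_iff₀ (by positivity)]
        exact key
    _ = ε⁻¹ ^ 3 * |s - t| * ((ε ^ 2 + s ^ 2) * (ε ^ 2 + t ^ 2)) := by
        field_simp

/-- Let `ε > 0`, let `v` be continuous on `[0,1]`, and let each `v_n`
be `α`-Hölder on `[0,1]` with a uniform constant `C`. If `v_n → v` uniformly on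
`[0,1]`, then the multiplier functions `(ε² + (Q_{2^n} v_n)²)⁻¹` converge uniformly on
`[0,1)` to `(ε² + v²)⁻¹`. -/
theorem statement12 (ε : ℝ) (hε : 0 < ε) (α : ℝ) (hα : α ∈ Set.Ioc (0:ℝ) 1)
    (C : ℝ) (hC : 0 ≤ C)
    (v : ℝ → ℝ) (hv : ContinuousOn v (Set.Icc 0 1))
    (vn : ℕ → ℝ → ℝ)
    (hvn : ∀ n : ℕ, ∀ x ∈ Set.Icc (0:ℝ) 1, ∀ y ∈ Set.Icc (0:ℝ) 1,
      |vn n x - vn n y| ≤ C * |x - y| ^ α)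
    (hconv : TendstoUniformlyOn (fun n => vn n) v atTop (Set.Icc 0 1)) :
    TendstoUniformlyOn (fun n x => (ε ^ 2 + (Qavg (2 ^ n) (vn n) x) ^ 2)⁻¹)
      (fun x => (ε ^ 2 + v x ^ 2)⁻¹) atTop (Set.Ico 0 1) := by
  have hQ : TendstoUniformlyOn (fun n x => Qavg (2 ^ n) (vn n) x) v atTop (Set.Ico 0 1) := by
    rw [Metric.tendstoUniformlyOn_iff]
    intro δ hδ
    have h1 : Tendsto (fun n : ℕ => C * (((2:ℝ) ^ n)⁻¹) ^ α) atTop (nhds 0) := by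
      have h2 : Tendsto (fun n : ℕ => ((2:ℝ) ^ n)⁻¹) atTop (nhds 0) :=
        tendsto_inv_atTop_zero.comp (tendsto_pow_atTop_atTop_of_one_lt one_lt_two)
      have h3 : Tendsto (fun n : ℕ => (((2:ℝ) ^ n)⁻¹) ^ α) atTop (nhds 0) := by
        have := h2.rpow_const (p := α) (Or.inr hα.1.le)
        rwa [Real.zero_rpow hα.1.ne'] at this
      simpa using h3.const_mul C
    have hev1 : ∀ᶠ n : ℕ in atTop, C * (((2:ℝ) ^ n)⁻¹) ^ α < δ / 2 :=
      h1.eventually_lt_const (by linarith)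
    have hev2 : ∀ᶠ n : ℕ in atTop, ∀ x ∈ Set.Icc (0:ℝ) 1, dist (v x) (vn n x) < δ / 2 :=
      Metric.tendstoUniformlyOn_iff.mp hconv (δ / 2) (by linarith)
    filter_upwards [hev1, hev2] with n h1n h2n x hx
    have hxIcc : x ∈ Set.Icc (0:ℝ) 1 := ⟨hx.1, hx.2.le⟩
    have hq := qavg_close (N := 2 ^ n) hC hα.1 (hvn n) Nat.one_le_two_pow hx
    have hcast : (((2:ℕ) ^ n : ℕ) : ℝ) = (2:ℝ) ^ n := by push_cast; ring
    rw [hcast] at hq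
    calc dist (v x) (Qavg (2 ^ n) (vn n) x)
        ≤ dist (v x) (vn n x) + dist (vn n x) (Qavg (2 ^ n) (vn n) x) := dist_triangle _ _ _
      _ < δ / 2 + δ / 2 := by
          apply add_lt_add (h2n x hxIcc)
          rw [Real.dist_eq, abs_sub_comm]
          exact hq.trans_lt h1n
      _ = δ := by ring
  exact (lip_inv hε).uniformContinuous.comp_tendstoUniformlyOn hQ
end

section
/- Let E and H be complex Hilbert spaces and ι : E → H a continuous linear map. Let δ > 0, u ∈ E with ‖ι u‖_H ≤ ‖u‖_E, let f be a continuous linear functional on E with dual norm ‖f‖, and let z ∈ ℂ with Re z < δ/2. Assume the coercive identity δ ‖u‖²_E ≤ (Re z) · ‖ι u‖²_H + Re(f(u)). Then (δ − Re z) · ‖ι u‖²_H ≤ (2/δ) ‖f‖². -/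
/-- Resolvent estimate `‖(z − B_v)⁻¹‖_{H⁻¹ → L²} ≲ |z|^{−1/2}`:
let `E, H` be complex Hilbert spaces, `ι : E → H` continuous linear, `δ > 0`,
`u ∈ E` with `‖ι u‖ ≤ ‖u‖`, `f` a continuous linear functional on `E`, and `z ∈ ℂ`
with `Re z < δ/2`. If `δ‖u‖² ≤ Re z · ‖ι u‖² + Re (f u)`, then
`(δ − Re z) ‖ι u‖² ≤ (2/δ) ‖f‖²`. -/
theorem statement15
    {E : Type*} [NormedAddCommGroup E] [InnerProductSpace ℂ E] [CompleteSpace E]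
    {H : Type*} [NormedAddCommGroup H] [InnerProductSpace ℂ H] [CompleteSpace H]
    (ι : E →L[ℂ] H) (δ : ℝ) (hδ : 0 < δ) (u : E) (hι : ‖ι u‖ ≤ ‖u‖)
    (f : E →L[ℂ] ℂ) (z : ℂ) (hz : z.re < δ / 2)
    (hcoer : δ * ‖u‖ ^ 2 ≤ z.re * ‖ι u‖ ^ 2 + (f u).re) :
    (δ - z.re) * ‖ι u‖ ^ 2 ≤ (2 / δ) * ‖f‖ ^ 2 := by
  obtain ⟨a, n, m, F, hn, hm, hFd⟩ :
      ∃ a n m F : ℝ, n = ‖u‖ ∧ m = ‖ι u‖ ∧ F = ‖f‖ ∧ a = z.re :=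
    ⟨z.re, ‖u‖, ‖ι u‖, ‖f‖, rfl, rfl, rfl, rfl⟩
  obtain ⟨hF, ha⟩ := hFd
  have hm0 : 0 ≤ m := hm ▸ norm_nonneg _
  have hn0 : 0 ≤ n := hn ▸ norm_nonneg _
  have hF0 : 0 ≤ F := hF ▸ norm_nonneg _
  have hmn : m ≤ n := hm ▸ hn ▸ hι
  have hmn2 : m ^ 2 ≤ n ^ 2 := pow_le_pow_left₀ hm0 hmn 2
  have hfu : (f u).re ≤ F * n := by
    rw [hF, hn]
    calc (f u).re ≤ ‖f u‖ := Complex.re_le_norm _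
    _ ≤ ‖f‖ * ‖u‖ := f.le_opNorm u
  have hza : a < δ / 2 := ha ▸ hz
  have hcoer' : δ * n ^ 2 ≤ a * m ^ 2 + (f u).re := by rw [hn, hm, ha]; exact hcoer
  have key : δ * n ^ 2 - a * m ^ 2 ≤ F * n := by linarith
  -- n ≤ (2/δ) F
  have half : (δ / 2) * n ^ 2 ≤ F * n := by
    rcases le_or_gt a 0 with h | h
    · nlinarith
    · nlinarith
  have hδn : δ * n ≤ 2 * F := by
    rcases eq_or_lt_of_le hn0 with h0 | h0
    · nlinarith
    · nlinarith [mul_pos h0 h0]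
  have hun : n ≤ (2 / δ) * F := by
    rw [div_mul_eq_mul_div, le_div_iff₀ hδ]; linarith
  have h3 : (δ - a) * m ^ 2 ≤ δ * n ^ 2 - a * m ^ 2 := by nlinarith
  have h4 : F * n ≤ F * ((2 / δ) * F) := mul_le_mul_of_nonneg_left hun hF0
  have : (δ - a) * m ^ 2 ≤ (2 / δ) * F ^ 2 := by
    calc (δ - a) * m ^ 2 ≤ F * n := le_trans h3 key
    _ ≤ F * ((2 / δ) * F) := h4
    _ = (2 / δ) * F ^ 2 := by ring
  rw [← ha, ← hm, ← hF]; exact this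
end
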